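/- arXiv:2207.05328 — 8 statements merged into one kernel-verified Lean document; each statement's English description precedes it below -/
import Mathlib

section
/- Let X, Y be independent real-valued random variables with P(X = Y) = 0 and p = P(Y > X) ∈ (0,1). If min(X,Y) is independent of the event {Y > X}, then for every real x, P(min(X,Y) > x) = E[(1 − F_Y(X)) 1_{X > x}] / p = E[(1 − F_X(Y)) 1_{Y > x}] / (1 − p). -/
open MeasureTheory ProbabilityTheory
open Set

lemma aux_int {Ω : Type*} [MeasurableSpace Ω] (μ : Measure Ω) [IsProbabilityMeasure μ]
    (X Y : Ω → ℝ) (hX : Measurable X) (hY : Measurable Y) (hind : IndepFun X Y μ) (x : ℝ) :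
    (μ {ω | x < X ω ∧ X ω < Y ω}).toReal
      = ∫ ω in {ω | x < X ω}, (1 - (μ {ω' | Y ω' ≤ X ω}).toReal) ∂μ := by
  set νY := μ.map Y with hνYdef
  have hνY : IsProbabilityMeasure νY := Measure.isProbabilityMeasure_map hY.aemeasurable
  have hmono : Antitone (fun a : ℝ => νY (Ioi a)) :=
    fun a b hab => measure_mono (Ioi_subset_Ioi hab)
  have hmeas : Measurable fun a : ℝ => νY (Ioi a) := hmono.measurable
  have hmap := (indepFun_iff_map_prod_eq_prod_map_map hX.aemeasurable hY.aemeasurable).mp hind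
  have hS : MeasurableSet {q : ℝ × ℝ | x < q.1 ∧ q.1 < q.2} :=
    (measurableSet_lt measurable_const measurable_fst).inter
      (measurableSet_lt measurable_fst measurable_snd)
  have key : ∀ a : ℝ, (1 : ℝ) - (μ {ω' | Y ω' ≤ a}).toReal = (νY (Ioi a)).toReal := by
    intro a
    have h1 : μ {ω' | Y ω' ≤ a} = νY (Iic a) := by
      rw [hνYdef, Measure.map_apply hY measurableSet_Iic]; rfl
    have h2 : νY (Ioi a) = 1 - νY (Iic a) := by
      rw [← compl_Iic]
      exact prob_compl_eq_one_sub measurableSet_Iic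
    rw [h1, h2, ENNReal.toReal_sub_of_le prob_le_one ENNReal.one_ne_top, ENNReal.toReal_one]
  -- LHS
  have hLHS : μ {ω | x < X ω ∧ X ω < Y ω}
      = ∫⁻ a in Ioi x, νY (Ioi a) ∂(μ.map X) := by
    have h1 : μ {ω | x < X ω ∧ X ω < Y ω}
        = μ.map (fun ω => (X ω, Y ω)) {q : ℝ × ℝ | x < q.1 ∧ q.1 < q.2} := by
      rw [Measure.map_apply (hX.prodMk hY) hS]; rfl
    rw [h1, hmap, Measure.prod_apply hS]
    have h2 : ∀ a : ℝ, νY (Prod.mk a ⁻¹' {q : ℝ × ℝ | x < q.1 ∧ q.1 < q.2})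
        = (Ioi x).indicator (fun a => νY (Ioi a)) a := by
      intro a
      by_cases hax : x < a
      · have hpre : Prod.mk a ⁻¹' {q : ℝ × ℝ | x < q.1 ∧ q.1 < q.2} = Ioi a := by
          ext b; simp [hax]
        rw [hpre, indicator_apply, if_pos (by exact hax : a ∈ Ioi x)]
      · have hpre : Prod.mk a ⁻¹' {q : ℝ × ℝ | x < q.1 ∧ q.1 < q.2} = ∅ := by
          ext b; simp [hax]
        rw [hpre, measure_empty, indicator_apply, if_neg (by exact hax : a ∉ Ioi x)]
    refine (lintegral_congr h2).trans ?_
    rw [lintegral_indicator measurableSet_Ioi]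
  -- RHS
  have hpre : {ω | x < X ω} = X ⁻¹' (Ioi x) := rfl
  have hRHS : (∫ ω in {ω | x < X ω}, (1 - (μ {ω' | Y ω' ≤ X ω}).toReal) ∂μ)
      = (∫⁻ a in Ioi x, νY (Ioi a) ∂(μ.map X)).toReal := by
    have h1 : (∫ ω in {ω | x < X ω}, (1 - (μ {ω' | Y ω' ≤ X ω}).toReal) ∂μ)
        = ∫ ω in {ω | x < X ω}, (νY (Ioi (X ω))).toReal ∂μ := by
      apply integral_congr_ae
      filter_upwards with ω
      exact key (X ω)
    rw [h1, hpre, ← setIntegral_map measurableSet_Ioi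
      (hmeas.ennreal_toReal.aestronglyMeasurable) hX.aemeasurable]
    rw [integral_toReal (hmeas.aemeasurable.restrict)]
    filter_upwards with a
    exact lt_of_le_of_lt prob_le_one ENNReal.one_lt_top
  rw [hLHS, hRHS]


/-- If min(X,Y) is independent of {Y > X}, then the survival function of min(X,Y) equals
E[(1 − F_Y(X)) 1_{X > x}] / p and E[(1 − F_X(Y)) 1_{Y > x}] / (1 − p). -/
theorem stmt4 {Ω : Type*} [MeasurableSpace Ω] (μ : Measure Ω) [IsProbabilityMeasure μ]
    (X Y : Ω → ℝ) (hX : Measurable X) (hY : Measurable Y)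
    (hind : IndepFun X Y μ) (hXY : μ {ω | X ω = Y ω} = 0)
    (p : ℝ) (hp : (μ {ω | X ω < Y ω}).toReal = p) (hp0 : 0 < p) (hp1 : p < 1)
    (hminind : ∀ x : ℝ,
      (μ ({ω | x < min (X ω) (Y ω)} ∩ {ω | X ω < Y ω})).toReal
        = (μ {ω | x < min (X ω) (Y ω)}).toReal * p) :
    ∀ x : ℝ,
      (μ {ω | x < min (X ω) (Y ω)}).toReal
        = (∫ ω in {ω | x < X ω}, (1 - (μ {ω' | Y ω' ≤ X ω}).toReal) ∂μ) / p
      ∧ (μ {ω | x < min (X ω) (Y ω)}).toReal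
        = (∫ ω in {ω | x < Y ω}, (1 - (μ {ω' | X ω' ≤ Y ω}).toReal) ∂μ) / (1 - p) := by
  intro x
  set E := {ω | x < min (X ω) (Y ω)} with hEdef
  set S := {ω | X ω < Y ω} with hSdef
  have hSm : MeasurableSet S := measurableSet_lt hX hY
  have hE1 : E ∩ S = {ω | x < X ω ∧ X ω < Y ω} := by
    ext ω
    simp only [hEdef, hSdef, Set.mem_inter_iff, Set.mem_setOf_eq, lt_min_iff]
    constructor
    · rintro ⟨⟨h1, _⟩, h3⟩; exact ⟨h1, h3⟩
    · rintro ⟨h1, h3⟩; exact ⟨⟨h1, h1.trans h3⟩, h3⟩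
  have hE2 : E ∩ {ω | Y ω < X ω} = {ω | x < Y ω ∧ Y ω < X ω} := by
    ext ω
    simp only [hEdef, Set.mem_inter_iff, Set.mem_setOf_eq, lt_min_iff]
    constructor
    · rintro ⟨⟨_, h2⟩, h3⟩; exact ⟨h2, h3⟩
    · rintro ⟨h2, h3⟩; exact ⟨⟨h2.trans h3, h2⟩, h3⟩
  have hdiff : μ (E \ S) = μ (E ∩ {ω | Y ω < X ω}) := by
    apply le_antisymm
    · calc μ (E \ S) ≤ μ ((E ∩ {ω | Y ω < X ω}) ∪ {ω | X ω = Y ω}) := by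
            apply measure_mono
            rintro ω ⟨hωE, hωS⟩
            have hωS' : ¬ (X ω < Y ω) := hωS
            rcases lt_or_eq_of_le (not_lt.mp hωS') with h | h
            · exact Or.inl ⟨hωE, h⟩
            · exact Or.inr h.symm
        _ ≤ μ (E ∩ {ω | Y ω < X ω}) + μ {ω | X ω = Y ω} := measure_union_le _ _
        _ = μ (E ∩ {ω | Y ω < X ω}) := by rw [hXY, add_zero]
    · apply measure_mono
      rintro ω ⟨hωE, hω⟩
      exact ⟨hωE, (not_lt.mpr hω.le : ¬ (X ω < Y ω))⟩
  have hsplit : μ (E ∩ S) + μ (E ∩ {ω | Y ω < X ω}) = μ E := by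
    rw [← hdiff]; exact measure_inter_add_diff E hSm
  set M := (μ E).toReal with hMdef
  set a := (μ (E ∩ S)).toReal with hadef
  set b := (μ (E ∩ {ω | Y ω < X ω})).toReal with hbdef
  have hMab : M = a + b := by
    rw [hMdef, hadef, hbdef, ← hsplit,
      ENNReal.toReal_add (measure_ne_top μ _) (measure_ne_top μ _)]
  have haM : a = M * p := hminind x
  have hbM : b = M * (1 - p) := by
    have : M = M * p + b := by rw [← haM]; exact hMab
    linarith [this]
  constructor
  · rw [← aux_int μ X Y hX hY hind x, ← hE1, ← hadef, haM]
    field_simp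
  · rw [← aux_int μ Y X hY hX hind.symm x, ← hE2, ← hbdef, hbM]
    have h1p : (1 : ℝ) - p ≠ 0 := by linarith
    field_simp
end

section
/- Let X, Y be independent real-valued random variables with P(X = Y) = 0 and P(Y > X) ∈ (0,1). If min(X,Y) is independent of {Y > X}, then the cdf of min(X,Y) is continuous on all of ℝ. -/
open MeasureTheory ProbabilityTheory Set Filter
open scoped Topology ENNReal

lemma indep_eq_of_indep_lt' {Ω : Type*} [MeasurableSpace Ω] (μ : Measure Ω)
    [IsProbabilityMeasure μ] (M : Ω → ℝ) (hM : Measurable M) (A : Set Ω) (hA : MeasurableSet A)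
    (h : ∀ x : ℝ, μ ({ω | x < M ω} ∩ A) = μ {ω | x < M ω} * μ A) (x : ℝ) :
    μ ({ω | M ω = x} ∩ A) = μ {ω | M ω = x} * μ A := by
  have hge : μ ({ω | x ≤ M ω} ∩ A) = μ {ω | x ≤ M ω} * μ A := by
    set s : ℕ → Set Ω := fun n => {ω | x - 1/(n+1) < M ω} with hs_def
    have hs_meas : ∀ n, MeasurableSet (s n) := fun n => measurableSet_lt measurable_const hM
    have hs_anti : Antitone s := by
      intro m n hmn ω hω
      simp only [hs_def, mem_setOf_eq] at *
      have h1 : (1:ℝ)/(n+1) ≤ 1/(m+1) := by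
        apply one_div_le_one_div_of_le (by positivity)
        have : (m:ℝ) ≤ n := by exact_mod_cast hmn
        linarith
      linarith
    have hInter : ⋂ n, s n = {ω | x ≤ M ω} := by
      ext ω
      simp only [mem_iInter, hs_def, mem_setOf_eq]
      constructor
      · intro h'
        by_contra hlt
        push_neg at hlt
        obtain ⟨n, hn⟩ := exists_nat_one_div_lt (sub_pos.2 hlt)
        have := h' n
        linarith
      · intro h' n
        have : (0:ℝ) < 1/(n+1) := by positivity
        linarith
    have t1 : Tendsto (fun n => μ (s n ∩ A)) atTop (𝓝 (μ ({ω | x ≤ M ω} ∩ A))) := by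
      have ht := tendsto_measure_iInter_atTop (μ := μ) (s := fun n => s n ∩ A)
        (fun n => ((hs_meas n).inter hA).nullMeasurableSet)
        (fun m n hmn => inter_subset_inter_left A (hs_anti hmn)) ⟨0, measure_ne_top _ _⟩
      rw [← iInter_inter, hInter] at ht
      exact ht
    have t2 : Tendsto (fun n => μ (s n) * μ A) atTop (𝓝 (μ {ω | x ≤ M ω} * μ A)) := by
      have ht := tendsto_measure_iInter_atTop (μ := μ) (s := s)
        (fun n => (hs_meas n).nullMeasurableSet) hs_anti ⟨0, measure_ne_top _ _⟩
      rw [hInter] at ht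
      exact ENNReal.Tendsto.mul_const ht (Or.inr (measure_ne_top μ A))
    have heq : (fun n => μ (s n ∩ A)) = fun n => μ (s n) * μ A := funext fun n => h _
    exact tendsto_nhds_unique t1 (heq ▸ t2)
  have hsub : {ω | x < M ω} ⊆ {ω | x ≤ M ω} := fun ω hω => show x ≤ M ω from le_of_lt hω
  have hset : {ω | M ω = x} = {ω | x ≤ M ω} \ {ω | x < M ω} := by
    ext ω
    simp only [mem_setOf_eq, mem_diff, not_lt]
    constructor
    · intro h'; exact ⟨le_of_eq h'.symm, le_of_eq h'⟩
    · intro h'; exact le_antisymm h'.2 h'.1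
  have hsetA : {ω | M ω = x} ∩ A = ({ω | x ≤ M ω} ∩ A) \ ({ω | x < M ω} ∩ A) := by
    ext ω
    constructor
    · rintro ⟨h1, h2⟩
      have h1 : M ω = x := h1
      refine ⟨⟨h1.ge, h2⟩, fun hc => ?_⟩
      have : x < M ω := hc.1
      rw [h1] at this
      exact lt_irrefl x this
    · rintro ⟨⟨h1, h2⟩, h3⟩
      have hle : M ω ≤ x := by
        by_contra hlt
        exact h3 ⟨lt_of_not_ge hlt, h2⟩
      exact ⟨le_antisymm hle h1, h2⟩
  have hlt_meas : MeasurableSet {ω | x < M ω} := measurableSet_lt measurable_const hM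
  rw [hsetA, hset,
    measure_diff (inter_subset_inter_left A hsub) ((hlt_meas.inter hA).nullMeasurableSet)
      (measure_ne_top _ _),
    measure_diff hsub hlt_meas.nullMeasurableSet (measure_ne_top _ _), h x, hge,
    ENNReal.sub_mul (fun _ _ => measure_ne_top μ A)]

/-- If min(X,Y) is independent of {Y > X} (with P(X=Y)=0, P(Y>X)∈(0,1)), the cdf of
min(X,Y) is continuous on ℝ. -/
theorem stmt5 {Ω : Type*} [MeasurableSpace Ω] (μ : Measure Ω) [IsProbabilityMeasure μ]
    (X Y : Ω → ℝ) (hX : Measurable X) (hY : Measurable Y)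
    (hind : IndepFun X Y μ) (hXY : μ {ω | X ω = Y ω} = 0)
    (hp0 : 0 < (μ {ω | X ω < Y ω}).toReal) (hp1 : (μ {ω | X ω < Y ω}).toReal < 1)
    (hminind : ∀ x : ℝ,
      (μ ({ω | x < min (X ω) (Y ω)} ∩ {ω | X ω < Y ω})).toReal
        = (μ {ω | x < min (X ω) (Y ω)}).toReal * (μ {ω | X ω < Y ω}).toReal) :
    Continuous (fun x : ℝ => (μ {ω | min (X ω) (Y ω) ≤ x}).toReal) := by
  have hM : Measurable (fun ω => min (X ω) (Y ω)) := hX.min hY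
  have hA : MeasurableSet {ω | X ω < Y ω} := measurableSet_lt hX hY
  have hpne : μ {ω | X ω < Y ω} ≠ 0 := by
    intro h; rw [h] at hp0; simp at hp0
  have hplt1 : μ {ω | X ω < Y ω} < 1 := by
    rw [← ENNReal.toReal_lt_toReal (measure_ne_top _ _) ENNReal.one_ne_top]
    simpa using hp1
  -- no atoms
  have hatom : ∀ x : ℝ, μ {ω | min (X ω) (Y ω) = x} = 0 := by
    intro x
    have h1 : ∀ y : ℝ, μ ({ω | y < min (X ω) (Y ω)} ∩ {ω | X ω < Y ω})
        = μ {ω | y < min (X ω) (Y ω)} * μ {ω | X ω < Y ω} := by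
      intro y
      have h := hminind y
      rw [← ENNReal.toReal_mul] at h
      exact (ENNReal.toReal_eq_toReal_iff' (measure_ne_top _ _)
        (ENNReal.mul_ne_top (measure_ne_top _ _) (measure_ne_top _ _))).mp h
    have hkey := indep_eq_of_indep_lt' μ _ hM _ hA h1 x
    have e1 : {ω | min (X ω) (Y ω) = x} ∩ {ω | X ω < Y ω} = X ⁻¹' {x} ∩ Y ⁻¹' (Set.Ioi x) := by
      ext ω
      simp only [mem_inter_iff, mem_setOf_eq, mem_preimage, mem_singleton_iff, mem_Ioi]
      constructor
      · rintro ⟨hm, hlt⟩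
        rw [min_eq_left hlt.le] at hm
        exact ⟨hm, hm ▸ hlt⟩
      · rintro ⟨hx, hy⟩
        constructor
        · rw [min_eq_left (by linarith)]; exact hx
        · linarith
    have e2 : {ω | min (X ω) (Y ω) = x} ∩ {ω | Y ω < X ω} = X ⁻¹' (Set.Ioi x) ∩ Y ⁻¹' {x} := by
      ext ω
      simp only [mem_inter_iff, mem_setOf_eq, mem_preimage, mem_singleton_iff, mem_Ioi]
      constructor
      · rintro ⟨hm, hlt⟩
        rw [min_eq_right hlt.le] at hm
        exact ⟨hm ▸ hlt, hm⟩
      · rintro ⟨hx, hy⟩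
        constructor
        · rw [min_eq_right (by linarith)]; exact hy
        · linarith
    have mu1 : μ (X ⁻¹' {x} ∩ Y ⁻¹' (Set.Ioi x)) = μ (X ⁻¹' {x}) * μ (Y ⁻¹' (Set.Ioi x)) :=
      hind.measure_inter_preimage_eq_mul _ _ (measurableSet_singleton x) measurableSet_Ioi
    have mu2 : μ (X ⁻¹' (Set.Ioi x) ∩ Y ⁻¹' {x}) = μ (X ⁻¹' (Set.Ioi x)) * μ (Y ⁻¹' {x}) :=
      hind.measure_inter_preimage_eq_mul _ _ measurableSet_Ioi (measurableSet_singleton x)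
    have huv : μ (X ⁻¹' {x}) * μ (Y ⁻¹' {x}) = 0 := by
      rw [← hind.measure_inter_preimage_eq_mul _ _ (measurableSet_singleton x)
        (measurableSet_singleton x)]
      refine measure_mono_null ?_ hXY
      rintro ω ⟨hx1, hx2⟩
      simp only [mem_preimage, mem_singleton_iff] at hx1 hx2
      simp only [mem_setOf_eq, hx1, hx2]
    have hMx : MeasurableSet {ω | min (X ω) (Y ω) = x} := by
      have := hM (measurableSet_singleton x)
      simpa [Set.preimage, Set.mem_singleton_iff] using this
    have hsplit : μ {ω | min (X ω) (Y ω) = x}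
        = μ ({ω | min (X ω) (Y ω) = x} ∩ {ω | X ω < Y ω})
          + μ ({ω | min (X ω) (Y ω) = x} ∩ {ω | Y ω < X ω}) := by
      apply le_antisymm
      · have hsub : {ω | min (X ω) (Y ω) = x} ⊆
            (({ω | min (X ω) (Y ω) = x} ∩ {ω | X ω < Y ω})
              ∪ ({ω | min (X ω) (Y ω) = x} ∩ {ω | Y ω < X ω})) ∪ {ω | X ω = Y ω} := by
          intro ω hω
          rcases lt_trichotomy (X ω) (Y ω) with h|h|h
          · exact Or.inl (Or.inl ⟨hω, h⟩)
          · exact Or.inr h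
          · exact Or.inl (Or.inr ⟨hω, h⟩)
        refine le_trans (measure_mono hsub) ?_
        refine le_trans (measure_union_le _ _) ?_
        rw [hXY, add_zero]
        exact measure_union_le _ _
      · have hdisj : Disjoint ({ω | min (X ω) (Y ω) = x} ∩ {ω | X ω < Y ω})
            ({ω | min (X ω) (Y ω) = x} ∩ {ω | Y ω < X ω}) := by
          rw [Set.disjoint_left]
          rintro ω ⟨_, h1⟩ ⟨_, h2⟩
          exact lt_irrefl (X ω) ((show X ω < Y ω from h1).trans (show Y ω < X ω from h2))
        rw [← measure_union hdisj (hMx.inter (measurableSet_lt hY hX))]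
        exact measure_mono (Set.union_subset inter_subset_left inter_subset_left)
    rw [hsplit, e1, e2, mu1, mu2]
    rw [hsplit, e1, mu1] at hkey
    rw [e2, mu2] at hkey
    rcases mul_eq_zero.mp huv with hu | hv
    · rw [hu, zero_mul, zero_add] at hkey ⊢
      rcases mul_eq_zero.mp hkey.symm with h0 | hp
      · exact h0
      · exact absurd hp hpne
    · rw [hv, mul_zero, add_zero] at hkey ⊢
      by_contra hne
      have hlt : μ (X ⁻¹' {x}) * μ (Y ⁻¹' (Set.Ioi x)) * μ {ω | X ω < Y ω}
          < μ (X ⁻¹' {x}) * μ (Y ⁻¹' (Set.Ioi x)) * 1 := by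
        exact (ENNReal.mul_lt_mul_iff_right hne
          (ENNReal.mul_ne_top (measure_ne_top _ _) (measure_ne_top _ _))).mpr hplt1
      rw [mul_one, ← hkey] at hlt
      exact lt_irrefl _ hlt
  -- conclude via cdf
  set ν : Measure ℝ := μ.map (fun ω => min (X ω) (Y ω)) with hν_def
  have hνprob : IsProbabilityMeasure ν := Measure.isProbabilityMeasure_map hM.aemeasurable
  have hfun : (fun x : ℝ => (μ {ω | min (X ω) (Y ω) ≤ x}).toReal) = cdf ν := by
    ext x
    rw [cdf_eq_real, measureReal_def, hν_def, Measure.map_apply hM measurableSet_Iic]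
    rfl
  rw [hfun]
  rw [continuous_iff_continuousAt]
  intro x
  have hsing : ν {x} = 0 := by
    rw [hν_def, Measure.map_apply hM (measurableSet_singleton x)]
    have : (fun ω => min (X ω) (Y ω)) ⁻¹' {x} = {ω | min (X ω) (Y ω) = x} := by
      ext ω; simp [Set.mem_preimage]
    rw [this]; exact hatom x
  have hmeas : (cdf ν).measure {x} = 0 := by rw [measure_cdf]; exact hsing
  rw [StieltjesFunction.measure_singleton] at hmeas
  have hle : cdf ν x ≤ Function.leftLim (cdf ν) x := by
    have := ENNReal.ofReal_eq_zero.mp hmeas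
    linarith
  have hll : Function.leftLim (cdf ν) x = cdf ν x :=
    le_antisymm ((monotone_cdf ν).leftLim_le le_rfl) hle
  rw [(monotone_cdf ν).continuousAt_iff_leftLim_eq_rightLim, hll,
    StieltjesFunction.rightLim_eq]
end

section
/- Let X, Y be independent real-valued random variables with P(X = Y) = 0 and P(Y > X) ∈ (0,1), and suppose min(X,Y) is independent of {Y > X}. Then F_X is continuous at every point x with F_Y(x) < 1, and F_Y is continuous at every point x with F_X(x) < 1. -/
open MeasureTheory ProbabilityTheory Set Filter Topology

lemma contAt_of_no_atom {Ω : Type*} [MeasurableSpace Ω] (μ : Measure Ω) [IsProbabilityMeasure μ]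
    (Z : Ω → ℝ) (hZ : Measurable Z) (x : ℝ) (h : μ {ω | Z ω = x} = 0) :
    ContinuousAt (fun t => (μ {ω | Z ω ≤ t}).toReal) x := by
  have hprob : IsProbabilityMeasure (μ.map Z) := Measure.isProbabilityMeasure_map hZ.aemeasurable
  have heq : (fun t : ℝ => (μ {ω | Z ω ≤ t}).toReal) = fun t => cdf (μ.map Z) t := by
    funext t
    rw [cdf_eq_real, measureReal_def, Measure.map_apply hZ measurableSet_Iic]
    rfl
  rw [heq]
  have hsing : (μ.map Z) {x} = 0 := by
    rw [Measure.map_apply hZ (measurableSet_singleton x)]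
    exact h
  have h1 : (cdf (μ.map Z)).measure {x} = 0 := by rw [measure_cdf]; exact hsing
  rw [StieltjesFunction.measure_singleton] at h1
  have hle : Function.leftLim (⇑(cdf (μ.map Z))) x ≤ cdf (μ.map Z) x :=
    (monotone_cdf _).leftLim_le le_rfl
  have h3 := ENNReal.ofReal_eq_zero.mp h1
  have h2 : Function.leftLim (⇑(cdf (μ.map Z))) x = cdf (μ.map Z) x := by linarith
  exact (monotone_cdf _).continuousAt_iff_leftLim_eq_rightLim.mpr
    (by rw [h2, (cdf (μ.map Z)).rightLim_eq])

set_option maxHeartbeats 1000000 in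
/-- Under independence of min(X,Y) and {Y > X}: F_X is continuous wherever F_Y < 1 and
F_Y is continuous wherever F_X < 1. -/
theorem stmt6 {Ω : Type*} [MeasurableSpace Ω] (μ : Measure Ω) [IsProbabilityMeasure μ]
    (X Y : Ω → ℝ) (hX : Measurable X) (hY : Measurable Y)
    (hind : IndepFun X Y μ) (hXY : μ {ω | X ω = Y ω} = 0)
    (hp0 : 0 < (μ {ω | X ω < Y ω}).toReal) (hp1 : (μ {ω | X ω < Y ω}).toReal < 1)
    (hminind : ∀ x : ℝ,
      (μ ({ω | x < min (X ω) (Y ω)} ∩ {ω | X ω < Y ω})).toReal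
        = (μ {ω | x < min (X ω) (Y ω)}).toReal * (μ {ω | X ω < Y ω}).toReal) :
    ∀ x : ℝ,
      ((μ {ω | Y ω ≤ x}).toReal < 1 →
        ContinuousAt (fun t => (μ {ω | X ω ≤ t}).toReal) x)
      ∧ ((μ {ω | X ω ≤ x}).toReal < 1 →
        ContinuousAt (fun t => (μ {ω | Y ω ≤ t}).toReal) x) := by
  intro x
  set A : Set Ω := {ω | X ω < Y ω} with hAdef
  have hA : MeasurableSet A := measurableSet_lt hX hY
  have hB : MeasurableSet {ω | Y ω < X ω} := measurableSet_lt hY hX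
  have hmin : Measurable (fun ω => min (X ω) (Y ω)) := hX.min hY
  set M : ℝ → Set Ω := fun t => {ω | t < min (X ω) (Y ω)} with hMdef
  have hM : ∀ t, MeasurableSet (M t) := fun t => measurableSet_lt measurable_const hmin
  set Mge : Set Ω := {ω | x ≤ min (X ω) (Y ω)} with hMgedef
  have hMge : MeasurableSet Mge := measurableSet_le measurable_const hmin
  set Meq : Set Ω := {ω | min (X ω) (Y ω) = x} with hMeqdef
  have hMeq : MeasurableSet Meq := hmin (measurableSet_singleton x)
  set p : ℝ := (μ A).toReal with hpdef
  -- the sequence approaching x from below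
  set u : ℕ → ℝ := fun n => x - 1 / (n + 1) with hudef
  have hux : ∀ n, u n < x := by
    intro n
    have : (0:ℝ) < 1 / (n + 1) := by positivity
    simp only [hudef]; linarith
  have humono : Monotone u := by
    intro n m hnm
    have h1 : (0:ℝ) < n + 1 := by positivity
    have h2 : (n:ℝ) + 1 ≤ (m:ℝ) + 1 := by exact_mod_cast by omega
    have := one_div_le_one_div_of_le h1 h2
    simp only [hudef]; linarith
  have hanti : Antitone (fun n => M (u n)) := by
    intro n m hnm ω hω
    exact lt_of_le_of_lt (by linarith [humono hnm] : u n ≤ u m) hω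
  have hiInter : (⋂ n, M (u n)) = Mge := by
    ext ω
    simp only [mem_iInter, hMdef, hMgedef, mem_setOf_eq]
    constructor
    · intro h
      by_contra hc
      push_neg at hc
      obtain ⟨n, hn⟩ := exists_nat_one_div_lt (show 0 < x - min (X ω) (Y ω) by linarith)
      have := h n
      simp only [hudef] at this
      linarith
    · intro h n
      exact lt_of_lt_of_le (hux n) h
  -- limit step: measure of Mge ∩ A
  have hT1 : Tendsto (fun n => (μ (M (u n) ∩ A)).toReal) atTop (𝓝 ((μ (Mge ∩ A)).toReal)) := by
    have := tendsto_measure_iInter_atTop (μ := μ)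
      (s := fun n => M (u n) ∩ A)
      (fun n => ((hM (u n)).inter hA).nullMeasurableSet)
      (fun n m h => inter_subset_inter (hanti h) subset_rfl)
      ⟨0, measure_ne_top _ _⟩
    rw [show (⋂ n, M (u n) ∩ A) = Mge ∩ A by rw [← iInter_inter, hiInter]] at this
    exact (ENNReal.tendsto_toReal (measure_ne_top _ _)).comp this
  have hT2 : Tendsto (fun n => (μ (M (u n))).toReal * p) atTop (𝓝 ((μ Mge).toReal * p)) := by
    have := tendsto_measure_iInter_atTop (μ := μ)
      (s := fun n => M (u n))
      (fun n => (hM (u n)).nullMeasurableSet) hanti ⟨0, measure_ne_top _ _⟩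
    rw [hiInter] at this
    exact ((ENNReal.tendsto_toReal (measure_ne_top _ _)).comp this).mul_const p
  have hstep1 : (μ (Mge ∩ A)).toReal = (μ Mge).toReal * p := by
    refine tendsto_nhds_unique ?_ hT2
    have : (fun n => (μ (M (u n) ∩ A)).toReal) = fun n => (μ (M (u n))).toReal * p :=
      funext fun n => hminind (u n)
    rw [← this]; exact hT1
  -- decomposition Mge = M x ∪ Meq
  have hdis : Disjoint (M x) Meq := by
    rw [disjoint_left]
    intro ω h1 h2
    simp only [hMdef, hMeqdef, mem_setOf_eq] at h1 h2
    linarith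
  have hun : Mge = M x ∪ Meq := by
    ext ω
    simp only [hMdef, hMeqdef, hMgedef, mem_setOf_eq, mem_union]
    constructor
    · intro h; rcases lt_or_eq_of_le h with h | h
      · exact Or.inl h
      · exact Or.inr h.symm
    · rintro (h | h) <;> [exact h.le; exact h.ge]
  have hMgesplit : (μ Mge).toReal = (μ (M x)).toReal + (μ Meq).toReal := by
    rw [hun, measure_union hdis hMeq, ENNReal.toReal_add (measure_ne_top _ _) (measure_ne_top _ _)]
  have hMgeAsplit : (μ (Mge ∩ A)).toReal = (μ (M x ∩ A)).toReal + (μ (Meq ∩ A)).toReal := by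
    rw [hun, union_inter_distrib_right,
      measure_union (hdis.mono inter_subset_left inter_subset_left) (hMeq.inter hA),
      ENNReal.toReal_add (measure_ne_top _ _) (measure_ne_top _ _)]
  have hstep2 : (μ (Meq ∩ A)).toReal = (μ Meq).toReal * p := by
    have h1 := hminind x
    have h2 : ((μ (M x)).toReal + (μ Meq).toReal) * p
        = (μ (M x)).toReal * p + (μ Meq).toReal * p := by ring
    rw [hMgeAsplit, hMgesplit, h2] at hstep1
    linarith
  -- complement decomposition of Meq
  have hstep3 : (μ Meq).toReal = (μ (Meq ∩ A)).toReal + (μ (Meq ∩ {ω | Y ω < X ω})).toReal := by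
    have e1 : μ (Meq ∩ A) + μ (Meq \ A) = μ Meq := measure_inter_add_diff Meq hA
    have e2 : μ ((Meq \ A) ∩ {ω | Y ω < X ω}) + μ ((Meq \ A) \ {ω | Y ω < X ω})
        = μ (Meq \ A) := measure_inter_add_diff _ hB
    have e3 : (Meq \ A) ∩ {ω | Y ω < X ω} = Meq ∩ {ω | Y ω < X ω} := by
      ext ω
      simp only [mem_inter_iff, mem_diff, hAdef, mem_setOf_eq]
      constructor
      · rintro ⟨⟨h1, _⟩, h2⟩; exact ⟨h1, h2⟩
      · rintro ⟨h1, h2⟩; exact ⟨⟨h1, by linarith⟩, h2⟩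
    have e4 : μ ((Meq \ A) \ {ω | Y ω < X ω}) = 0 := by
      refine measure_mono_null ?_ hXY
      intro ω hω
      simp only [mem_diff, hAdef, mem_setOf_eq, not_lt] at hω
      exact le_antisymm hω.2 hω.1.2
    rw [e3, e4, add_zero] at e2
    rw [← e1, e2, ENNReal.toReal_add (measure_ne_top _ _) (measure_ne_top _ _)]
  -- set identities and independence
  have hprodA : μ (Meq ∩ A) = μ (X ⁻¹' {x}) * μ (Y ⁻¹' (Ioi x)) := by
    have hset : Meq ∩ A = X ⁻¹' {x} ∩ Y ⁻¹' (Ioi x) := by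
      ext ω
      simp only [mem_inter_iff, hMeqdef, hAdef, mem_setOf_eq, mem_preimage,
        mem_singleton_iff, mem_Ioi]
      constructor
      · rintro ⟨h1, h2⟩
        rw [min_eq_left h2.le] at h1
        exact ⟨h1, by linarith⟩
      · rintro ⟨h1, h2⟩
        have h3 : X ω < Y ω := by linarith
        rw [min_eq_left h3.le]
        exact ⟨h1, h3⟩
    rw [hset]
    exact hind.measure_inter_preimage_eq_mul _ _ (measurableSet_singleton x) measurableSet_Ioi
  have hprodB : μ (Meq ∩ {ω | Y ω < X ω}) = μ (X ⁻¹' (Ioi x)) * μ (Y ⁻¹' {x}) := by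
    have hset : Meq ∩ {ω | Y ω < X ω} = X ⁻¹' (Ioi x) ∩ Y ⁻¹' {x} := by
      ext ω
      simp only [mem_inter_iff, hMeqdef, mem_setOf_eq, mem_preimage,
        mem_singleton_iff, mem_Ioi]
      constructor
      · rintro ⟨h1, h2⟩
        rw [min_eq_right h2.le] at h1
        exact ⟨by linarith, h1⟩
      · rintro ⟨h1, h2⟩
        have h3 : Y ω < X ω := by linarith
        rw [min_eq_right h3.le]
        exact ⟨h2, h3⟩
    rw [hset]
    exact hind.measure_inter_preimage_eq_mul _ _ measurableSet_Ioi (measurableSet_singleton x)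
  -- abbreviations for the real quantities
  set α : ℝ := (μ (X ⁻¹' {x})).toReal with hαdef
  set β : ℝ := (μ (Y ⁻¹' {x})).toReal with hβdef
  set γ : ℝ := (μ (Y ⁻¹' (Ioi x))).toReal with hγdef
  set η : ℝ := (μ (X ⁻¹' (Ioi x))).toReal with hηdef
  have hα0 : 0 ≤ α := ENNReal.toReal_nonneg
  have hβ0 : 0 ≤ β := ENNReal.toReal_nonneg
  have hγ0 : 0 ≤ γ := ENNReal.toReal_nonneg
  have hη0 : 0 ≤ η := ENNReal.toReal_nonneg
  have hprodAR : (μ (Meq ∩ A)).toReal = α * γ := by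
    rw [hprodA, ENNReal.toReal_mul]
  have hprodBR : (μ (Meq ∩ {ω | Y ω < X ω})).toReal = η * β := by
    rw [hprodB, ENNReal.toReal_mul]
  -- The three key real equations
  have E1 : α * γ = (μ Meq).toReal * p := by rw [← hprodAR]; exact hstep2
  have E2 : (μ Meq).toReal = α * γ + η * β := by
    rw [hstep3, hprodAR, hprodBR]
  -- derive: α*γ = (α*γ + η*β) * p
  rw [E2] at E1
  -- the Ici decomposition of Meq, giving α*β = 0
  have hIci : (μ (Y ⁻¹' (Ici x))).toReal = γ + β := by
    have hset : Y ⁻¹' (Ici x) = Y ⁻¹' (Ioi x) ∪ Y ⁻¹' {x} := by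
      ext ω
      simp only [mem_preimage, mem_Ici, mem_union, mem_Ioi, mem_singleton_iff]
      constructor
      · intro h; rcases lt_or_eq_of_le h with h | h
        · exact Or.inl h
        · exact Or.inr h.symm
      · rintro (h | h) <;> [exact h.le; exact h.ge]
    have hd : Disjoint (Y ⁻¹' (Ioi x)) (Y ⁻¹' {x}) := by
      rw [disjoint_left]
      intro ω ha hb
      simp only [mem_preimage, mem_Ioi, mem_singleton_iff] at ha hb
      linarith
    rw [hset, measure_union hd (hY (measurableSet_singleton x)),
      ENNReal.toReal_add (measure_ne_top _ _) (measure_ne_top _ _)]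
  have hMeqset : Meq = (X ⁻¹' {x} ∩ Y ⁻¹' (Ici x)) ∪ (X ⁻¹' (Ioi x) ∩ Y ⁻¹' {x}) := by
    ext ω
    simp only [hMeqdef, mem_setOf_eq, mem_union, mem_inter_iff, mem_preimage,
      mem_singleton_iff, mem_Ici, mem_Ioi]
    constructor
    · intro h
      rcases le_total (X ω) (Y ω) with hle | hle
      · rw [min_eq_left hle] at h
        exact Or.inl ⟨h, by linarith⟩
      · rw [min_eq_right hle] at h
        rcases lt_or_eq_of_le (show x ≤ X ω by linarith) with h2 | h2
        · exact Or.inr ⟨h2, h⟩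
        · exact Or.inl ⟨h2.symm, by linarith⟩
    · rintro (⟨h1, h2⟩ | ⟨h1, h2⟩)
      · rw [min_eq_left (by linarith)]; exact h1
      · rw [min_eq_right (by linarith)]; exact h2
  have hdis2 : Disjoint (X ⁻¹' {x} ∩ Y ⁻¹' (Ici x)) (X ⁻¹' (Ioi x) ∩ Y ⁻¹' {x}) := by
    rw [disjoint_left]
    intro ω ha hb
    simp only [mem_inter_iff, mem_preimage, mem_singleton_iff, mem_Ici, mem_Ioi] at ha hb
    linarith [ha.1, hb.1]
  have E3 : (μ Meq).toReal = α * (γ + β) + η * β := by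
    rw [hMeqset,
      measure_union hdis2 ((hX measurableSet_Ioi).inter (hY (measurableSet_singleton x))),
      hind.measure_inter_preimage_eq_mul _ _ (measurableSet_singleton x) measurableSet_Ici,
      hind.measure_inter_preimage_eq_mul _ _ measurableSet_Ioi (measurableSet_singleton x),
      ENNReal.toReal_add (by finiteness) (by finiteness),
      ENNReal.toReal_mul, ENNReal.toReal_mul, hIci]
  have hαβ : α * β = 0 := by
    have hx1 : α * (γ + β) = α * γ + α * β := by ring
    rw [hx1] at E3
    linarith [E2, E3]
  have toReal_zero : ∀ {c : ENNReal}, c ≠ ⊤ → c.toReal = 0 → c = 0 := by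
    intro c hc h
    exact ((ENNReal.toReal_eq_zero_iff _).mp h).resolve_right hc
  -- Now the two conclusions
  constructor
  · intro hFY
    refine contAt_of_no_atom μ X hX x ?_
    have hγpos : 0 < γ := by
      have hcompl : (μ {ω | Y ω ≤ x}).toReal + γ = 1 := by
        have h1 : {ω | Y ω ≤ x} ∪ Y ⁻¹' (Ioi x) = univ := by
          ext ω; simp only [mem_union, mem_setOf_eq, mem_preimage, mem_Ioi, mem_univ, iff_true]
          exact le_or_gt (Y ω) x
        have h2 : Disjoint {ω | Y ω ≤ x} (Y ⁻¹' (Ioi x)) := by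
          rw [disjoint_left]; intro ω ha hb
          simp only [mem_setOf_eq, mem_preimage, mem_Ioi] at ha hb; linarith
        have h3 := measure_union (μ := μ) h2 (hY measurableSet_Ioi)
        rw [h1, measure_univ] at h3
        rw [hγdef, ← ENNReal.toReal_add (measure_ne_top _ _) (measure_ne_top _ _), ← h3]
        simp
      linarith
    have hαzero : α = 0 := by
      by_contra hc
      have hαpos : 0 < α := lt_of_le_of_ne hα0 (Ne.symm hc)
      have hβzero : β = 0 := by
        rcases mul_eq_zero.mp hαβ with h | h
        · exact absurd h hc
        · exact h
      rw [hβzero] at E1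
      nlinarith [mul_pos hαpos hγpos]
    exact toReal_zero (measure_ne_top _ _) hαzero
  · intro hFX
    refine contAt_of_no_atom μ Y hY x ?_
    have hηpos : 0 < η := by
      have hcompl : (μ {ω | X ω ≤ x}).toReal + η = 1 := by
        have h1 : {ω | X ω ≤ x} ∪ X ⁻¹' (Ioi x) = univ := by
          ext ω; simp only [mem_union, mem_setOf_eq, mem_preimage, mem_Ioi, mem_univ, iff_true]
          exact le_or_gt (X ω) x
        have h2 : Disjoint {ω | X ω ≤ x} (X ⁻¹' (Ioi x)) := by
          rw [disjoint_left]; intro ω ha hb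
          simp only [mem_setOf_eq, mem_preimage, mem_Ioi] at ha hb; linarith
        have h3 := measure_union (μ := μ) h2 (hX measurableSet_Ioi)
        rw [h1, measure_univ] at h3
        rw [hηdef, ← ENNReal.toReal_add (measure_ne_top _ _) (measure_ne_top _ _), ← h3]
        simp
      linarith
    have hβzero : β = 0 := by
      by_contra hc
      have hβpos : 0 < β := lt_of_le_of_ne hβ0 (Ne.symm hc)
      have hαzero : α = 0 := by
        rcases mul_eq_zero.mp hαβ with h | h
        · exact h
        · exact absurd h hc
      rw [hαzero] at E1
      nlinarith [mul_pos hηpos hβpos]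
    exact toReal_zero (measure_ne_top _ _) hβzero
end

section
/- Let F be a continuous cdf and let X, Y be independent random variables with survival functions 1 − F_X = (1 − F)^λ and 1 − F_Y = (1 − F)^μ for some λ, μ > 0. Then P(min(X,Y) > x, Y > X) = (λ/(λ+μ)) · (1 − F(x))^{λ+μ} for all real x. -/
open MeasureTheory ProbabilityTheory Filter Set

namespace Stmt7Aux

variable (ν : Measure ℝ) [IsProbabilityMeasure ν] (S : ℝ → ℝ)

lemma S_nonneg (h : ∀ t, (ν (Iic t)).toReal = 1 - S t) (t : ℝ) : 0 ≤ S t := by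
  have h1 : (ν (Iic t)).toReal ≤ 1 := by
    simpa using ENNReal.toReal_mono (by simp) (prob_le_one (μ := ν) (s := Iic t))
  linarith [h t]

lemma S_le_one (h : ∀ t, (ν (Iic t)).toReal = 1 - S t) (t : ℝ) : S t ≤ 1 := by
  linarith [h t, ENNReal.toReal_nonneg (a := ν (Iic t))]

lemma iic_eq (h : ∀ t, (ν (Iic t)).toReal = 1 - S t) (t : ℝ) :
    ν (Iic t) = ENNReal.ofReal (1 - S t) := by
  rw [← h t, ENNReal.ofReal_toReal (measure_ne_top _ _)]

lemma ioi_eq (h : ∀ t, (ν (Iic t)).toReal = 1 - S t) (t : ℝ) :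
    ν (Ioi t) = ENNReal.ofReal (S t) := by
  rw [← Set.compl_Iic, measure_compl measurableSet_Iic (measure_ne_top _ _), measure_univ,
    iic_eq ν S h t]
  refine ENNReal.sub_eq_of_eq_add ENNReal.ofReal_ne_top ?_
  rw [← ENNReal.ofReal_add (S_nonneg ν S h t) (by linarith [S_le_one ν S h t])]
  norm_num

lemma tendsto_left (hc : Continuous S) (a : ℝ) :
    Tendsto (fun n : ℕ => S (a - 1 / (n + 1))) atTop (nhds (S a)) := by
  have h1 : Tendsto (fun n : ℕ => a - 1 / ((n : ℝ) + 1)) atTop (nhds a) := by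
    simpa using (tendsto_const_nhds (x := a) (f := atTop)).sub
      tendsto_one_div_add_atTop_nhds_zero_nat
  exact (hc.tendsto a).comp h1

lemma atom (hc : Continuous S) (h : ∀ t, (ν (Iic t)).toReal = 1 - S t) (a : ℝ) :
    ν {a} = 0 := by
  have key : ∀ n : ℕ, (ν {a}).toReal ≤ S (a - 1 / (n + 1)) - S a := by
    intro n
    have hpos : 0 < 1 / ((n : ℝ) + 1) := by positivity
    have hlt : a - 1 / ((n : ℝ) + 1) < a := by linarith
    have hdisj : Disjoint (Iic (a - 1 / ((n : ℝ) + 1))) {a} := by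
      rw [Set.disjoint_singleton_right]
      simp only [Set.mem_Iic, not_le]
      exact hlt
    have hsub : Iic (a - 1 / ((n : ℝ) + 1)) ∪ {a} ⊆ Iic a := by
      rintro t (ht | ht)
      · exact le_trans ht hlt.le
      · simp only [Set.mem_singleton_iff] at ht
        simp [ht]
    have hmono := measure_mono (μ := ν) hsub
    rw [measure_union hdisj (measurableSet_singleton a)] at hmono
    have h2 := ENNReal.toReal_mono (measure_ne_top _ _) hmono
    rw [ENNReal.toReal_add (measure_ne_top _ _) (measure_ne_top _ _)] at h2
    have ha := h a
    have hb := h (a - 1 / ((n : ℝ) + 1))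
    linarith
  have hten : Tendsto (fun n : ℕ => S (a - 1 / (n + 1)) - S a) atTop (nhds 0) := by
    simpa using (tendsto_left S hc a).sub (tendsto_const_nhds (x := S a) (f := atTop))
  have h0 : (ν {a}).toReal ≤ 0 := ge_of_tendsto' hten key
  have h1 : (ν {a}).toReal = 0 := le_antisymm h0 ENNReal.toReal_nonneg
  exact ((ENNReal.toReal_eq_zero_iff _).mp h1).resolve_right (measure_ne_top _ _)

lemma ici_eq (hc : Continuous S) (h : ∀ t, (ν (Iic t)).toReal = 1 - S t) (a : ℝ) :
    ν (Ici a) = ENNReal.ofReal (S a) := by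
  have h1 : ν (Ici a) ≤ ν (Ioi a) := by
    have : Ici a = {a} ∪ Ioi a := by
      ext t; simp [Set.mem_Ici, le_iff_lt_or_eq, eq_comm, or_comm]
    rw [this]
    calc ν ({a} ∪ Ioi a) ≤ ν {a} + ν (Ioi a) := measure_union_le _ _
      _ = ν (Ioi a) := by rw [atom ν S hc h a, zero_add]
  have h2 : ν (Ioi a) ≤ ν (Ici a) := measure_mono Set.Ioi_subset_Ici_self
  rw [le_antisymm h1 h2, ioi_eq ν S h a]

lemma map_eq (hc : Continuous S) (hanti : Antitone S)
    (hbot : Tendsto S atBot (nhds 1)) (htop : Tendsto S atTop (nhds 0))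
    (h : ∀ t, (ν (Iic t)).toReal = 1 - S t) :
    ν.map S = volume.restrict (Set.Ioc (0 : ℝ) 1) := by
  have hmeas : Measurable S := hc.measurable
  haveI : IsProbabilityMeasure (ν.map S) := Measure.isProbabilityMeasure_map hmeas.aemeasurable
  refine Measure.ext_of_Iic _ _ (fun u => ?_)
  rw [Measure.map_apply hmeas measurableSet_Iic, Measure.restrict_apply measurableSet_Iic]
  rcases lt_or_ge u 0 with hu | hu
  · have h1 : S ⁻¹' Iic u = ∅ := by
      ext t
      simp only [Set.mem_preimage, Set.mem_Iic, Set.mem_empty_iff_false, iff_false, not_le]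
      exact lt_of_lt_of_le hu (S_nonneg ν S h t)
    have h2 : Iic u ∩ Ioc 0 1 = ∅ := by
      ext v
      simp only [Set.mem_inter_iff, Set.mem_Iic, Set.mem_Ioc, Set.mem_empty_iff_false, iff_false,
        not_and]
      intro hv hv0 hv1
      linarith
    simp [h1, h2]
  rcases le_or_gt 1 u with hu1 | hu1
  · have h1 : S ⁻¹' Iic u = Set.univ := by
      ext t
      simp only [Set.mem_preimage, Set.mem_Iic, Set.mem_univ, iff_true]
      exact le_trans (S_le_one ν S h t) hu1
    have h2 : Iic u ∩ Ioc 0 1 = Ioc 0 1 := by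
      rw [Set.inter_eq_self_of_subset_right]
      intro v hv
      exact le_trans hv.2 hu1
    rw [h1, h2, measure_univ, Real.volume_Ioc]
    norm_num
  · have h2 : Iic u ∩ Ioc 0 1 = Ioc 0 u := by
      ext v
      simp only [Set.mem_inter_iff, Set.mem_Iic, Set.mem_Ioc]
      constructor
      · rintro ⟨hv1, hv2, _⟩; exact ⟨hv2, hv1⟩
      · rintro ⟨hv1, hv2⟩; exact ⟨hv2, hv1, by linarith⟩
    rw [h2, Real.volume_Ioc]
    rcases Set.eq_empty_or_nonempty (S ⁻¹' Iic u) with he | hne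
    · have hu0 : u = 0 := by
        by_contra h'
        have hupos : 0 < u := lt_of_le_of_ne hu (Ne.symm h')
        obtain ⟨t, ht⟩ := (htop.eventually (eventually_lt_nhds hupos)).exists
        exact absurd (he ▸ (ht.le : t ∈ S ⁻¹' Iic u)) (Set.notMem_empty t)
      subst hu0
      simp [he]
    · have hbdd : BddBelow (S ⁻¹' Iic u) := by
        obtain ⟨t0, ht0⟩ := (hbot.eventually (eventually_gt_nhds hu1)).exists
        refine ⟨t0, fun t ht => ?_⟩
        by_contra hlt
        push_neg at hlt
        have h3 : S t0 ≤ S t := hanti hlt.le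
        have h4 : S t ≤ u := ht
        linarith
      set a := sInf (S ⁻¹' Iic u) with ha
      have hclosed : IsClosed (S ⁻¹' Iic u) := isClosed_Iic.preimage hc
      have hmem : a ∈ S ⁻¹' Iic u := hclosed.csInf_mem hne hbdd
      have hSa_le : S a ≤ u := hmem
      have hSa_ge : u ≤ S a := by
        refine ge_of_tendsto' (tendsto_left S hc a) (fun n => ?_)
        have hpos : 0 < 1 / ((n : ℝ) + 1) := by positivity
        by_contra hlt
        push_neg at hlt
        have : a - 1 / ((n : ℝ) + 1) ∈ S ⁻¹' Iic u := hlt.le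
        have := csInf_le hbdd this
        rw [← ha] at this
        linarith
      have hset : S ⁻¹' Iic u = Ici a := by
        ext t
        simp only [Set.mem_preimage, Set.mem_Iic, Set.mem_Ici]
        constructor
        · exact fun ht => csInf_le hbdd ht
        · exact fun hat => le_trans (hanti hat) hSa_le
      rw [hset, ici_eq ν S hc h a, le_antisymm hSa_le hSa_ge, sub_zero]

end Stmt7Aux
set_option maxHeartbeats 1000000 in
/-- If 1 − F_X = (1 − F)^λ and 1 − F_Y = (1 − F)^μ for a continuous cdf F, then
P(min(X,Y) > x, Y > X) = (λ/(λ+μ)) (1 − F(x))^{λ+μ}. -/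
theorem stmt7 {Ω : Type*} [MeasurableSpace Ω] (P : Measure Ω) [IsProbabilityMeasure P]
    (X Y : Ω → ℝ) (hX : Measurable X) (hY : Measurable Y)
    (hind : IndepFun X Y P)
    (F : ℝ → ℝ) (hFcont : Continuous F) (hFmono : Monotone F)
    (hF0 : Tendsto F atBot (nhds 0)) (hF1 : Tendsto F atTop (nhds 1))
    (lam mu : ℝ) (hlam : 0 < lam) (hmu : 0 < mu)
    (hFX : ∀ x : ℝ, 1 - (P {ω | X ω ≤ x}).toReal = (1 - F x) ^ lam)
    (hFY : ∀ x : ℝ, 1 - (P {ω | Y ω ≤ x}).toReal = (1 - F x) ^ mu) :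
    ∀ x : ℝ, (P ({ω | x < min (X ω) (Y ω)} ∩ {ω | X ω < Y ω})).toReal
      = (lam / (lam + mu)) * (1 - F x) ^ (lam + mu) := by
  intro x
  have hF_le_one : ∀ t, F t ≤ 1 :=
    fun t => ge_of_tendsto hF1 (eventually_atTop.2 ⟨t, fun s hs => hFmono hs⟩)
  have hF_nonneg : ∀ t, 0 ≤ F t :=
    fun t => le_of_tendsto hF0 (eventually_atBot.2 ⟨t, fun s hs => hFmono hs⟩)
  set G : ℝ → ℝ := fun t => 1 - F t with hG
  have hG_nonneg : ∀ t, 0 ≤ G t := fun t => by simp only [hG]; linarith [hF_le_one t]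
  have hG_le_one : ∀ t, G t ≤ 1 := fun t => by simp only [hG]; linarith [hF_nonneg t]
  have hG_cont : Continuous G := continuous_const.sub hFcont
  have hG_anti : Antitone G := fun s t hst => by
    simp only [hG]; linarith [hFmono hst]
  set SX : ℝ → ℝ := fun t => G t ^ lam with hSX
  set SY : ℝ → ℝ := fun t => G t ^ mu with hSY
  have hSX_cont : Continuous SX := hG_cont.rpow_const (fun t => Or.inr hlam.le)
  have hSX_anti : Antitone SX := fun s t hst =>
    Real.rpow_le_rpow (hG_nonneg t) (hG_anti hst) hlam.le
  have hGbot : Tendsto G atBot (nhds 1) := by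
    simpa using (tendsto_const_nhds (x := (1:ℝ)) (f := atBot)).sub hF0
  have hGtop : Tendsto G atTop (nhds 0) := by
    simpa using (tendsto_const_nhds (x := (1:ℝ)) (f := atTop)).sub hF1
  have hSX_bot : Tendsto SX atBot (nhds 1) := by
    simpa [Real.one_rpow] using hGbot.rpow_const (Or.inr hlam.le)
  have hSX_top : Tendsto SX atTop (nhds 0) := by
    simpa [Real.zero_rpow hlam.ne'] using hGtop.rpow_const (Or.inr hlam.le)
  set νX := P.map X with hνX
  set νY := P.map Y with hνYdef
  haveI hprobX : IsProbabilityMeasure νX := Measure.isProbabilityMeasure_map hX.aemeasurable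
  haveI hprobY : IsProbabilityMeasure νY := Measure.isProbabilityMeasure_map hY.aemeasurable
  have hIicX : ∀ t, (νX (Set.Iic t)).toReal = 1 - SX t := by
    intro t
    rw [hνX, Measure.map_apply hX measurableSet_Iic]
    have h1 : X ⁻¹' (Set.Iic t) = {ω | X ω ≤ t} := rfl
    rw [h1]
    simp only [hSX, hG]
    linarith [hFX t]
  have hIicY : ∀ t, (νY (Set.Iic t)).toReal = 1 - SY t := by
    intro t
    rw [hνYdef, Measure.map_apply hY measurableSet_Iic]
    have h1 : Y ⁻¹' (Set.Iic t) = {ω | Y ω ≤ t} := rfl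
    rw [h1]
    simp only [hSY, hG]
    linarith [hFY t]
  have hIoiY : ∀ t, νY (Set.Ioi t) = ENNReal.ofReal (SY t) :=
    fun t => Stmt7Aux.ioi_eq νY SY hIicY t
  have hmap : νX.map SX = volume.restrict (Set.Ioc (0 : ℝ) 1) :=
    Stmt7Aux.map_eq νX SX hSX_cont hSX_anti hSX_bot hSX_top hIicX
  -- rewrite the event
  have hsets : {ω | x < min (X ω) (Y ω)} ∩ {ω | X ω < Y ω}
      = (fun ω => (X ω, Y ω)) ⁻¹' {p : ℝ × ℝ | x < p.1 ∧ p.1 < p.2} := by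
    ext ω
    simp only [Set.mem_inter_iff, Set.mem_setOf_eq, Set.mem_preimage, lt_min_iff]
    constructor
    · rintro ⟨⟨h1, _⟩, h3⟩; exact ⟨h1, h3⟩
    · rintro ⟨h1, h3⟩; exact ⟨⟨h1, h1.trans h3⟩, h3⟩
  have hE : MeasurableSet {p : ℝ × ℝ | x < p.1 ∧ p.1 < p.2} :=
    (measurableSet_lt measurable_const measurable_fst).inter
      (measurableSet_lt measurable_fst measurable_snd)
  rw [hsets, ← Measure.map_apply (hX.prodMk hY) hE,
    (ProbabilityTheory.indepFun_iff_map_prod_eq_prod_map_map hX.aemeasurable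
      hY.aemeasurable).mp hind, ← hνX, ← hνYdef, Measure.prod_apply hE]
  -- pointwise description of the inner measure
  have hpre : ∀ s : ℝ, νY (Prod.mk s ⁻¹' {p : ℝ × ℝ | x < p.1 ∧ p.1 < p.2})
      = Set.indicator (Set.Ioi x) (fun s => ENNReal.ofReal (SY s)) s := by
    intro s
    by_cases hs : x < s
    · have h1 : Prod.mk s ⁻¹' {p : ℝ × ℝ | x < p.1 ∧ p.1 < p.2} = Set.Ioi s := by
        ext t; simp [hs]
      rw [h1, hIoiY s, Set.indicator_of_mem (Set.mem_Ioi.mpr hs)]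
    · have h1 : Prod.mk s ⁻¹' {p : ℝ × ℝ | x < p.1 ∧ p.1 < p.2} = (∅ : Set ℝ) := by
        ext t; simp [hs]
      rw [h1, measure_empty, Set.indicator_of_notMem (by simpa using hs)]
  set g : ℝ → ENNReal :=
    Set.indicator (Set.Iio (SX x)) (fun u => ENNReal.ofReal (u ^ (mu / lam))) with hg
  have hp_nonneg : (0:ℝ) ≤ mu / lam := (div_pos hmu hlam).le
  have hae : (fun s => Set.indicator (Set.Ioi x) (fun s => ENNReal.ofReal (SY s)) s)
      =ᵐ[νX] fun s => g (SX s) := by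
    have hnull : νX {s | x < s ∧ SX s = SX x} = 0 := by
      have h1 : νX (SX ⁻¹' {SX x}) = 0 := by
        have h2 := Measure.map_apply (μ := νX) hSX_cont.measurable
          (measurableSet_singleton (SX x))
        rw [hmap] at h2
        rw [← h2, Measure.restrict_apply (measurableSet_singleton _)]
        exact measure_mono_null Set.inter_subset_left Real.volume_singleton
      exact measure_mono_null (fun s hs => hs.2) h1
    filter_upwards [compl_mem_ae_iff.mpr hnull] with s hs
    by_cases h1 : x < s
    · have hle : SX s ≤ SX x := hSX_anti h1.le
      have hne : SX s ≠ SX x := fun hEq => hs ⟨h1, hEq⟩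
      have hlt : SX s ∈ Set.Iio (SX x) := lt_of_le_of_ne hle hne
      rw [Set.indicator_of_mem (Set.mem_Ioi.mpr h1), hg, Set.indicator_of_mem hlt]
      congr 1
      simp only [hSX, hSY]
      rw [← Real.rpow_mul (hG_nonneg s)]
      congr 1
      field_simp
    · have h2 : SX s ∉ Set.Iio (SX x) := not_lt.mpr (hSX_anti (not_lt.mp h1))
      rw [Set.indicator_of_notMem (by simpa using h1), hg, Set.indicator_of_notMem h2]
  have hgmeas : Measurable g := by
    exact (Measurable.indicator
      (ENNReal.measurable_ofReal.comp (Real.continuous_rpow_const hp_nonneg).measurable)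
      measurableSet_Iio)
  have hGx0 : 0 ≤ G x := hG_nonneg x
  have hc0 : 0 ≤ SX x := Real.rpow_nonneg hGx0 lam
  have hc1 : SX x ≤ 1 := Real.rpow_le_one hGx0 (hG_le_one x) hlam.le
  have hinterval : Set.Iio (SX x) ∩ Set.Ioc (0:ℝ) 1 = Set.Ioo 0 (SX x) := by
    ext v
    simp only [Set.mem_inter_iff, Set.mem_Iio, Set.mem_Ioc, Set.mem_Ioo]
    constructor
    · rintro ⟨hv1, hv2, _⟩; exact ⟨hv2, hv1⟩
    · rintro ⟨hv1, hv2⟩; exact ⟨hv2, hv1, by linarith⟩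
  have hint : IntegrableOn (fun u : ℝ => u ^ (mu / lam)) (Set.Ioo 0 (SX x)) volume := by
    have h1 : IntervalIntegrable (fun u : ℝ => u ^ (mu / lam)) volume 0 (SX x) :=
      intervalIntegral.intervalIntegrable_rpow' (by linarith)
    have h2 : IntegrableOn (fun u : ℝ => u ^ (mu / lam)) (Set.Ioc 0 (SX x)) volume :=
      (intervalIntegrable_iff_integrableOn_Ioc_of_le hc0).mp h1
    exact h2.mono_set Set.Ioo_subset_Ioc_self
  have hnn : 0 ≤ᵐ[volume.restrict (Set.Ioo 0 (SX x))] fun u : ℝ => u ^ (mu / lam) := by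
    filter_upwards [ae_restrict_mem measurableSet_Ioo] with u hu
    exact Real.rpow_nonneg hu.1.le _
  have key : ∫⁻ s, νY (Prod.mk s ⁻¹' {p : ℝ × ℝ | x < p.1 ∧ p.1 < p.2}) ∂νX
      = ENNReal.ofReal ((SX x ^ (mu / lam + 1)) / (mu / lam + 1)) := by
    calc ∫⁻ s, νY (Prod.mk s ⁻¹' {p : ℝ × ℝ | x < p.1 ∧ p.1 < p.2}) ∂νX
        = ∫⁻ s, Set.indicator (Set.Ioi x) (fun s => ENNReal.ofReal (SY s)) s ∂νX :=
          lintegral_congr hpre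
      _ = ∫⁻ s, g (SX s) ∂νX := lintegral_congr_ae hae
      _ = ∫⁻ u, g u ∂(νX.map SX) := (lintegral_map hgmeas hSX_cont.measurable).symm
      _ = ∫⁻ u, g u ∂(volume.restrict (Set.Ioc (0:ℝ) 1)) := by rw [hmap]
      _ = ∫⁻ u in Set.Iio (SX x),
            ENNReal.ofReal (u ^ (mu / lam)) ∂(volume.restrict (Set.Ioc (0:ℝ) 1)) := by
          rw [hg, lintegral_indicator measurableSet_Iio]
      _ = ∫⁻ u in Set.Ioo 0 (SX x), ENNReal.ofReal (u ^ (mu / lam)) ∂volume := by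
          rw [Measure.restrict_restrict measurableSet_Iio, hinterval]
      _ = ENNReal.ofReal (∫ u in Set.Ioo 0 (SX x), u ^ (mu / lam) ∂volume) :=
          (ofReal_integral_eq_lintegral_ofReal hint hnn).symm
      _ = ENNReal.ofReal ((SX x ^ (mu / lam + 1)) / (mu / lam + 1)) := by
          congr 1
          rw [← integral_Ioc_eq_integral_Ioo, ← intervalIntegral.integral_of_le hc0,
            integral_rpow (Or.inl (by linarith))]
          rw [Real.zero_rpow (by positivity)]
          ring
  rw [key, ENNReal.toReal_ofReal (by positivity)]
  have h1 : SX x ^ (mu / lam + 1) = G x ^ (lam + mu) := by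
    simp only [hSX]
    rw [← Real.rpow_mul hGx0]
    congr 1
    field_simp
    ring
  rw [h1]
  have h2 : mu / lam + 1 = (lam + mu) / lam := by field_simp; ring
  rw [h2, div_div_eq_mul_div]
  ring
end

section
/- Let F be a continuous cdf and X, Y independent random variables with 1 − F_X = (1 − F)^λ and 1 − F_Y = (1 − F)^μ, λ, μ > 0. Then P(Y > X) = λ/(λ+μ), and min(X,Y) is independent of the event {Y > X}. -/
open MeasureTheory ProbabilityTheory Filter
open Set

private lemma stmt8_rho_int (a b w : ℝ) (ha : 0 < a) (hb : 0 ≤ b) (hw0 : 0 ≤ w) (hw1 : w ≤ 1)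
    (s : Set ℝ) (hs : MeasurableSet s)
    (h1 : Ioo 0 w ⊆ s ∩ Ioo 0 1) (h2 : s ∩ Ioo 0 1 ⊆ Icc 0 w) :
    ∫⁻ u in s, ENNReal.ofReal (u ^ b)
        ∂(volume.withDensity ((Ioo (0:ℝ) 1).indicator fun u => ENNReal.ofReal (a * u ^ (a - 1))))
      = ENNReal.ofReal (a / (a + b) * w ^ (a + b)) := by
  have hab : (0:ℝ) < a + b := by linarith
  have hfm : Measurable ((Ioo (0:ℝ) 1).indicator fun u => ENNReal.ofReal (a * u ^ (a - 1))) := by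
    apply Measurable.indicator _ measurableSet_Ioo
    fun_prop
  have hgm : Measurable fun u : ℝ => ENNReal.ofReal (u ^ b) := by fun_prop
  rw [setLIntegral_withDensity_eq_setLIntegral_mul _ hfm hgm hs]
  have hind : ∀ u : ℝ, ((Ioo (0:ℝ) 1).indicator (fun u => ENNReal.ofReal (a * u ^ (a - 1))) * fun u => ENNReal.ofReal (u ^ b)) u
      = (Ioo (0:ℝ) 1).indicator (fun u => ENNReal.ofReal (a * u ^ (a - 1)) * ENNReal.ofReal (u ^ b)) u := by
    intro u
    by_cases hu : u ∈ Ioo (0:ℝ) 1 <;> simp [hu]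
  simp only [hind]
  rw [lintegral_indicator measurableSet_Ioo _, Measure.restrict_restrict measurableSet_Ioo]
  have hae : (Ioo (0:ℝ) 1 ∩ s : Set ℝ) =ᵐ[volume] Ioo 0 w := by
    rw [Set.inter_comm]
    rw [MeasureTheory.ae_eq_set]
    constructor
    · refine measure_mono_null (fun u hu => ?_) (Set.Countable.measure_zero ((Set.countable_singleton w).insert (0:ℝ)) _)
      have h3 := h2 hu.1
      have : u ∉ Ioo (0:ℝ) w := hu.2
      rcases eq_or_lt_of_le h3.1 with h | h
      · exact Or.inl h.symm
      · rcases eq_or_lt_of_le h3.2 with h' | h'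
        · exact Or.inr h'
        · exact absurd ⟨h, h'⟩ this
    · have : Ioo (0:ℝ) w \ (s ∩ Ioo 0 1) = ∅ := Set.diff_eq_empty.mpr h1
      rw [this, measure_empty]
  rw [setLIntegral_congr hae]
  have h4 : ∫⁻ x in Ioo (0:ℝ) w, ENNReal.ofReal (a * x ^ (a - 1)) * ENNReal.ofReal (x ^ b)
      = ∫⁻ x in Ioo (0:ℝ) w, ENNReal.ofReal (a * x ^ (a + b - 1)) := by
    refine setLIntegral_congr_fun measurableSet_Ioo (fun u hu => ?_)
    have hu0 : (0:ℝ) < u := hu.1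
    rw [← ENNReal.ofReal_mul (by positivity), mul_assoc, ← Real.rpow_add hu0,
      show a - 1 + b = a + b - 1 from by ring]
  rw [h4]
  have hii : IntervalIntegrable (fun u : ℝ => u ^ (a + b - 1)) volume 0 w :=
    intervalIntegral.intervalIntegrable_rpow' (by linarith)
  have hio : IntegrableOn (fun u : ℝ => a * u ^ (a + b - 1)) (Ioo 0 w) volume := by
    exact (((intervalIntegrable_iff_integrableOn_Ioc_of_le hw0).mp hii).mono_set Ioo_subset_Ioc_self).const_mul a
  rw [← ofReal_integral_eq_lintegral_ofReal hio
    ((ae_restrict_iff' measurableSet_Ioo).2 (ae_of_all _ (fun u hu => mul_nonneg ha.le (Real.rpow_nonneg hu.1.le _))))]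
  congr 1
  rw [← MeasureTheory.integral_Ioc_eq_integral_Ioo, ← intervalIntegral.integral_of_le hw0,
    intervalIntegral.integral_const_mul, integral_rpow (Or.inl (by linarith))]
  rw [sub_add_cancel, Real.zero_rpow hab.ne', sub_zero]
  field_simp

private lemma stmt8_Ici (G : ℝ → ℝ) (hGc : Continuous G) (a : ℝ) (ha : 0 ≤ a)
    (μ : Measure ℝ) [IsFiniteMeasure μ]
    (hμ : ∀ x, μ (Ioi x) = ENNReal.ofReal (G x ^ a)) (c : ℝ) :
    μ (Ici c) = ENNReal.ofReal (G c ^ a) := by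
  refine le_antisymm ?_ (by rw [← hμ c]; exact measure_mono Ioi_subset_Ici_self)
  have hGca : Continuous fun s : ℝ => ENNReal.ofReal (G s ^ a) :=
    ENNReal.continuous_ofReal.comp (hGc.rpow_const (fun x => Or.inr ha))
  have hseq : Tendsto (fun n : ℕ => c - 1 / (n + 1)) atTop (nhds c) := by
    have := tendsto_one_div_add_atTop_nhds_zero_nat (𝕜 := ℝ)
    have h2 := Tendsto.const_sub c this
    simpa using h2
  refine ge_of_tendsto ((hGca.continuousAt.tendsto).comp hseq) (Eventually.of_forall fun n => ?_)
  rw [Function.comp_apply, ← hμ]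
  refine measure_mono fun s hs => ?_
  have : (0:ℝ) < 1 / (n + 1) := by positivity
  simp only [mem_Ioi]; simp only [mem_Ici] at hs; linarith

private lemma stmt8_map (G : ℝ → ℝ) (hGc : Continuous G) (hGanti : Antitone G)
    (hG0 : ∀ s, 0 ≤ G s) (hG1 : ∀ s, G s ≤ 1)
    (hGtop : Tendsto G atTop (nhds 0)) (hGbot : Tendsto G atBot (nhds 1))
    (a : ℝ) (ha : 0 < a) (μ : Measure ℝ) [IsProbabilityMeasure μ]
    (hμ : ∀ x, μ (Ioi x) = ENNReal.ofReal (G x ^ a)) :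
    μ.map G = volume.withDensity ((Ioo (0:ℝ) 1).indicator fun u => ENNReal.ofReal (a * u ^ (a - 1))) := by
  haveI := Measure.isProbabilityMeasure_map (μ := μ) hGc.measurable.aemeasurable
  refine Measure.ext_of_Iic _ _ (fun t => ?_)
  have hρ : (volume.withDensity ((Ioo (0:ℝ) 1).indicator fun u => ENNReal.ofReal (a * u ^ (a - 1)))) (Iic t)
      = ENNReal.ofReal ((min (max t 0) 1) ^ a) := by
    set w := min (max t 0) 1 with hw
    have hw0 : 0 ≤ w := le_min (le_max_right t 0) zero_le_one
    have hw1 : w ≤ 1 := min_le_right _ _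
    have h1 : Ioo (0:ℝ) w ⊆ Iic t ∩ Ioo 0 1 := by
      intro u hu
      have hu1 : u < 1 := lt_of_lt_of_le hu.2 hw1
      have hut : u < max t 0 := lt_of_lt_of_le hu.2 (min_le_left _ _)
      have : max t 0 = t := by
        rcases max_cases t 0 with ⟨h, _⟩ | ⟨h, _⟩
        · exact h
        · exfalso; rw [h] at hut; exact absurd hu.1 (not_lt.mpr hut.le)
      exact ⟨le_of_lt (this ▸ hut), hu.1, hu1⟩
    have h2 : Iic t ∩ Ioo (0:ℝ) 1 ⊆ Icc 0 w := by
      intro u hu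
      exact ⟨hu.2.1.le, le_min (le_max_of_le_left hu.1) hu.2.2.le⟩
    have := stmt8_rho_int a 0 w ha le_rfl hw0 hw1 (Iic t) measurableSet_Iic h1 h2
    simp only [Real.rpow_zero, ENNReal.ofReal_one, add_zero, div_self ha.ne', one_mul,
      setLIntegral_one] at this
    exact this
  rw [Measure.map_apply hGc.measurable measurableSet_Iic, hρ]
  rcases lt_or_ge t 0 with ht | ht0
  · have : G ⁻¹' Iic t = ∅ := by
      ext s; simp only [mem_preimage, mem_Iic, mem_empty_iff_false, iff_false, not_le]
      exact lt_of_lt_of_le ht (hG0 s)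
    rw [this, measure_empty, max_eq_right ht.le, min_eq_left zero_le_one,
      Real.zero_rpow ha.ne', ENNReal.ofReal_zero]
  · rcases le_or_gt 1 t with ht1 | ht1
    · have : G ⁻¹' Iic t = univ := by
        ext s; simp only [mem_preimage, mem_Iic, mem_univ, iff_true]
        exact le_trans (hG1 s) ht1
      rw [this, measure_univ, max_eq_left ht0, min_eq_right ht1, Real.one_rpow,
        ENNReal.ofReal_one]
    · rw [max_eq_left ht0, min_eq_left ht1.le]
      by_cases hS : (G ⁻¹' Iic t).Nonempty
      · have hbdd : BddBelow (G ⁻¹' Iic t) := by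
          obtain ⟨m, hm⟩ := eventually_atBot.mp (hGbot.eventually (eventually_gt_nhds ht1))
          refine ⟨m, fun s hs => ?_⟩
          by_contra h
          have h2 : t < G s := hm s (le_of_lt (lt_of_not_ge h))
          exact absurd hs (not_le.mpr h2)
        set c := sInf (G ⁻¹' Iic t) with hc
        have hclosed : IsClosed (G ⁻¹' Iic t) := isClosed_Iic.preimage hGc
        have hcmem : c ∈ G ⁻¹' Iic t := hclosed.csInf_mem hS hbdd
        have hSeq : G ⁻¹' Iic t = Ici c := by
          apply Subset.antisymm (fun s hs => csInf_le hbdd hs)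
          intro s hs
          exact le_trans (hGanti hs) hcmem
        have hGct : G c = t := by
          refine le_antisymm hcmem ?_
          have hseq : Tendsto (fun n : ℕ => c - 1 / (n + 1)) atTop (nhds c) := by
            have := tendsto_one_div_add_atTop_nhds_zero_nat (𝕜 := ℝ)
            simpa using Tendsto.const_sub c this
          refine ge_of_tendsto ((hGc.continuousAt.tendsto).comp hseq) (Eventually.of_forall fun n => ?_)
          rw [Function.comp_apply]
          by_contra h
          push_neg at h
          have hmem : c - 1 / (n + 1) ∈ G ⁻¹' Iic t := h.le
          have := csInf_le hbdd hmem
          have hpos : (0:ℝ) < 1 / (n + 1) := by positivity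
          rw [← hc] at this; linarith
        rw [hSeq, stmt8_Ici G hGc a ha.le μ hμ c, hGct]
      · rw [not_nonempty_iff_eq_empty] at hS
        rw [hS, measure_empty]
        have ht0 : t = 0 := by
          by_contra h
          have htpos : 0 < t := lt_of_le_of_ne ht0 (Ne.symm h)
          obtain ⟨s, hs⟩ := (hGtop.eventually (eventually_lt_nhds htpos)).exists
          have hmem : s ∈ G ⁻¹' Iic t := hs.le
          rw [hS] at hmem
          exact hmem
        rw [ht0, Real.zero_rpow ha.ne', ENNReal.ofReal_zero]

private lemma stmt8_key (G : ℝ → ℝ) (hGc : Continuous G) (hGanti : Antitone G)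
    (hG0 : ∀ s, 0 ≤ G s) (hG1 : ∀ s, G s ≤ 1)
    (hGtop : Tendsto G atTop (nhds 0)) (hGbot : Tendsto G atBot (nhds 1))
    (a b : ℝ) (ha : 0 < a) (hb : 0 < b) (μ : Measure ℝ) [IsProbabilityMeasure μ]
    (hμ : ∀ x, μ (Ioi x) = ENNReal.ofReal (G x ^ a)) :
    (∫⁻ s, ENNReal.ofReal (G s ^ b) ∂μ = ENNReal.ofReal (a / (a + b)))
    ∧ ∀ x, ∫⁻ s in Ioi x, ENNReal.ofReal (G s ^ b) ∂μ
        = ENNReal.ofReal (a / (a + b) * G x ^ (a + b)) := by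
  have hmap := stmt8_map G hGc hGanti hG0 hG1 hGtop hGbot a ha μ hμ
  have hgm : Measurable fun u : ℝ => ENNReal.ofReal (u ^ b) := by fun_prop
  constructor
  · have hlm := lintegral_map hgm hGc.measurable (μ := μ)
    rw [hmap] at hlm
    rw [← hlm]
    have := stmt8_rho_int a b 1 ha hb.le zero_le_one le_rfl univ MeasurableSet.univ
      (by simp) (by intro u hu; exact ⟨hu.2.1.le, hu.2.2.le⟩)
    rw [Measure.restrict_univ] at this
    rw [this, Real.one_rpow, mul_one]
  · intro x
    set w := G x with hwdef
    have hw0 : 0 ≤ w := hG0 x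
    have hw1 : w ≤ 1 := hG1 x
    have hsub : {s : ℝ | G s < w} ⊆ Ioi x := by
      intro s hs
      by_contra h
      have : w ≤ G s := hGanti (le_of_not_gt (fun hh => h hh))
      exact absurd hs (not_lt.mpr this)
    have hmeaslt : MeasurableSet {s : ℝ | G s < w} :=
      measurableSet_lt hGc.measurable measurable_const
    have hlow : μ {s : ℝ | G s < w} = ENNReal.ofReal (w ^ a) := by
      have hpre : {s : ℝ | G s < w} = G ⁻¹' Iio w := rfl
      rw [hpre, ← Measure.map_apply hGc.measurable measurableSet_Iio, hmap]
      have := stmt8_rho_int a 0 w ha le_rfl hw0 hw1 (Iio w) measurableSet_Iio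
        (fun u hu => ⟨hu.2, hu.1, lt_of_lt_of_le hu.2 hw1⟩)
        (fun u hu => ⟨hu.2.1.le, hu.1.le⟩)
      simp only [Real.rpow_zero, ENNReal.ofReal_one, add_zero, div_self ha.ne', one_mul,
        setLIntegral_one] at this
      exact this
    have hB : μ (Ioi x \ {s : ℝ | G s < w}) = 0 := by
      rw [measure_diff hsub hmeaslt.nullMeasurableSet (measure_ne_top μ _), hlow, hμ x]
      exact tsub_self _
    have hae : (Ioi x : Set ℝ) =ᵐ[μ] {s : ℝ | G s < w} := by
      rw [MeasureTheory.ae_eq_set]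
      exact ⟨hB, by rw [Set.diff_eq_empty.mpr hsub, measure_empty]⟩
    rw [setLIntegral_congr hae]
    have hpre : {s : ℝ | G s < w} = G ⁻¹' Iio w := rfl
    rw [hpre, ← setLIntegral_map measurableSet_Iio hgm hGc.measurable, hmap]
    exact stmt8_rho_int a b w ha hb.le hw0 hw1 (Iio w) measurableSet_Iio
      (fun u hu => ⟨hu.2, hu.1, lt_of_lt_of_le hu.2 hw1⟩)
      (fun u hu => ⟨hu.2.1.le, hu.1.le⟩)


/-- If 1 − F_X = (1 − F)^λ and 1 − F_Y = (1 − F)^μ for a continuous cdf F, then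
P(Y > X) = λ/(λ+μ) and min(X,Y) is independent of {Y > X}. -/
theorem stmt8 {Ω : Type*} [MeasurableSpace Ω] (P : Measure Ω) [IsProbabilityMeasure P]
    (X Y : Ω → ℝ) (hX : Measurable X) (hY : Measurable Y)
    (hind : IndepFun X Y P)
    (F : ℝ → ℝ) (hFcont : Continuous F) (hFmono : Monotone F)
    (hF0 : Tendsto F atBot (nhds 0)) (hF1 : Tendsto F atTop (nhds 1))
    (lam mu : ℝ) (hlam : 0 < lam) (hmu : 0 < mu)
    (hFX : ∀ x : ℝ, 1 - (P {ω | X ω ≤ x}).toReal = (1 - F x) ^ lam)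
    (hFY : ∀ x : ℝ, 1 - (P {ω | Y ω ≤ x}).toReal = (1 - F x) ^ mu) :
    (P {ω | X ω < Y ω}).toReal = lam / (lam + mu)
    ∧ ∀ x : ℝ, (P ({ω | x < min (X ω) (Y ω)} ∩ {ω | X ω < Y ω})).toReal
        = (P {ω | x < min (X ω) (Y ω)}).toReal * (P {ω | X ω < Y ω}).toReal := by
  have hlm : (0:ℝ) < lam + mu := by linarith
  set G : ℝ → ℝ := fun x => 1 - F x with hGdef
  have hGc : Continuous G := continuous_const.sub hFcont
  have hGanti : Antitone G := fun s t h => sub_le_sub_left (hFmono h) 1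
  have hFle1 : ∀ x, F x ≤ 1 := fun x =>
    ge_of_tendsto hF1 (eventually_atTop.mpr ⟨x, fun y hy => hFmono hy⟩)
  have hFge0 : ∀ x, 0 ≤ F x := fun x =>
    le_of_tendsto hF0 (eventually_atBot.mpr ⟨x, fun y hy => hFmono hy⟩)
  have hG0 : ∀ s, 0 ≤ G s := fun s => sub_nonneg.mpr (hFle1 s)
  have hG1 : ∀ s, G s ≤ 1 := fun s => by
    have := hFge0 s; simp only [hGdef]; linarith
  have hGtop : Tendsto G atTop (nhds 0) := by
    have := Tendsto.const_sub (1:ℝ) hF1; simpa using this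
  have hGbot : Tendsto G atBot (nhds 1) := by
    have := Tendsto.const_sub (1:ℝ) hF0; simpa using this
  set μ := P.map X with hμdef
  set ν := P.map Y with hνdef
  haveI : IsProbabilityMeasure μ := Measure.isProbabilityMeasure_map hX.aemeasurable
  haveI : IsProbabilityMeasure ν := Measure.isProbabilityMeasure_map hY.aemeasurable
  have hray : ∀ (Z : Ω → ℝ) (hZ : Measurable Z) (a : ℝ),
      (∀ x : ℝ, 1 - (P {ω | Z ω ≤ x}).toReal = G x ^ a) →
      ∀ x, (P.map Z) (Ioi x) = ENNReal.ofReal (G x ^ a) := by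
    intro Z hZ a hFZ x
    rw [Measure.map_apply hZ measurableSet_Ioi]
    have hpre : Z ⁻¹' Ioi x = {ω | Z ω ≤ x}ᶜ := by
      ext ω; simp [not_le]
    rw [hpre, measure_compl (show MeasurableSet {ω | Z ω ≤ x} from hZ measurableSet_Iic) (measure_ne_top P _)]
    rw [measure_univ, ← hFZ x, ENNReal.ofReal_sub _ ENNReal.toReal_nonneg,
      ENNReal.ofReal_one, ENNReal.ofReal_toReal (measure_ne_top P _)]
  have hμIoi : ∀ x, μ (Ioi x) = ENNReal.ofReal (G x ^ lam) := hray X hX lam hFX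
  have hνIoi : ∀ x, ν (Ioi x) = ENNReal.ofReal (G x ^ mu) := hray Y hY mu hFY
  have hkey := stmt8_key G hGc hGanti hG0 hG1 hGtop hGbot lam mu hlam hmu μ hμIoi
  have hprod : P.map (fun ω => (X ω, Y ω)) = μ.prod ν :=
    (indepFun_iff_map_prod_eq_prod_map_map hX.aemeasurable hY.aemeasurable).mp hind
  have hmeas_lt : MeasurableSet {p : ℝ × ℝ | p.1 < p.2} :=
    measurableSet_lt measurable_fst measurable_snd
  have hXY : P {ω | X ω < Y ω} = ENNReal.ofReal (lam / (lam + mu)) := by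
    have hset : {ω | X ω < Y ω} = (fun ω => (X ω, Y ω)) ⁻¹' {p : ℝ × ℝ | p.1 < p.2} := rfl
    rw [hset, ← Measure.map_apply (hX.prodMk hY) hmeas_lt, hprod,
      Measure.prod_apply hmeas_lt]
    have : ∀ s : ℝ, ν (Prod.mk s ⁻¹' {p : ℝ × ℝ | p.1 < p.2}) = ENNReal.ofReal (G s ^ mu) := by
      intro s
      have : (Prod.mk s ⁻¹' {p : ℝ × ℝ | p.1 < p.2}) = Ioi s := rfl
      rw [this, hνIoi]
    simp only [this]
    exact hkey.1
  have hmin : ∀ x : ℝ, P {ω | x < min (X ω) (Y ω)} = ENNReal.ofReal (G x ^ (lam + mu)) := by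
    intro x
    have hset : {ω | x < min (X ω) (Y ω)} = (fun ω => (X ω, Y ω)) ⁻¹' (Ioi x ×ˢ Ioi x) := by
      ext ω; simp [lt_min_iff]
    rw [hset, ← Measure.map_apply (hX.prodMk hY) (measurableSet_Ioi.prod measurableSet_Ioi),
      hprod, Measure.prod_prod, hμIoi, hνIoi,
      ← ENNReal.ofReal_mul (Real.rpow_nonneg (hG0 x) _), ← Real.rpow_add' (hG0 x) hlm.ne']
  have hinter : ∀ x : ℝ, P ({ω | x < min (X ω) (Y ω)} ∩ {ω | X ω < Y ω})
      = ENNReal.ofReal (lam / (lam + mu) * G x ^ (lam + mu)) := by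
    intro x
    have hSmeas : MeasurableSet {p : ℝ × ℝ | x < p.1 ∧ p.1 < p.2} :=
      (measurable_fst measurableSet_Ioi).inter hmeas_lt
    have hset : {ω | x < min (X ω) (Y ω)} ∩ {ω | X ω < Y ω}
        = (fun ω => (X ω, Y ω)) ⁻¹' {p : ℝ × ℝ | x < p.1 ∧ p.1 < p.2} := by
      ext ω
      simp only [mem_inter_iff, mem_setOf_eq, mem_preimage, lt_min_iff]
      constructor
      · rintro ⟨⟨h1, _⟩, h3⟩; exact ⟨h1, h3⟩
      · rintro ⟨h1, h3⟩; exact ⟨⟨h1, lt_trans h1 h3⟩, h3⟩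
    rw [hset, ← Measure.map_apply (hX.prodMk hY) hSmeas, hprod, Measure.prod_apply hSmeas]
    have hslice : ∀ s : ℝ, ν (Prod.mk s ⁻¹' {p : ℝ × ℝ | x < p.1 ∧ p.1 < p.2})
        = (Ioi x).indicator (fun s => ENNReal.ofReal (G s ^ mu)) s := by
      intro s
      by_cases hxs : x < s
      · have : (Prod.mk s ⁻¹' {p : ℝ × ℝ | x < p.1 ∧ p.1 < p.2}) = Ioi s := by
          ext t; simp [hxs]
        rw [this, hνIoi, indicator_of_mem (mem_Ioi.mpr hxs)]
      · have : (Prod.mk s ⁻¹' {p : ℝ × ℝ | x < p.1 ∧ p.1 < p.2}) = ∅ := by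
          ext t; simp [hxs]
        rw [this, measure_empty, indicator_of_notMem (fun h => hxs (mem_Ioi.mp h))]
    simp only [hslice]
    rw [lintegral_indicator measurableSet_Ioi]
    exact hkey.2 x
  have hdivpos : (0:ℝ) ≤ lam / (lam + mu) := div_nonneg hlam.le hlm.le
  constructor
  · rw [hXY, ENNReal.toReal_ofReal hdivpos]
  · intro x
    rw [hinter x, hmin x, hXY,
      ENNReal.toReal_ofReal (mul_nonneg hdivpos (Real.rpow_nonneg (hG0 x) _)),
      ENNReal.toReal_ofReal (Real.rpow_nonneg (hG0 x) _),
      ENNReal.toReal_ofReal hdivpos]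
    ring
end

section
/- Let X, Y be almost surely finite independent real-valued random variables with P(X = Y) = 0 and P(Y > X) ∈ (0,1). Then min(X,Y) and the event {Y > X} are independent if and only if there exists a continuous cdf F and constants λ, μ > 0 such that 1 − F_X(x) = (1 − F(x))^λ and 1 − F_Y(x) = (1 − F(x))^μ for all real x. -/
set_option maxHeartbeats 1000000

open MeasureTheory ProbabilityTheory Filter Set Topology


lemma log_sub_le' {x y : ℝ} (h0 : 0 < y) (h : y ≤ x) :
    Real.log x - Real.log y ≤ (x - y) / y := by
  have hx : 0 < x := lt_of_lt_of_le h0 h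
  have hd : 0 < x / y := div_pos hx h0
  have := Real.log_le_sub_one_of_pos hd
  rw [Real.log_div (ne_of_gt hx) (ne_of_gt h0)] at this
  calc Real.log x - Real.log y ≤ x / y - 1 := this
    _ = (x - y) / y := by field_simp

lemma sub_div_le_log_sub' {x y : ℝ} (h0 : 0 < y) (h : y ≤ x) :
    (x - y) / x ≤ Real.log x - Real.log y := by
  have hx : 0 < x := lt_of_lt_of_le h0 h
  have hd : 0 < y / x := div_pos h0 hx
  have := Real.log_le_sub_one_of_pos hd
  rw [Real.log_div (ne_of_gt h0) (ne_of_gt hx)] at this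
  have h2 : (x - y)/x = 1 - y/x := by field_simp
  linarith

lemma log_sub_nonneg' {x y : ℝ} (h0 : 0 < y) (h : y ≤ x) :
    0 ≤ Real.log x - Real.log y := by
  have := sub_div_le_log_sub' h0 h
  have hx : 0 < x := lt_of_lt_of_le h0 h
  have : 0 ≤ (x - y)/x := div_nonneg (by linarith) hx.le
  linarith [sub_div_le_log_sub' h0 h]

lemma logsum_le {u v : ℝ → ℝ} {c d a b : ℝ} (hc : 0 < c) (hd : 0 < d) (hab : a ≤ b)
    (hu : Antitone u) (hv : Antitone v)
    (hub : 0 < u b) (hvb : 0 < v b)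
    (hucont : ContinuousOn u (Set.Icc a b)) (hvcont : ContinuousOn v (Set.Icc a b))
    (I1 : ∀ x y, x ≤ y → c * ((u x - u y) * v y) ≤ d * ((v x - v y) * u x)) :
    c * (Real.log (u a) - Real.log (u b)) ≤ d * (Real.log (v a) - Real.log (v b)) := by
  set B := d * (Real.log (v a) - Real.log (v b)) with hB
  have hva : v b ≤ v a := hv hab
  have hua : u b ≤ u a := hu hab
  have hBnn : 0 ≤ B := mul_nonneg hd.le (log_sub_nonneg' hvb hva)
  refine le_of_forall_pos_le_add (fun ε hε => ?_)
  set η := min 1 (ε / (3 * (B + 1))) with hηdef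
  have hη0 : 0 < η := lt_min one_pos (div_pos hε (by linarith))
  have hη1 : η ≤ 1 := min_le_left _ _
  have hηB : (1 + η)^2 * B ≤ B + ε := by
    have h1 : (1+η)^2 ≤ 1 + 3*η := by nlinarith
    have h2 : η * (B+1) ≤ ε / 3 := by
      have h3 := min_le_right 1 (ε / (3*(B+1)))
      calc η * (B+1) ≤ (ε / (3*(B+1))) * (B+1) :=
            mul_le_mul_of_nonneg_right h3 (by linarith)
        _ = ε/3 := by field_simp
    nlinarith
  set m := min (u b) (v b) with hm
  have hm0 : 0 < m := lt_min hub hvb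
  -- uniform continuity
  have hcu : UniformContinuousOn u (Set.Icc a b) :=
    isCompact_Icc.uniformContinuousOn_of_continuous hucont
  have hcv : UniformContinuousOn v (Set.Icc a b) :=
    isCompact_Icc.uniformContinuousOn_of_continuous hvcont
  rw [Metric.uniformContinuousOn_iff] at hcu hcv
  obtain ⟨δu, hδu0, hδu⟩ := hcu (η * m) (by positivity)
  obtain ⟨δv, hδv0, hδv⟩ := hcv (η * m) (by positivity)
  set δ := min δu δv with hδdef
  have hδ0 : 0 < δ := lt_min hδu0 hδv0
  obtain ⟨N, hN⟩ := exists_nat_gt ((b - a)/δ)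
  set n := N + 1 with hndef
  have hn0 : 0 < (n:ℝ) := by positivity
  have hnN : (b - a)/δ < n := lt_of_lt_of_le hN (by exact_mod_cast Nat.le_succ N)
  have hstep : (b - a)/(n:ℝ) < δ := by
    rw [div_lt_iff₀ hn0]
    rw [div_lt_iff₀ hδ0] at hnN
    linarith
  have hstepnn : 0 ≤ (b - a)/(n:ℝ) := div_nonneg (by linarith) hn0.le
  set t : ℕ → ℝ := fun i => a + i * ((b - a)/n) with htdef
  have ht0 : t 0 = a := by simp [htdef]
  have htn : t n = b := by
    simp only [htdef]
    field_simp
    ring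
  have htmono : Monotone t := fun i j hij => by
    simp only [htdef]
    have : (i:ℝ) ≤ j := by exact_mod_cast hij
    nlinarith
  have htmem : ∀ i ≤ n, t i ∈ Set.Icc a b := by
    intro i hi
    constructor
    · rw [← ht0]; exact htmono (Nat.zero_le i)
    · rw [← htn]; exact htmono hi
  have htstep : ∀ i, t (i+1) - t i = (b - a)/n := by
    intro i; simp only [htdef]; push_cast; ring
  -- per-term bound
  have key : ∀ i < n, c * (Real.log (u (t i)) - Real.log (u (t (i+1))))
      ≤ d * ((1+η)^2 * (Real.log (v (t i)) - Real.log (v (t (i+1))))) := by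
    intro i hi
    set x := t i with hx
    set y := t (i+1) with hy
    have hxy : x ≤ y := htmono (Nat.le_succ i)
    have hxmem : x ∈ Set.Icc a b := htmem i hi.le
    have hymem : y ∈ Set.Icc a b := htmem (i+1) hi
    have hdist : dist x y < δ := by
      rw [Real.dist_eq, abs_sub_comm, abs_of_nonneg (by linarith)]
      rw [show y - x = (b-a)/n from htstep i]
      exact hstep
    have huy0 : 0 < u y := lt_of_lt_of_le hub (hu hymem.2)
    have hvy0 : 0 < v y := lt_of_lt_of_le hvb (hv hymem.2)
    have hux0 : 0 < u x := lt_of_lt_of_le huy0 (hu hxy)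
    have hvx0 : 0 < v x := lt_of_lt_of_le hvy0 (hv hxy)
    have hmu : m ≤ u y := le_trans (min_le_left _ _) (hu hymem.2)
    have hmv : m ≤ v y := le_trans (min_le_right _ _) (hv hymem.2)
    have hud : u x - u y < η * m := by
      have h := hδu x hxmem y hymem (lt_of_lt_of_le hdist (min_le_left _ _))
      rw [Real.dist_eq] at h
      exact lt_of_le_of_lt (le_abs_self _) h
    have hvd : v x - v y < η * m := by
      have h := hδv x hxmem y hymem (lt_of_lt_of_le hdist (min_le_right _ _))
      rw [Real.dist_eq] at h
      exact lt_of_le_of_lt (le_abs_self _) h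
    have e1 : η * m ≤ η * u y := mul_le_mul_of_nonneg_left hmu hη0.le
    have e2 : η * m ≤ η * v y := mul_le_mul_of_nonneg_left hmv hη0.le
    have hux_le : u x ≤ (1+η) * u y := by nlinarith [hud, e1]
    have hvx_le : v x ≤ (1+η) * v y := by nlinarith [hvd, e2]
    have hlog0 : 0 ≤ Real.log (v x) - Real.log (v y) := log_sub_nonneg' hvy0 (hv hxy)
    have L1 : Real.log (u x) - Real.log (u y) ≤ (u x - u y) / u y := log_sub_le' huy0 (hu hxy)
    have L2 : v x - v y ≤ v x * (Real.log (v x) - Real.log (v y)) := by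
      have h := sub_div_le_log_sub' hvy0 (hv hxy)
      rw [div_le_iff₀ hvx0] at h
      linarith [h]
    calc c * (Real.log (u x) - Real.log (u y)) ≤ c * ((u x - u y) / u y) :=
          mul_le_mul_of_nonneg_left L1 hc.le
      _ ≤ d * ((1+η)^2 * (Real.log (v x) - Real.log (v y))) := by
          rw [mul_div_assoc', div_le_iff₀ huy0, ← mul_le_mul_iff_left₀ hvy0]
          have i1 := I1 x y hxy
          have s1 : d * ((v x - v y) * u x) ≤ d * ((v x * (Real.log (v x) - Real.log (v y))) * u x) := by
            apply mul_le_mul_of_nonneg_left _ hd.le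
            exact mul_le_mul_of_nonneg_right L2 hux0.le
          have s2 : v x * (Real.log (v x) - Real.log (v y)) ≤ ((1+η) * v y) * (Real.log (v x) - Real.log (v y)) :=
            mul_le_mul_of_nonneg_right hvx_le hlog0
          have s3 : (v x * (Real.log (v x) - Real.log (v y))) * u x
              ≤ (((1+η) * v y) * (Real.log (v x) - Real.log (v y))) * ((1+η) * u y) := by
            apply mul_le_mul s2 hux_le hux0.le
            positivity
          have s4 : d * ((((1+η) * v y) * (Real.log (v x) - Real.log (v y))) * ((1+η) * u y))
              = d * ((1+η)^2 * (Real.log (v x) - Real.log (v y))) * u y * v y := by ring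
          nlinarith [mul_le_mul_of_nonneg_left s3 hd.le]
  -- sum up
  have sumu := Finset.sum_range_sub' (fun i => Real.log (u (t i))) n
  have sumv := Finset.sum_range_sub' (fun i => Real.log (v (t i))) n
  have hsum : (Finset.range n).sum (fun i => c * (Real.log (u (t i)) - Real.log (u (t (i+1)))))
      ≤ (Finset.range n).sum (fun i => d * ((1+η)^2 * (Real.log (v (t i)) - Real.log (v (t (i+1)))))) :=
    Finset.sum_le_sum (fun i hi => key i (Finset.mem_range.1 hi))
  rw [← Finset.mul_sum, ← Finset.mul_sum, ← Finset.mul_sum, sumu, sumv, ht0, htn] at hsum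
  calc c * (Real.log (u a) - Real.log (u b))
      ≤ d * ((1+η)^2 * (Real.log (v a) - Real.log (v b))) := hsum
    _ = (1+η)^2 * B := by rw [hB]; ring
    _ ≤ B + ε := hηB

lemma sandwich_eq {u v f g : ℝ → ℝ} {a b : ℝ} (hab : a ≤ b)
    (hu : Antitone u)
    (hvcont : ContinuousOn v (Set.Icc a b))
    (hf : ∀ x y, x ≤ y → (u x - u y) * v y ≤ f x - f y ∧ f x - f y ≤ (u x - u y) * v x)
    (hg : ∀ x y, x ≤ y → (u x - u y) * v y ≤ g x - g y ∧ g x - g y ≤ (u x - u y) * v x) :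
    f a - f b = g a - g b := by
  have habs : ∀ ε > 0, |(f a - f b) - (g a - g b)| ≤ ε := by
    intro ε hε
    set ε' := ε / (u a - u b + 1) with hε'def
    have hDu : 0 ≤ u a - u b := sub_nonneg.2 (hu hab)
    have hε'0 : 0 < ε' := div_pos hε (by linarith)
    have hcv : UniformContinuousOn v (Set.Icc a b) :=
      isCompact_Icc.uniformContinuousOn_of_continuous hvcont
    rw [Metric.uniformContinuousOn_iff] at hcv
    obtain ⟨δ, hδ0, hδ⟩ := hcv ε' hε'0
    obtain ⟨N, hN⟩ := exists_nat_gt ((b - a)/δ)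
    set n := N + 1 with hndef
    have hn0 : 0 < (n:ℝ) := by positivity
    have hnN : (b - a)/δ < n := lt_of_lt_of_le hN (by exact_mod_cast Nat.le_succ N)
    have hstep : (b - a)/(n:ℝ) < δ := by
      rw [div_lt_iff₀ hn0]
      rw [div_lt_iff₀ hδ0] at hnN
      linarith
    set t : ℕ → ℝ := fun i => a + i * ((b - a)/n) with htdef
    have ht0 : t 0 = a := by simp [htdef]
    have htn : t n = b := by simp only [htdef]; field_simp; ring
    have htmono : Monotone t := fun i j hij => by
      simp only [htdef]
      have h1 : (i:ℝ) ≤ j := by exact_mod_cast hij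
      have h2 : 0 ≤ (b - a)/(n:ℝ) := div_nonneg (by linarith) hn0.le
      nlinarith
    have htmem : ∀ i ≤ n, t i ∈ Set.Icc a b := by
      intro i hi
      exact ⟨ht0 ▸ htmono (Nat.zero_le i), htn ▸ htmono hi⟩
    have htstep : ∀ i, t (i+1) - t i = (b - a)/n := by
      intro i; simp only [htdef]; push_cast; ring
    have key : ∀ i < n,
        |(f (t i) - f (t (i+1))) - (g (t i) - g (t (i+1)))|
          ≤ ε' * (u (t i) - u (t (i+1))) := by
      intro i hi
      set x := t i
      set y := t (i+1)
      have hxy : x ≤ y := htmono (Nat.le_succ i)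
      have hxmem : x ∈ Set.Icc a b := htmem i hi.le
      have hymem : y ∈ Set.Icc a b := htmem (i+1) hi
      have hdist : dist x y < δ := by
        rw [Real.dist_eq, abs_sub_comm, abs_of_nonneg (by linarith)]
        rw [show y - x = (b-a)/n from htstep i]
        exact hstep
      have hvd : v x - v y ≤ ε' := by
        have h := hδ x hxmem y hymem hdist
        rw [Real.dist_eq] at h
        exact le_of_lt (lt_of_le_of_lt (le_abs_self _) h)
      have hvd' : v y - v x ≤ ε' := by
        have h := hδ x hxmem y hymem hdist
        rw [Real.dist_eq, abs_sub_comm] at h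
        exact le_of_lt (lt_of_le_of_lt (le_abs_self _) h)
      have hDui : 0 ≤ u x - u y := sub_nonneg.2 (hu hxy)
      obtain ⟨hf1, hf2⟩ := hf x y hxy
      obtain ⟨hg1, hg2⟩ := hg x y hxy
      rw [abs_le]
      constructor
      · have : (u x - u y) * (v y - v x) ≥ (u x - u y) * (-ε') := by
          apply mul_le_mul_of_nonneg_left _ hDui
          linarith
        nlinarith
      · have : (u x - u y) * (v x - v y) ≤ (u x - u y) * ε' :=
          mul_le_mul_of_nonneg_left hvd hDui
        nlinarith
    have sumf := Finset.sum_range_sub' (fun i => f (t i)) n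
    have sumg := Finset.sum_range_sub' (fun i => g (t i)) n
    have sumu := Finset.sum_range_sub' (fun i => u (t i)) n
    have habs2 : |(f (t 0) - f (t n)) - (g (t 0) - g (t n))|
        ≤ ε' * (u (t 0) - u (t n)) := by
      rw [← sumf, ← sumg, ← sumu, ← Finset.sum_sub_distrib]
      refine le_trans (Finset.abs_sum_le_sum_abs _ _) ?_
      rw [Finset.mul_sum]
      exact Finset.sum_le_sum (fun i hi => key i (Finset.mem_range.1 hi))
    rw [ht0, htn] at habs2
    refine le_trans habs2 ?_
    rw [hε'def, div_mul_eq_mul_div, div_le_iff₀ (by linarith : (0:ℝ) < u a - u b + 1)]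
    nlinarith
  have h0 : |(f a - f b) - (g a - g b)| ≤ 0 := by
    by_contra h
    push_neg at h
    have := habs (|(f a - f b) - (g a - g b)|/2) (by linarith)
    linarith
  have := abs_nonneg ((f a - f b) - (g a - g b))
  have : (f a - f b) - (g a - g b) = 0 := by
    rw [← abs_eq_zero]; linarith
  linarith

lemma powsand {lam mu : ℝ} (hl : 0 < lam) (hm : 0 < mu) {s t : ℝ} (hs : 0 ≤ s) (hst : s ≤ t) :
    (t^lam - s^lam) * s^mu ≤ (lam/(lam+mu)) * (t^(lam+mu) - s^(lam+mu)) ∧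
    (lam/(lam+mu)) * (t^(lam+mu) - s^(lam+mu)) ≤ (t^lam - s^lam) * t^mu := by
  have hlm : 0 < lam + mu := by linarith
  have c1 : ContinuousOn (fun r:ℝ => r ^ (lam+mu)) (Set.Icc s t) :=
    fun x _ => (Real.continuousAt_rpow_const x _ (Or.inr hlm.le)).continuousWithinAt
  have c2 : ContinuousOn (fun r:ℝ => r ^ lam) (Set.Icc s t) :=
    fun x _ => (Real.continuousAt_rpow_const x _ (Or.inr hl.le)).continuousWithinAt
  constructor
  · -- lower bound: via monotone φ
    set φ : ℝ → ℝ := fun r => lam * (r^(lam+mu) - s^(lam+mu)) - (lam+mu) * ((r^lam - s^lam) * s^mu) with hφdef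
    have hmono : MonotoneOn φ (Set.Icc s t) := by
      apply monotoneOn_of_deriv_nonneg (convex_Icc s t)
      · exact (continuousOn_const.mul (c1.sub continuousOn_const)).sub
          (continuousOn_const.mul ((c2.sub continuousOn_const).mul continuousOn_const))
      · intro r hr
        rw [interior_Icc] at hr
        have hr0 : 0 < r := lt_of_le_of_lt hs hr.1
        exact (((((Real.hasDerivAt_rpow_const (p := lam+mu) (Or.inl hr0.ne')).sub_const _).const_mul lam).sub
          ((((Real.hasDerivAt_rpow_const (p := lam) (Or.inl hr0.ne')).sub_const _).mul_const (s^mu)).const_mul (lam+mu)))).differentiableAt.differentiableWithinAt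
      · intro r hr
        rw [interior_Icc] at hr
        have hr0 : 0 < r := lt_of_le_of_lt hs hr.1
        have hD : HasDerivAt φ (lam * ((lam+mu) * r^(lam+mu-1)) - (lam+mu) * ((lam * r^(lam-1)) * s^mu)) r :=
          ((((Real.hasDerivAt_rpow_const (p := lam+mu) (Or.inl hr0.ne')).sub_const _).const_mul lam).sub
          ((((Real.hasDerivAt_rpow_const (p := lam) (Or.inl hr0.ne')).sub_const _).mul_const (s^mu)).const_mul (lam+mu)))
        rw [hD.deriv]
        have hsplit : r^(lam+mu-1) = r^(lam-1) * r^mu := by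
          rw [show lam+mu-1 = (lam-1)+mu by ring, Real.rpow_add hr0]
        have hle : s^mu ≤ r^mu := Real.rpow_le_rpow hs hr.1.le hm.le
        have hnn : (0:ℝ) ≤ r^(lam-1) := Real.rpow_nonneg hr0.le _
        rw [hsplit]
        have key : lam * (lam+mu) * (r^(lam-1) * s^mu) ≤ lam * (lam+mu) * (r^(lam-1) * r^mu) :=
          mul_le_mul_of_nonneg_left (mul_le_mul_of_nonneg_left hle hnn) (by positivity)
        nlinarith [key]
    have h0 : φ s ≤ φ t := hmono (Set.left_mem_Icc.2 hst) (Set.right_mem_Icc.2 hst) hst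
    have hφs : φ s = 0 := by simp [hφdef]
    rw [hφs] at h0
    rw [div_mul_eq_mul_div, le_div_iff₀ hlm]
    simp only [hφdef] at h0
    nlinarith
  · -- upper bound: via antitone ψ
    set ψ : ℝ → ℝ := fun r => (lam+mu) * ((t^lam - r^lam) * t^mu) - lam * (t^(lam+mu) - r^(lam+mu)) with hψdef
    have hmono : AntitoneOn ψ (Set.Icc s t) := by
      apply antitoneOn_of_deriv_nonpos (convex_Icc s t)
      · exact (continuousOn_const.mul ((continuousOn_const.sub c2).mul continuousOn_const)).sub
          (continuousOn_const.mul (continuousOn_const.sub c1))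
      · intro r hr
        rw [interior_Icc] at hr
        have hr0 : 0 < r := lt_of_le_of_lt hs hr.1
        exact (((((Real.hasDerivAt_rpow_const (p := lam) (Or.inl hr0.ne')).const_sub _).mul_const (t^mu)).const_mul (lam+mu)).sub
          (((Real.hasDerivAt_rpow_const (p := lam+mu) (Or.inl hr0.ne')).const_sub _).const_mul lam)).differentiableAt.differentiableWithinAt
      · intro r hr
        rw [interior_Icc] at hr
        have hr0 : 0 < r := lt_of_le_of_lt hs hr.1
        have hD : HasDerivAt ψ ((lam+mu) * ((-(lam * r^(lam-1))) * t^mu) - lam * (-((lam+mu) * r^(lam+mu-1)))) r :=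
          ((((Real.hasDerivAt_rpow_const (p := lam) (Or.inl hr0.ne')).const_sub _).mul_const (t^mu)).const_mul (lam+mu)).sub
          (((Real.hasDerivAt_rpow_const (p := lam+mu) (Or.inl hr0.ne')).const_sub _).const_mul lam)
        rw [hD.deriv]
        have hsplit : r^(lam+mu-1) = r^(lam-1) * r^mu := by
          rw [show lam+mu-1 = (lam-1)+mu by ring, Real.rpow_add hr0]
        have hle : r^mu ≤ t^mu := Real.rpow_le_rpow hr0.le hr.2.le hm.le
        have hnn : (0:ℝ) ≤ r^(lam-1) := Real.rpow_nonneg hr0.le _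
        rw [hsplit]
        have key : lam * (lam+mu) * (r^(lam-1) * r^mu) ≤ lam * (lam+mu) * (r^(lam-1) * t^mu) :=
          mul_le_mul_of_nonneg_left (mul_le_mul_of_nonneg_left hle hnn) (by positivity)
        nlinarith [key]
    have h0 : ψ t ≤ ψ s := hmono (Set.left_mem_Icc.2 hst) (Set.right_mem_Icc.2 hst) hst
    have hψt : ψ t = 0 := by simp [hψdef]
    rw [hψt] at h0
    rw [div_mul_eq_mul_div, div_le_iff₀ hlm]
    simp only [hψdef] at h0
    nlinarith

-- measure of Ioc (t - 1/(n+1)) t tends to measure of {t}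
lemma Ioc_left_tendsto (μ : Measure ℝ) [IsProbabilityMeasure μ] (t : ℝ) :
    Tendsto (fun n : ℕ => (μ (Set.Ioc (t - 1/(n+1)) t)).toReal) atTop
      (𝓝 ((μ {t}).toReal)) := by
  have hint : (⋂ n : ℕ, Set.Ioc (t - 1/(n+1)) t) = {t} := by
    ext x
    simp only [Set.mem_iInter, Set.mem_Ioc, Set.mem_singleton_iff]
    constructor
    · intro h
      have hxle : x ≤ t := (h 0).2
      rcases eq_or_lt_of_le hxle with h1 | h1
      · exact h1
      · exfalso
        obtain ⟨n, hn⟩ := exists_nat_one_div_lt (show (0:ℝ) < t - x by linarith)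
        have := (h n).1
        push_cast at this hn
        linarith
    · rintro rfl
      intro n
      have : (0:ℝ) < 1/(n+1) := by positivity
      constructor <;> linarith
  have hmono : Antitone (fun n : ℕ => Set.Ioc (t - 1/(n+1)) t) := by
    intro m n hmn
    apply Set.Ioc_subset_Ioc_left
    have h1 : (1:ℝ)/(n+1) ≤ 1/(m+1) := by
      apply div_le_div_of_nonneg_left one_pos.le (by positivity)
      exact_mod_cast Nat.succ_le_succ hmn
    linarith
  have h := tendsto_measure_iInter_atTop (μ := μ) (s := fun n : ℕ => Set.Ioc (t - 1/(n+1)) t)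
    (fun n => measurableSet_Ioc.nullMeasurableSet)
    hmono ⟨0, measure_ne_top μ _⟩
  rw [hint] at h
  exact (ENNReal.tendsto_toReal (measure_ne_top μ _)).comp h

lemma Ioc_right_tendsto (μ : Measure ℝ) [IsProbabilityMeasure μ] (t : ℝ) :
    Tendsto (fun n : ℕ => (μ (Set.Ioc t (t + 1/(n+1)))).toReal) atTop (𝓝 0) := by
  have hint : (⋂ n : ℕ, Set.Ioc t (t + 1/(n+1))) = ∅ := by
    ext x
    simp only [Set.mem_iInter, Set.mem_Ioc, Set.mem_empty_iff_false, iff_false]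
    intro h
    obtain ⟨n, hn⟩ := exists_nat_one_div_lt (show (0:ℝ) < x - t by linarith [(h 0).1, (h 0).2])
    have := (h n).2
    linarith [(h n).1]
  have hmono : Antitone (fun n : ℕ => Set.Ioc t (t + 1/(n+1))) := by
    intro m n hmn
    apply Set.Ioc_subset_Ioc_right
    have h1 : (1:ℝ)/(n+1) ≤ 1/(m+1) := by
      apply div_le_div_of_nonneg_left one_pos.le (by positivity)
      exact_mod_cast Nat.succ_le_succ hmn
    linarith
  have h := tendsto_measure_iInter_atTop (μ := μ) (s := fun n : ℕ => Set.Ioc t (t + 1/(n+1)))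
    (fun n => measurableSet_Ioc.nullMeasurableSet)
    hmono ⟨0, measure_ne_top μ _⟩
  rw [hint] at h
  simpa [Function.comp_def] using (ENNReal.tendsto_toReal (by simp : μ (∅:Set ℝ) ≠ ⊤)).comp h

lemma antitone_continuousAt {f : ℝ → ℝ} (hf : Antitone f) {t : ℝ}
    (hl : ∀ ε > 0, ∃ s < t, f s - f t < ε) (hr : ∀ ε > 0, ∃ r > t, f t - f r < ε) :
    ContinuousAt f t := by
  rw [ContinuousAt, Metric.tendsto_nhds]
  intro ε hε
  obtain ⟨s, hst, hs⟩ := hl ε hε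
  obtain ⟨r, htr, hrb⟩ := hr ε hε
  filter_upwards [Ioo_mem_nhds hst htr] with x hx
  rw [Real.dist_eq, abs_lt]
  have h1 : f x ≤ f s := hf hx.1.le
  have h2 : f r ≤ f x := hf hx.2.le
  have h3 : f x ≤ f s := hf hx.1.le
  constructor <;> nlinarith [hf hst.le, hf htr.le]

lemma surv_compl (μ : Measure ℝ) [IsProbabilityMeasure μ] (x : ℝ) :
    (μ (Set.Iic x)).toReal + (μ (Set.Ioi x)).toReal = 1 := by
  have h := measure_add_measure_compl (μ := μ) (measurableSet_Iic (a := x))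
  rw [Set.compl_Iic] at h
  rw [← ENNReal.toReal_add (measure_ne_top μ _) (measure_ne_top μ _), h, measure_univ,
    ENNReal.toReal_one]

lemma surv_diff (μ : Measure ℝ) [IsProbabilityMeasure μ] {x y : ℝ} (h : x ≤ y) :
    (μ (Set.Ioi x)).toReal - (μ (Set.Ioi y)).toReal = (μ (Set.Ioc x y)).toReal := by
  have hdisj : Disjoint (Set.Ioc x y) (Set.Ioi y) := by
    rw [Set.disjoint_left]
    intro a ha hb
    rw [Set.mem_Ioc] at ha
    rw [Set.mem_Ioi] at hb
    linarith
  have hu : Set.Ioc x y ∪ Set.Ioi y = Set.Ioi x := Set.Ioc_union_Ioi_eq_Ioi h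
  have := measure_union hdisj measurableSet_Ioi (μ := μ)
  rw [hu] at this
  rw [this, ENNReal.toReal_add (measure_ne_top μ _) (measure_ne_top μ _)]
  ring

lemma surv_anti (μ : Measure ℝ) [IsProbabilityMeasure μ] :
    Antitone (fun x => (μ (Set.Ioi x)).toReal) := by
  intro x y hxy
  exact ENNReal.toReal_mono (measure_ne_top μ _) (measure_mono (Set.Ioi_subset_Ioi hxy))

lemma surv_le_one (μ : Measure ℝ) [IsProbabilityMeasure μ] (x : ℝ) :
    (μ (Set.Ioi x)).toReal ≤ 1 := by
  have := surv_compl μ x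
  have h0 : 0 ≤ (μ (Set.Iic x)).toReal := ENNReal.toReal_nonneg
  linarith

lemma surv_tendsto_atTop (μ : Measure ℝ) [IsProbabilityMeasure μ] :
    Tendsto (fun x => (μ (Set.Ioi x)).toReal) atTop (𝓝 0) := by
  have h1 : Tendsto (fun x => (μ (Set.Iic x)).toReal) atTop (𝓝 1) := by
    have h := tendsto_measure_Iic_atTop (μ := μ)
    rw [measure_univ] at h
    have := (ENNReal.tendsto_toReal (by simp : (1:ENNReal) ≠ ⊤)).comp h
    simpa [Function.comp_def] using this
  have heq : (fun x => (μ (Set.Ioi x)).toReal) = fun x => 1 - (μ (Set.Iic x)).toReal := by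
    funext x; linarith [surv_compl μ x]
  rw [heq]
  have := tendsto_const_nhds (α := ℝ) (x := (1:ℝ)) (f := atTop (α := ℝ)) |>.sub h1
  simpa using this

lemma surv_tendsto_atBot (μ : Measure ℝ) [IsProbabilityMeasure μ] :
    Tendsto (fun x => (μ (Set.Ioi x)).toReal) atBot (𝓝 1) := by
  have h1 : Tendsto (fun x : ℝ => (μ (Set.Ici x)).toReal) atBot (𝓝 1) := by
    have h := tendsto_measure_Ici_atBot (μ := μ)
    rw [measure_univ] at h
    have := (ENNReal.tendsto_toReal (by simp : (1:ENNReal) ≠ ⊤)).comp h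
    simpa [Function.comp_def] using this
  have h2 : Tendsto (fun x : ℝ => (μ (Set.Ici (x+1))).toReal) atBot (𝓝 1) :=
    h1.comp (tendsto_atBot_add_const_right atBot 1 tendsto_id)
  apply tendsto_of_tendsto_of_tendsto_of_le_of_le h2 tendsto_const_nhds
  · intro x
    exact ENNReal.toReal_mono (measure_ne_top μ _) (measure_mono (fun a ha => lt_of_lt_of_le (by linarith : x < x+1) ha))
  · exact fun x => surv_le_one μ x

/-- Main theorem: min(X,Y) is independent of {Y > X} iff the survival functions of X and Y
are powers of a common continuous survival function. -/
theorem stmt9 {Ω : Type*} [MeasurableSpace Ω] (P : Measure Ω) [IsProbabilityMeasure P]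
    (X Y : Ω → ℝ) (hX : Measurable X) (hY : Measurable Y)
    (hind : IndepFun X Y P) (hXY : P {ω | X ω = Y ω} = 0)
    (hp0 : 0 < (P {ω | X ω < Y ω}).toReal) (hp1 : (P {ω | X ω < Y ω}).toReal < 1) :
    (∀ x : ℝ, (P ({ω | x < min (X ω) (Y ω)} ∩ {ω | X ω < Y ω})).toReal
        = (P {ω | x < min (X ω) (Y ω)}).toReal * (P {ω | X ω < Y ω}).toReal)
    ↔ ∃ F : ℝ → ℝ, Continuous F ∧ Monotone F
        ∧ Tendsto F atBot (nhds 0) ∧ Tendsto F atTop (nhds 1)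
        ∧ ∃ lam > (0:ℝ), ∃ mu > (0:ℝ),
          (∀ x : ℝ, 1 - (P {ω | X ω ≤ x}).toReal = (1 - F x) ^ lam)
          ∧ (∀ x : ℝ, 1 - (P {ω | Y ω ≤ x}).toReal = (1 - F x) ^ mu) := by
  classical
  set E : Set Ω := {ω | X ω < Y ω} with hEdef
  have hEm : MeasurableSet E := measurableSet_lt hX hY
  set E' : Set Ω := {ω | Y ω < X ω} with hE'def
  have hE'm : MeasurableSet E' := measurableSet_lt hY hX
  set μ : Measure ℝ := P.map X with hμdef
  set ν : Measure ℝ := P.map Y with hνdef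
  haveI : IsProbabilityMeasure μ := Measure.isProbabilityMeasure_map hX.aemeasurable
  haveI : IsProbabilityMeasure ν := Measure.isProbabilityMeasure_map hY.aemeasurable
  set u : ℝ → ℝ := fun x => (μ (Set.Ioi x)).toReal with hudef
  set v : ℝ → ℝ := fun x => (ν (Set.Ioi x)).toReal with hvdef
  set p : ℝ := (P E).toReal with hpdef
  have hmapX : ∀ s : Set ℝ, MeasurableSet s → μ s = P (X ⁻¹' s) :=
    fun s hs => Measure.map_apply hX hs
  have hmapY : ∀ s : Set ℝ, MeasurableSet s → ν s = P (Y ⁻¹' s) :=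
    fun s hs => Measure.map_apply hY hs
  have hind' : ∀ s t : Set ℝ, MeasurableSet s → MeasurableSet t →
      P (X ⁻¹' s ∩ Y ⁻¹' t) = μ s * ν t := by
    intro s t hs ht
    rw [hind.measure_inter_preimage_eq_mul s t hs ht, hmapX s hs, hmapY t ht]
  have hmin : ∀ x : ℝ, {ω | x < min (X ω) (Y ω)} = X ⁻¹' (Set.Ioi x) ∩ Y ⁻¹' (Set.Ioi x) := by
    intro x
    ext ω
    simp [lt_min_iff]
  have hminE : ∀ x : ℝ, {ω | x < min (X ω) (Y ω)} ∩ E = X ⁻¹' (Set.Ioi x) ∩ E := by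
    intro x
    ext ω
    simp only [Set.mem_inter_iff, Set.mem_setOf_eq, lt_min_iff, hEdef, Set.mem_preimage,
      Set.mem_Ioi]
    constructor
    · rintro ⟨⟨h1, _⟩, h3⟩; exact ⟨h1, h3⟩
    · rintro ⟨h1, h3⟩; exact ⟨⟨h1, lt_trans h1 h3⟩, h3⟩
  have hminE' : ∀ x : ℝ, {ω | x < min (X ω) (Y ω)} ∩ E' = Y ⁻¹' (Set.Ioi x) ∩ E' := by
    intro x
    ext ω
    simp only [Set.mem_inter_iff, Set.mem_setOf_eq, lt_min_iff, hE'def, Set.mem_preimage,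
      Set.mem_Ioi]
    constructor
    · rintro ⟨⟨_, h2⟩, h3⟩; exact ⟨h2, h3⟩
    · rintro ⟨h2, h3⟩; exact ⟨⟨lt_trans h2 h3, h2⟩, h3⟩
  have hminG : ∀ x : ℝ, (P {ω | x < min (X ω) (Y ω)}).toReal = u x * v x := by
    intro x
    rw [hmin x, hind' _ _ measurableSet_Ioi measurableSet_Ioi, ENNReal.toReal_mul]
  set H : ℝ → ℝ := fun x => (P (X ⁻¹' (Set.Ioi x) ∩ E)).toReal with hHdef
  set K : ℝ → ℝ := fun x => (P (Y ⁻¹' (Set.Ioi x) ∩ E')).toReal with hKdef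
  have hHdiff : ∀ x y : ℝ, x ≤ y → H x - H y = (P (X ⁻¹' (Set.Ioc x y) ∩ E)).toReal := by
    intro x y hxy
    have hsplit : X ⁻¹' (Set.Ioi x) ∩ E
        = (X ⁻¹' (Set.Ioc x y) ∩ E) ∪ (X ⁻¹' (Set.Ioi y) ∩ E) := by
      rw [← Set.Ioc_union_Ioi_eq_Ioi hxy, Set.preimage_union, Set.union_inter_distrib_right]
    have hdisj : Disjoint (X ⁻¹' (Set.Ioc x y) ∩ E) (X ⁻¹' (Set.Ioi y) ∩ E) := by
      rw [Set.disjoint_left]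
      rintro ω ⟨h1, _⟩ ⟨h2, _⟩
      rw [Set.mem_preimage, Set.mem_Ioc] at h1
      rw [Set.mem_preimage, Set.mem_Ioi] at h2
      linarith
    have := measure_union (μ := P) hdisj ((hX measurableSet_Ioi).inter hEm)
    rw [← hsplit] at this
    rw [hHdef]
    simp only
    rw [this, ENNReal.toReal_add (measure_ne_top P _) (measure_ne_top P _)]
    ring
  have hKdiff : ∀ x y : ℝ, x ≤ y → K x - K y = (P (Y ⁻¹' (Set.Ioc x y) ∩ E')).toReal := by
    intro x y hxy
    have hsplit : Y ⁻¹' (Set.Ioi x) ∩ E'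
        = (Y ⁻¹' (Set.Ioc x y) ∩ E') ∪ (Y ⁻¹' (Set.Ioi y) ∩ E') := by
      rw [← Set.Ioc_union_Ioi_eq_Ioi hxy, Set.preimage_union, Set.union_inter_distrib_right]
    have hdisj : Disjoint (Y ⁻¹' (Set.Ioc x y) ∩ E') (Y ⁻¹' (Set.Ioi y) ∩ E') := by
      rw [Set.disjoint_left]
      rintro ω ⟨h1, _⟩ ⟨h2, _⟩
      rw [Set.mem_preimage, Set.mem_Ioc] at h1
      rw [Set.mem_preimage, Set.mem_Ioi] at h2
      linarith
    have := measure_union (μ := P) hdisj ((hY measurableSet_Ioi).inter hE'm)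
    rw [← hsplit] at this
    rw [hKdef]
    simp only
    rw [this, ENNReal.toReal_add (measure_ne_top P _) (measure_ne_top P _)]
    ring
  have hudiff : ∀ x y : ℝ, x ≤ y → u x - u y = (μ (Set.Ioc x y)).toReal :=
    fun x y hxy => surv_diff μ hxy
  have hvdiff : ∀ x y : ℝ, x ≤ y → v x - v y = (ν (Set.Ioc x y)).toReal :=
    fun x y hxy => surv_diff ν hxy
  have hHsand : ∀ x y : ℝ, x ≤ y →
      (u x - u y) * v y ≤ H x - H y ∧ H x - H y ≤ (u x - u y) * v x := by
    intro x y hxy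
    rw [hHdiff x y hxy, hudiff x y hxy]
    constructor
    · have hsub : X ⁻¹' (Set.Ioc x y) ∩ Y ⁻¹' (Set.Ioi y) ⊆ X ⁻¹' (Set.Ioc x y) ∩ E := by
        rintro ω ⟨h1, h2⟩
        rw [Set.mem_preimage, Set.mem_Ioc] at h1
        rw [Set.mem_preimage, Set.mem_Ioi] at h2
        exact ⟨h1, by rw [hEdef]; exact lt_of_le_of_lt h1.2 h2⟩
      have h1 := measure_mono (μ := P) hsub
      have h2 := hind' (Set.Ioc x y) (Set.Ioi y) measurableSet_Ioc measurableSet_Ioi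
      rw [h2] at h1
      have := ENNReal.toReal_mono (measure_ne_top P _) h1
      rw [ENNReal.toReal_mul] at this
      exact this
    · have hsub : X ⁻¹' (Set.Ioc x y) ∩ E ⊆ X ⁻¹' (Set.Ioc x y) ∩ Y ⁻¹' (Set.Ioi x) := by
        rintro ω ⟨h1, h2⟩
        rw [Set.mem_preimage, Set.mem_Ioc] at h1
        rw [hEdef, Set.mem_setOf_eq] at h2
        exact ⟨h1, by rw [Set.mem_preimage, Set.mem_Ioi]; linarith [h1.1]⟩
      have h1 := measure_mono (μ := P) hsub
      have h2 := hind' (Set.Ioc x y) (Set.Ioi x) measurableSet_Ioc measurableSet_Ioi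
      rw [h2] at h1
      have := ENNReal.toReal_mono (by finiteness) h1
      rw [ENNReal.toReal_mul] at this
      exact this
  have hKsand : ∀ x y : ℝ, x ≤ y →
      (v x - v y) * u y ≤ K x - K y ∧ K x - K y ≤ (v x - v y) * u x := by
    intro x y hxy
    rw [hKdiff x y hxy, hvdiff x y hxy]
    constructor
    · have hsub : X ⁻¹' (Set.Ioi y) ∩ Y ⁻¹' (Set.Ioc x y) ⊆ Y ⁻¹' (Set.Ioc x y) ∩ E' := by
        rintro ω ⟨h2, h1⟩
        rw [Set.mem_preimage, Set.mem_Ioc] at h1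
        rw [Set.mem_preimage, Set.mem_Ioi] at h2
        exact ⟨h1, by rw [hE'def]; exact lt_of_le_of_lt h1.2 h2⟩
      have h1 := measure_mono (μ := P) hsub
      have h2 := hind' (Set.Ioi y) (Set.Ioc x y) measurableSet_Ioi measurableSet_Ioc
      rw [h2] at h1
      have := ENNReal.toReal_mono (measure_ne_top P _) h1
      rw [ENNReal.toReal_mul] at this
      linarith [this]
    · have hsub : Y ⁻¹' (Set.Ioc x y) ∩ E' ⊆ X ⁻¹' (Set.Ioi x) ∩ Y ⁻¹' (Set.Ioc x y) := by
        rintro ω ⟨h1, h2⟩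
        rw [Set.mem_preimage, Set.mem_Ioc] at h1
        rw [hE'def, Set.mem_setOf_eq] at h2
        exact ⟨by rw [Set.mem_preimage, Set.mem_Ioi]; linarith [h1.1], h1⟩
      have h1 := measure_mono (μ := P) hsub
      have h2 := hind' (Set.Ioi x) (Set.Ioc x y) measurableSet_Ioi measurableSet_Ioc
      rw [h2] at h1
      have := ENNReal.toReal_mono (by finiteness) h1
      rw [ENNReal.toReal_mul] at this
      linarith [this]
  have hGHK : ∀ x : ℝ, u x * v x = H x + K x := by
    intro x
    have h1 := measure_inter_add_diff (μ := P) {ω | x < min (X ω) (Y ω)} hEm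
    have h2 : {ω | x < min (X ω) (Y ω)} \ E
        = ({ω | x < min (X ω) (Y ω)} ∩ E') ∪ ({ω | x < min (X ω) (Y ω)} ∩ {ω | X ω = Y ω}) := by
      ext ω
      simp only [Set.mem_diff, Set.mem_inter_iff, Set.mem_union, hEdef, hE'def,
        Set.mem_setOf_eq]
      constructor
      · rintro ⟨hM, hne⟩
        rcases lt_trichotomy (X ω) (Y ω) with hh | hh | hh
        · exact absurd hh hne
        · exact Or.inr ⟨hM, hh⟩
        · exact Or.inl ⟨hM, hh⟩
      · rintro (⟨hM, hh⟩ | ⟨hM, hh⟩)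
        · exact ⟨hM, by intro hc; exact absurd hc (not_lt.2 hh.le)⟩
        · exact ⟨hM, by intro hc; rw [hh] at hc; exact lt_irrefl _ hc⟩
    have h3 : P ({ω | x < min (X ω) (Y ω)} \ E) = P ({ω | x < min (X ω) (Y ω)} ∩ E') := by
      rw [h2]
      apply le_antisymm
      · refine le_trans (measure_union_le _ _) ?_
        rw [measure_mono_null Set.inter_subset_right hXY, add_zero]
      · exact measure_mono Set.subset_union_left
    have h4 : (P {ω | x < min (X ω) (Y ω)}).toReal
        = (P ({ω | x < min (X ω) (Y ω)} ∩ E)).toReal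
          + (P ({ω | x < min (X ω) (Y ω)} ∩ E')).toReal := by
      rw [← h1, h3, ENNReal.toReal_add (measure_ne_top P _) (measure_ne_top P _)]
    rw [hminG x, hminE x, hminE' x] at h4
    exact h4
  have hu_anti : Antitone u := surv_anti μ
  have hv_anti : Antitone v := surv_anti ν
  have hu_nonneg : ∀ x, 0 ≤ u x := fun x => ENNReal.toReal_nonneg
  have hv_nonneg : ∀ x, 0 ≤ v x := fun x => ENNReal.toReal_nonneg
  have hu_le1 : ∀ x, u x ≤ 1 := fun x => surv_le_one μ x
  have hv_le1 : ∀ x, v x ≤ 1 := fun x => surv_le_one ν x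
  have hu_top : Tendsto u atTop (𝓝 0) := surv_tendsto_atTop μ
  have hv_top : Tendsto v atTop (𝓝 0) := surv_tendsto_atTop ν
  have hu_bot : Tendsto u atBot (𝓝 1) := surv_tendsto_atBot μ
  have hv_bot : Tendsto v atBot (𝓝 1) := surv_tendsto_atBot ν
  have hHleu : ∀ x, H x ≤ u x := by
    intro x
    rw [hHdef, hudef]
    simp only
    rw [hmapX _ measurableSet_Ioi]
    exact ENNReal.toReal_mono (measure_ne_top P _) (measure_mono Set.inter_subset_left)
  have hPXle : ∀ x : ℝ, (P {ω | X ω ≤ x}).toReal = 1 - u x := by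
    intro x
    have h1 : {ω | X ω ≤ x} = X ⁻¹' (Set.Iic x) := rfl
    rw [h1, ← hmapX _ measurableSet_Iic]
    linarith [surv_compl μ x]
  have hPYle : ∀ x : ℝ, (P {ω | Y ω ≤ x}).toReal = 1 - v x := by
    intro x
    have h1 : {ω | Y ω ≤ x} = Y ⁻¹' (Set.Iic x) := rfl
    rw [h1, ← hmapY _ measurableSet_Iic]
    linarith [surv_compl ν x]
  constructor
  · intro h
    have hH : ∀ x : ℝ, H x = (u x * v x) * p := by
      intro x
      have hx := h x
      rw [hminE x, hminG x] at hx
      exact hx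
    have hK : ∀ x : ℝ, K x = (u x * v x) * (1 - p) := by
      intro x
      have h1 := hGHK x
      have h2 := hH x
      linarith
    have hG_anti : ∀ x y : ℝ, x ≤ y → u y * v y ≤ u x * v x := fun x y hxy =>
      mul_le_mul (hu_anti hxy) (hv_anti hxy) (hv_nonneg y) (hu_nonneg x)
    have I1 : ∀ x y : ℝ, x ≤ y → (1-p) * ((u x - u y) * v y) ≤ p * ((v x - v y) * u x) := by
      intro x y hxy
      have hΔH : H x - H y = (u x * v x - u y * v y) * p := by rw [hH x, hH y]; ring
      have hΔK : K x - K y = (u x * v x - u y * v y) * (1-p) := by rw [hK x, hK y]; ring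
      have h1 := (hHsand x y hxy).1
      have h2 := (hKsand x y hxy).2
      rw [hΔH] at h1
      rw [hΔK] at h2
      have e1 : (1-p) * ((u x - u y) * v y) ≤ (1-p) * ((u x * v x - u y * v y) * p) :=
        mul_le_mul_of_nonneg_left h1 (by linarith)
      have e2 : p * ((u x * v x - u y * v y) * (1-p)) ≤ p * ((v x - v y) * u x) :=
        mul_le_mul_of_nonneg_left h2 hp0.le
      nlinarith [e1, e2]
    have I2 : ∀ x y : ℝ, x ≤ y → p * ((v x - v y) * u y) ≤ (1-p) * ((u x - u y) * v x) := by
      intro x y hxy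
      have hΔH : H x - H y = (u x * v x - u y * v y) * p := by rw [hH x, hH y]; ring
      have hΔK : K x - K y = (u x * v x - u y * v y) * (1-p) := by rw [hK x, hK y]; ring
      have h1 := (hKsand x y hxy).1
      have h2 := (hHsand x y hxy).2
      rw [hΔK] at h1
      rw [hΔH] at h2
      have e1 : p * ((v x - v y) * u y) ≤ p * ((u x * v x - u y * v y) * (1-p)) :=
        mul_le_mul_of_nonneg_left h1 hp0.le
      have e2 : (1-p) * ((u x * v x - u y * v y) * p) ≤ (1-p) * ((u x - u y) * v x) :=
        mul_le_mul_of_nonneg_left h2 (by linarith)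
      nlinarith [e1, e2]
    have hdich : ∀ t : ℝ, μ {t} = 0 ∨ ν {t} = 0 := by
      intro t
      have hsub : X ⁻¹' {t} ∩ Y ⁻¹' {t} ⊆ {ω | X ω = Y ω} := by
        rintro ω ⟨h1, h2⟩
        rw [Set.mem_preimage, Set.mem_singleton_iff] at h1 h2
        rw [Set.mem_setOf_eq, h1, h2]
      have h0 : P (X ⁻¹' {t} ∩ Y ⁻¹' {t}) = 0 := measure_mono_null hsub hXY
      rw [hind' {t} {t} (measurableSet_singleton t) (measurableSet_singleton t)] at h0
      exact mul_eq_zero.1 h0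
    have hxnle : ∀ (t : ℝ) (n : ℕ), t - 1/((n:ℝ)+1) ≤ t := by
      intro t n
      have : (0:ℝ) < 1/((n:ℝ)+1) := by positivity
      linarith
    have hxnge : ∀ (t : ℝ) (n : ℕ), t ≤ t + 1/((n:ℝ)+1) := by
      intro t n
      have : (0:ℝ) < 1/((n:ℝ)+1) := by positivity
      linarith
    have huL : ∀ t : ℝ, Tendsto (fun n : ℕ => u (t - 1/(n+1))) atTop
        (𝓝 (u t + (μ {t}).toReal)) := by
      intro t
      have hla := Ioc_left_tendsto μ t
      have heq : ∀ n : ℕ, u (t - 1/(n+1)) = u t + (μ (Set.Ioc (t - 1/(n+1)) t)).toReal := by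
        intro n
        have := hudiff (t - 1/(n+1)) t (hxnle t n)
        linarith
      have := (tendsto_const_nhds (x := u t) (f := atTop (α := ℕ))).add hla
      exact this.congr (fun n => (heq n).symm)
    have hvL : ∀ t : ℝ, Tendsto (fun n : ℕ => v (t - 1/(n+1))) atTop
        (𝓝 (v t + (ν {t}).toReal)) := by
      intro t
      have hla := Ioc_left_tendsto ν t
      have heq : ∀ n : ℕ, v (t - 1/(n+1)) = v t + (ν (Set.Ioc (t - 1/(n+1)) t)).toReal := by
        intro n
        have := hvdiff (t - 1/(n+1)) t (hxnle t n)
        linarith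
      have := (tendsto_const_nhds (x := v t) (f := atTop (α := ℕ))).add hla
      exact this.congr (fun n => (heq n).symm)
    have huR : ∀ t : ℝ, Tendsto (fun n : ℕ => u (t + 1/(n+1))) atTop (𝓝 (u t)) := by
      intro t
      have hla := Ioc_right_tendsto μ t
      have heq : ∀ n : ℕ, u (t + 1/(n+1)) = u t - (μ (Set.Ioc t (t + 1/(n+1)))).toReal := by
        intro n
        have := hudiff t (t + 1/(n+1)) (hxnge t n)
        linarith
      have h2 := (tendsto_const_nhds (x := u t) (f := atTop (α := ℕ))).sub hla
      rw [sub_zero] at h2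
      exact h2.congr (fun n => (heq n).symm)
    have hvR : ∀ t : ℝ, Tendsto (fun n : ℕ => v (t + 1/(n+1))) atTop (𝓝 (v t)) := by
      intro t
      have hla := Ioc_right_tendsto ν t
      have heq : ∀ n : ℕ, v (t + 1/(n+1)) = v t - (ν (Set.Ioc t (t + 1/(n+1)))).toReal := by
        intro n
        have := hvdiff t (t + 1/(n+1)) (hxnge t n)
        linarith
      have h2 := (tendsto_const_nhds (x := v t) (f := atTop (α := ℕ))).sub hla
      rw [sub_zero] at h2
      exact h2.congr (fun n => (heq n).symm)
    have hcont : ∀ t : ℝ, 0 < u t * v t → ContinuousAt u t ∧ ContinuousAt v t := by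
      intro t hGt
      have hut : 0 < u t := by
        rcases mul_pos_iff.1 hGt with ⟨h1, _⟩ | ⟨h1, _⟩
        · exact h1
        · linarith [hu_nonneg t]
      have hvt : 0 < v t := by
        rcases mul_pos_iff.1 hGt with ⟨_, h2⟩ | ⟨_, h2⟩
        · exact h2
        · linarith [hv_nonneg t]
      have hatomu : (μ {t}).toReal = 0 := by
        by_contra hne
        have hc : 0 < (μ {t}).toReal := lt_of_le_of_ne ENNReal.toReal_nonneg (Ne.symm hne)
        have hν : (ν {t}).toReal = 0 := by
          rcases hdich t with hh | hh
          · rw [hh] at hc; simp at hc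
          · rw [hh]; simp
        have lA : Tendsto (fun n : ℕ => (1-p) * ((u (t - 1/(n+1)) - u t) * v t)) atTop
            (𝓝 ((1-p) * ((μ {t}).toReal * v t))) := by
          have h1 : Tendsto (fun n : ℕ => u (t - 1/(n+1)) - u t) atTop (𝓝 ((μ {t}).toReal)) := by
            have := (huL t).sub_const (u t)
            simpa using this
          exact tendsto_const_nhds.mul (h1.mul tendsto_const_nhds)
        have lB : Tendsto (fun n : ℕ => p * ((v (t - 1/(n+1)) - v t) * u (t - 1/(n+1)))) atTop
            (𝓝 (p * (0 * (u t + (μ {t}).toReal)))) := by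
          have h1 : Tendsto (fun n : ℕ => v (t - 1/(n+1)) - v t) atTop (𝓝 0) := by
            have := (hvL t).sub_const (v t)
            rw [hν] at this
            simpa using this
          exact tendsto_const_nhds.mul (h1.mul (huL t))
        have hle := le_of_tendsto_of_tendsto' lA lB (fun n => I1 _ t (hxnle t n))
        rw [zero_mul, mul_zero] at hle
        nlinarith [hle, mul_pos (show (0:ℝ) < 1 - p by linarith) (mul_pos hc hvt)]
      have hatomv : (ν {t}).toReal = 0 := by
        by_contra hne
        have hc : 0 < (ν {t}).toReal := lt_of_le_of_ne ENNReal.toReal_nonneg (Ne.symm hne)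
        have hμ : (μ {t}).toReal = 0 := by
          rcases hdich t with hh | hh
          · rw [hh]; simp
          · rw [hh] at hc; simp at hc
        have lB : Tendsto (fun n : ℕ => p * ((v (t - 1/(n+1)) - v t) * u t)) atTop
            (𝓝 (p * ((ν {t}).toReal * u t))) := by
          have h1 : Tendsto (fun n : ℕ => v (t - 1/(n+1)) - v t) atTop (𝓝 ((ν {t}).toReal)) := by
            have := (hvL t).sub_const (v t)
            simpa using this
          exact tendsto_const_nhds.mul (h1.mul tendsto_const_nhds)
        have lA : Tendsto (fun n : ℕ => (1-p) * ((u (t - 1/(n+1)) - u t) * v (t - 1/(n+1)))) atTop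
            (𝓝 ((1-p) * (0 * (v t + (ν {t}).toReal)))) := by
          have h1 : Tendsto (fun n : ℕ => u (t - 1/(n+1)) - u t) atTop (𝓝 0) := by
            have := (huL t).sub_const (u t)
            rw [hμ] at this
            simpa using this
          exact tendsto_const_nhds.mul (h1.mul (hvL t))
        have hle := le_of_tendsto_of_tendsto' lB lA (fun n => I2 _ t (hxnle t n))
        rw [zero_mul, mul_zero] at hle
        nlinarith [hle, mul_pos hp0 (mul_pos hc hut)]
      constructor
      · apply antitone_continuousAt hu_anti
        · intro ε hε
          have l' : Tendsto (fun n : ℕ => u (t - 1/(n+1))) atTop (𝓝 (u t)) := by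
            have := huL t
            rw [hatomu, add_zero] at this
            exact this
          obtain ⟨n, hn⟩ := (l'.eventually_lt_const (lt_add_of_pos_right (u t) hε)).exists
          refine ⟨t - 1/(n+1), sub_lt_self t (by positivity), by linarith⟩
        · intro ε hε
          obtain ⟨n, hn⟩ := ((huR t).eventually_const_lt (by linarith : u t - ε < u t)).exists
          refine ⟨t + 1/(n+1), lt_add_of_pos_right t (by positivity), by linarith⟩
      · apply antitone_continuousAt hv_anti
        · intro ε hε
          have l' : Tendsto (fun n : ℕ => v (t - 1/(n+1))) atTop (𝓝 (v t)) := by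
            have := hvL t
            rw [hatomv, add_zero] at this
            exact this
          obtain ⟨n, hn⟩ := (l'.eventually_lt_const (lt_add_of_pos_right (v t) hε)).exists
          refine ⟨t - 1/(n+1), sub_lt_self t (by positivity), by linarith⟩
        · intro ε hε
          obtain ⟨n, hn⟩ := ((hvR t).eventually_const_lt (by linarith : v t - ε < v t)).exists
          refine ⟨t + 1/(n+1), lt_add_of_pos_right t (by positivity), by linarith⟩
    have hkey2 : ∀ b : ℝ, 0 < u b * v b →
        u b = (u b * v b) ^ p ∧ v b = (u b * v b) ^ (1-p) := by
      intro b hGb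
      have hub : 0 < u b := by
        rcases mul_pos_iff.1 hGb with ⟨h1, _⟩ | ⟨h1, _⟩
        · exact h1
        · linarith [hu_nonneg b]
      have hvb : 0 < v b := by
        rcases mul_pos_iff.1 hGb with ⟨_, h2⟩ | ⟨_, h2⟩
        · exact h2
        · linarith [hv_nonneg b]
      have hweq : ∀ a : ℝ, a ≤ b →
          (1-p) * (Real.log (u a) - Real.log (u b)) = p * (Real.log (v a) - Real.log (v b)) := by
        intro a hab
        have hGpos : ∀ tt, tt ∈ Set.Icc a b → 0 < u tt * v tt :=
          fun tt htt => lt_of_lt_of_le hGb (hG_anti tt b htt.2)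
        have hcontU : ContinuousOn u (Set.Icc a b) :=
          fun tt htt => ((hcont tt (hGpos tt htt)).1).continuousWithinAt
        have hcontV : ContinuousOn v (Set.Icc a b) :=
          fun tt htt => ((hcont tt (hGpos tt htt)).2).continuousWithinAt
        exact le_antisymm
          (logsum_le (by linarith) hp0 hab hu_anti hv_anti hub hvb hcontU hcontV I1)
          (logsum_le hp0 (by linarith) hab hv_anti hu_anti hvb hub hcontV hcontU I2)
      have hw0 : Tendsto (fun a => (1-p) * Real.log (u a) - p * Real.log (v a)) atBot (𝓝 0) := by
        have hlu : Tendsto (fun a => Real.log (u a)) atBot (𝓝 0) := by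
          have := (Real.continuousAt_log one_ne_zero).tendsto.comp hu_bot
          simpa [Real.log_one, Function.comp_def] using this
        have hlv : Tendsto (fun a => Real.log (v a)) atBot (𝓝 0) := by
          have := (Real.continuousAt_log one_ne_zero).tendsto.comp hv_bot
          simpa [Real.log_one, Function.comp_def] using this
        have := (tendsto_const_nhds (x := (1-p)) (f := atBot (α := ℝ))).mul hlu |>.sub
          ((tendsto_const_nhds (x := p) (f := atBot (α := ℝ))).mul hlv)
        simpa using this
      have hwb : Tendsto (fun a => (1-p) * Real.log (u a) - p * Real.log (v a)) atBot
          (𝓝 ((1-p) * Real.log (u b) - p * Real.log (v b))) := by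
        apply Tendsto.congr' _ (tendsto_const_nhds)
        filter_upwards [eventually_le_atBot b] with a ha
        have := hweq a ha
        ring_nf
        ring_nf at this
        linarith
      have hwzero : (1-p) * Real.log (u b) - p * Real.log (v b) = 0 :=
        (tendsto_nhds_unique hwb hw0).symm ▸ rfl
      have h1 : (1-p) * Real.log (u b) = p * Real.log (v b) := by
        have := tendsto_nhds_unique hwb hw0
        linarith
      have hlog : Real.log (u b * v b) = Real.log (u b) + Real.log (v b) :=
        Real.log_mul hub.ne' hvb.ne'
      constructor
      · have e1 : Real.log (u b) = p * Real.log (u b * v b) := by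
          rw [hlog]
          linear_combination h1
        rw [Real.rpow_def_of_pos hGb, mul_comm (Real.log (u b * v b)) p, ← e1,
          Real.exp_log hub]
      · have e2 : Real.log (v b) = (1-p) * Real.log (u b * v b) := by
          rw [hlog]
          linear_combination -h1
        rw [Real.rpow_def_of_pos hGb, mul_comm (Real.log (u b * v b)) (1-p), ← e2,
          Real.exp_log hvb]
    obtain ⟨hmain, hGcont⟩ : (∀ x : ℝ, u x = (u x * v x) ^ p ∧ v x = (u x * v x) ^ (1-p))
        ∧ Continuous (fun x => u x * v x) := by
      by_cases hall : ∀ x : ℝ, 0 < u x * v x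
      · refine ⟨fun x => hkey2 x (hall x), ?_⟩
        rw [continuous_iff_continuousAt]
        intro t
        exact ((hcont t (hall t)).1).mul ((hcont t (hall t)).2)
      · push_neg at hall
        obtain ⟨x₀, hx₀⟩ := hall
        set S : Set ℝ := {x | 0 < u x * v x} with hSdef
        have hSne : S.Nonempty := by
          have h1 : Tendsto (fun x => u x * v x) atBot (𝓝 (1*1)) := hu_bot.mul hv_bot
          have h2 : ∀ᶠ x in atBot, 0 < u x * v x := h1.eventually_const_lt (by norm_num)
          obtain ⟨x, hx⟩ := h2.exists
          exact ⟨x, hx⟩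
        have hSb : BddAbove S := by
          refine ⟨x₀, fun s hs => ?_⟩
          by_contra hlt
          push_neg at hlt
          exact absurd (lt_of_lt_of_le hs (hG_anti x₀ s hlt.le)) (not_lt.2 hx₀)
        set T : ℝ := sSup S with hTdef
        have hT_lt : ∀ x : ℝ, x < T → 0 < u x * v x := by
          intro x hx
          obtain ⟨s, hsS, hxs⟩ := exists_lt_of_lt_csSup hSne hx
          exact lt_of_lt_of_le hsS (hG_anti x s hxs.le)
        have hGT0 : ∀ x : ℝ, T < x → u x * v x = 0 := by
          intro x hx
          have hnot : x ∉ S := fun hmem => absurd (le_csSup hSb hmem) (not_le.2 hx)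
          have h1 : ¬ 0 < u x * v x := hnot
          exact le_antisymm (not_lt.1 h1) (mul_nonneg (hu_nonneg x) (hv_nonneg x))
        have hGTat : u T * v T = 0 := by
          have l := (huR T).mul (hvR T)
          have l2 := l.congr
            (fun n : ℕ => hGT0 (T + 1/(n+1)) (lt_add_of_pos_right T (by positivity)))
          exact tendsto_nhds_unique l2 tendsto_const_nhds
        have hsn : ∀ n : ℕ, T - 1/((n:ℝ)+1) < T := fun n => sub_lt_self T (by positivity)
        have hGsmall : ∀ ε : ℝ, 0 < ε → ∃ s : ℝ, s < T ∧ u s * v s < ε := by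
          intro ε hε
          by_contra hcon
          push_neg at hcon
          have husv : ∀ s : ℝ, s < T → ε ≤ u s ∧ ε ≤ v s := by
            intro s hs
            have h1 := hcon s hs
            have h2 : u s * v s ≤ u s := by
              calc u s * v s ≤ u s * 1 := mul_le_mul_of_nonneg_left (hv_le1 s) (hu_nonneg s)
                _ = u s := mul_one _
            have h3 : u s * v s ≤ v s := by
              calc u s * v s ≤ 1 * v s := mul_le_mul_of_nonneg_right (hu_le1 s) (hv_nonneg s)
                _ = v s := one_mul _
            exact ⟨le_trans h1 h2, le_trans h1 h3⟩
          rcases mul_eq_zero.1 hGTat with huT0 | hvT0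
          · rcases hdich T with hμ | hν
            · have l' : Tendsto (fun n : ℕ => u (T - 1/(n+1))) atTop (𝓝 (u T)) := by
                have hl := huL T
                rw [hμ] at hl
                simpa using hl
              have hεu : ε ≤ u T :=
                ge_of_tendsto l' (Eventually.of_forall (fun n => (husv _ (hsn n)).1))
              rw [huT0] at hεu
              linarith
            · have hν0 : (ν {T}).toReal = 0 := by rw [hν]; simp
              have hvT : ε ≤ v T := by
                have l' : Tendsto (fun n : ℕ => v (T - 1/(n+1))) atTop (𝓝 (v T)) := by
                  have hl := hvL T
                  rw [hν0, add_zero] at hl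
                  exact hl
                exact ge_of_tendsto l' (Eventually.of_forall (fun n => (husv _ (hsn n)).2))
              have lA : Tendsto (fun n : ℕ => (1-p) * ((u (T - 1/(n+1)) - u T) * v T)) atTop
                  (𝓝 ((1-p) * ((μ {T}).toReal * v T))) := by
                have h1 : Tendsto (fun n : ℕ => u (T - 1/(n+1)) - u T) atTop
                    (𝓝 ((μ {T}).toReal)) := by
                  have hl := (huL T).sub_const (u T)
                  simpa using hl
                exact tendsto_const_nhds.mul (h1.mul tendsto_const_nhds)
              have lB : Tendsto (fun n : ℕ => p * ((v (T - 1/(n+1)) - v T) * u (T - 1/(n+1))))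
                  atTop (𝓝 (p * (0 * (u T + (μ {T}).toReal)))) := by
                have h1 : Tendsto (fun n : ℕ => v (T - 1/(n+1)) - v T) atTop (𝓝 0) := by
                  have hl := (hvL T).sub_const (v T)
                  rw [hν0] at hl
                  simpa using hl
                exact tendsto_const_nhds.mul (h1.mul (huL T))
              have hle := le_of_tendsto_of_tendsto' lA lB (fun n => I1 _ T (hxnle T n))
              rw [zero_mul, mul_zero] at hle
              have hcge : ε ≤ (μ {T}).toReal := by
                have h1 : Tendsto (fun n : ℕ => u (T - 1/(n+1)) - u T) atTop
                    (𝓝 ((μ {T}).toReal)) := by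
                  have hl := (huL T).sub_const (u T)
                  simpa using hl
                apply ge_of_tendsto h1
                apply Eventually.of_forall
                intro n
                have h2 := (husv _ (hsn n)).1
                rw [huT0]
                linarith
              nlinarith [hle, mul_pos (show (0:ℝ) < 1-p by linarith)
                (mul_pos (lt_of_lt_of_le hε hcge) (lt_of_lt_of_le hε hvT))]
          · rcases hdich T with hμ | hν
            · have hμ0 : (μ {T}).toReal = 0 := by rw [hμ]; simp
              have huT : ε ≤ u T := by
                have l' : Tendsto (fun n : ℕ => u (T - 1/(n+1))) atTop (𝓝 (u T)) := by
                  have hl := huL T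
                  rw [hμ0, add_zero] at hl
                  exact hl
                exact ge_of_tendsto l' (Eventually.of_forall (fun n => (husv _ (hsn n)).1))
              have lB : Tendsto (fun n : ℕ => p * ((v (T - 1/(n+1)) - v T) * u T)) atTop
                  (𝓝 (p * ((ν {T}).toReal * u T))) := by
                have h1 : Tendsto (fun n : ℕ => v (T - 1/(n+1)) - v T) atTop
                    (𝓝 ((ν {T}).toReal)) := by
                  have hl := (hvL T).sub_const (v T)
                  simpa using hl
                exact tendsto_const_nhds.mul (h1.mul tendsto_const_nhds)
              have lA : Tendsto (fun n : ℕ => (1-p) * ((u (T - 1/(n+1)) - u T) * v (T - 1/(n+1))))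
                  atTop (𝓝 ((1-p) * (0 * (v T + (ν {T}).toReal)))) := by
                have h1 : Tendsto (fun n : ℕ => u (T - 1/(n+1)) - u T) atTop (𝓝 0) := by
                  have hl := (huL T).sub_const (u T)
                  rw [hμ0] at hl
                  simpa using hl
                exact tendsto_const_nhds.mul (h1.mul (hvL T))
              have hle := le_of_tendsto_of_tendsto' lB lA (fun n => I2 _ T (hxnle T n))
              rw [zero_mul, mul_zero] at hle
              have hdge : ε ≤ (ν {T}).toReal := by
                have h1 : Tendsto (fun n : ℕ => v (T - 1/(n+1)) - v T) atTop
                    (𝓝 ((ν {T}).toReal)) := by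
                  have hl := (hvL T).sub_const (v T)
                  simpa using hl
                apply ge_of_tendsto h1
                apply Eventually.of_forall
                intro n
                have h2 := (husv _ (hsn n)).2
                rw [hvT0]
                linarith
              nlinarith [hle, mul_pos hp0
                (mul_pos (lt_of_lt_of_le hε hdge) (lt_of_lt_of_le hε huT))]
            · have hν0 : (ν {T}).toReal = 0 := by rw [hν]; simp
              have hεv : ε ≤ v T := by
                have l' : Tendsto (fun n : ℕ => v (T - 1/(n+1))) atTop (𝓝 (v T)) := by
                  have hl := hvL T
                  rw [hν0, add_zero] at hl
                  exact hl
                exact ge_of_tendsto l' (Eventually.of_forall (fun n => (husv _ (hsn n)).2))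
              rw [hvT0] at hεv
              linarith
        have hzero : ∀ x : ℝ, ¬ 0 < u x * v x → u x = 0 ∧ v x = 0 := by
          intro x hx
          have hxT : ∀ s : ℝ, s < T → s ≤ x := by
            intro s hs
            by_contra hsx
            push_neg at hsx
            exact hx (lt_of_lt_of_le (hT_lt s hs) (hG_anti x s hsx.le))
          have hux : ∀ ε : ℝ, 0 < ε → u x ≤ ε := by
            intro ε hε
            obtain ⟨s, hsT, hsG⟩ := hGsmall (ε ^ (1/p)) (Real.rpow_pos_of_pos hε _)
            have hus := (hkey2 s (hT_lt s hsT)).1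
            calc u x ≤ u s := hu_anti (hxT s hsT)
              _ = (u s * v s) ^ p := hus
              _ ≤ (ε ^ (1/p)) ^ p :=
                  Real.rpow_le_rpow (mul_nonneg (hu_nonneg s) (hv_nonneg s)) hsG.le hp0.le
              _ = ε := by
                  rw [← Real.rpow_mul hε.le, one_div, inv_mul_cancel₀ (ne_of_gt hp0),
                    Real.rpow_one]
          have hvx : ∀ ε : ℝ, 0 < ε → v x ≤ ε := by
            intro ε hε
            obtain ⟨s, hsT, hsG⟩ := hGsmall (ε ^ (1/(1-p))) (Real.rpow_pos_of_pos hε _)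
            have hvs := (hkey2 s (hT_lt s hsT)).2
            calc v x ≤ v s := hv_anti (hxT s hsT)
              _ = (u s * v s) ^ (1-p) := hvs
              _ ≤ (ε ^ (1/(1-p))) ^ (1-p) :=
                  Real.rpow_le_rpow (mul_nonneg (hu_nonneg s) (hv_nonneg s)) hsG.le (by linarith)
              _ = ε := by
                  rw [← Real.rpow_mul hε.le, one_div,
                    inv_mul_cancel₀ (show (1:ℝ)-p ≠ 0 by linarith), Real.rpow_one]
          constructor
          · refine le_antisymm ?_ (hu_nonneg x)
            by_contra hpos
            push_neg at hpos
            linarith [hux (u x / 2) (by linarith)]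
          · refine le_antisymm ?_ (hv_nonneg x)
            by_contra hpos
            push_neg at hpos
            linarith [hvx (v x / 2) (by linarith)]
        refine ⟨?_, ?_⟩
        · intro x
          by_cases hx : 0 < u x * v x
          · exact hkey2 x hx
          · obtain ⟨h1, h2⟩ := hzero x hx
            rw [h1, h2, mul_zero]
            exact ⟨(Real.zero_rpow (ne_of_gt hp0)).symm,
              (Real.zero_rpow (show (1:ℝ)-p ≠ 0 by linarith)).symm⟩
        · rw [continuous_iff_continuousAt]
          intro t
          by_cases ht : 0 < u t * v t
          · exact ((hcont t ht).1).mul ((hcont t ht).2)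
          · have hGt : u t * v t = 0 := by rw [(hzero t ht).1, zero_mul]
            have hTt : T ≤ t := by
              by_contra hlt
              push_neg at hlt
              exact ht (hT_lt t hlt)
            have htd : Tendsto (fun x => u x * v x) (𝓝 t) (𝓝 0) := by
              rw [Metric.tendsto_nhds]
              intro ε hε
              obtain ⟨s, hsT, hsG⟩ := hGsmall ε hε
              filter_upwards [Ioi_mem_nhds (lt_of_lt_of_le hsT hTt)] with y hy
              rw [Real.dist_eq, sub_zero,
                abs_of_nonneg (mul_nonneg (hu_nonneg y) (hv_nonneg y))]
              exact lt_of_le_of_lt (hG_anti s y (le_of_lt hy)) hsG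
            rw [ContinuousAt, hGt]
            exact htd
    refine ⟨fun x => 1 - u x * v x, continuous_const.sub hGcont, ?_, ?_, ?_,
      p, hp0, 1-p, by linarith, ?_, ?_⟩
    · intro x y hxy
      simp only
      have := hG_anti x y hxy
      linarith
    · have l : Tendsto (fun x => 1 - u x * v x) atBot (𝓝 (1 - 1*1)) :=
        tendsto_const_nhds.sub (hu_bot.mul hv_bot)
      simpa using l
    · have l : Tendsto (fun x => 1 - u x * v x) atTop (𝓝 (1 - 0*0)) :=
        tendsto_const_nhds.sub (hu_top.mul hv_top)
      simpa using l
    · intro x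
      rw [hPXle x]
      simp only
      have he : (1:ℝ) - (1 - u x * v x) = u x * v x := by ring
      have he2 : (1:ℝ) - (1 - u x) = u x := by ring
      rw [he, he2]
      exact (hmain x).1
    · intro x
      rw [hPYle x]
      simp only
      have he : (1:ℝ) - (1 - u x * v x) = u x * v x := by ring
      have he2 : (1:ℝ) - (1 - v x) = v x := by ring
      rw [he, he2]
      exact (hmain x).2
  · rintro ⟨F, hFc, hFm, hF0, hF1, lam, hlam, mu, hmu, hFX, hFY⟩
    set g : ℝ → ℝ := fun x => 1 - F x with hgdef
    have hg_cont : Continuous g := continuous_const.sub hFc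
    have hg_anti : ∀ x y : ℝ, x ≤ y → g y ≤ g x := fun x y hxy => by
      simp only [hgdef]
      linarith [hFm hxy]
    have hF_le1 : ∀ x, F x ≤ 1 := fun x => hFm.ge_of_tendsto hF1 x
    have hg0 : ∀ x, 0 ≤ g x := fun x => by
      simp only [hgdef]
      linarith [hF_le1 x]
    have hu_g : ∀ x, u x = g x ^ lam := by
      intro x
      have h := hFX x
      rw [hPXle x] at h
      have h2 : u x = (1 - F x) ^ lam := by linarith
      rw [h2]
    have hv_g : ∀ x, v x = g x ^ mu := by
      intro x
      have h := hFY x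
      rw [hPYle x] at h
      have h2 : v x = (1 - F x) ^ mu := by linarith
      rw [h2]
    set q : ℝ := lam / (lam + mu) with hqdef
    have hlm0 : 0 < lam + mu := by linarith
    have hG_g : ∀ x, u x * v x = g x ^ (lam + mu) := by
      intro x
      rw [hu_g x, hv_g x, Real.rpow_add' (hg0 x) (by linarith)]
    have hqsand : ∀ x y : ℝ, x ≤ y →
        (u x - u y) * v y ≤ q * (u x * v x) - q * (u y * v y) ∧
        q * (u x * v x) - q * (u y * v y) ≤ (u x - u y) * v x := by
      intro x y hxy
      obtain ⟨h1, h2⟩ := powsand hlam hmu (hg0 y) (hg_anti x y hxy)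
      rw [mul_sub] at h1 h2
      rw [hG_g x, hG_g y, hu_g x, hu_g y, hv_g x, hv_g y]
      exact ⟨h1, h2⟩
    have hv_cont : Continuous v := by
      have hc : Continuous fun x : ℝ => (g x) ^ mu :=
        (Real.continuous_rpow_const hmu.le).comp hg_cont
      rw [show v = fun x => g x ^ mu from funext hv_g]
      exact hc
    have hHq : ∀ x y : ℝ, x ≤ y → H x - H y = (q * (u x * v x)) - (q * (u y * v y)) :=
      fun x y hxy => sandwich_eq hxy hu_anti hv_cont.continuousOn hHsand hqsand
    have hH_top : Tendsto H atTop (𝓝 0) :=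
      tendsto_of_tendsto_of_tendsto_of_le_of_le tendsto_const_nhds hu_top
        (fun y => ENNReal.toReal_nonneg) hHleu
    have hG_top : Tendsto (fun y => q * (u y * v y)) atTop (𝓝 (q * (0 * 0))) :=
      tendsto_const_nhds.mul (hu_top.mul hv_top)
    have hserve : ∀ x : ℝ, H x = q * (u x * v x) := by
      intro x
      have l1 : Tendsto (fun y => H x - H y) atTop (𝓝 (H x - 0)) :=
        tendsto_const_nhds.sub hH_top
      have l2 : Tendsto (fun y => q * (u x * v x) - q * (u y * v y)) atTop
          (𝓝 (q * (u x * v x) - q * (0 * 0))) := tendsto_const_nhds.sub hG_top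
      have hev : (fun y => H x - H y) =ᶠ[atTop] (fun y => q * (u x * v x) - q * (u y * v y)) :=
        eventually_atTop.2 ⟨x, fun y hy => hHq x y hy⟩
      have := tendsto_nhds_unique (l1.congr' hev) l2
      have h0 : (0:ℝ) * 0 = 0 := by ring
      rw [h0] at this
      linarith
    have hHsplit : ∀ x : ℝ, H x = p - (P (X ⁻¹' (Set.Iic x) ∩ E)).toReal := by
      intro x
      have hsp : E = (X ⁻¹' (Set.Iic x) ∩ E) ∪ (X ⁻¹' (Set.Ioi x) ∩ E) := by
        ext ω
        simp only [Set.mem_union, Set.mem_inter_iff, Set.mem_preimage, Set.mem_Iic, Set.mem_Ioi]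
        constructor
        · intro hω
          rcases le_or_gt (X ω) x with hc | hc
          · exact Or.inl ⟨hc, hω⟩
          · exact Or.inr ⟨hc, hω⟩
        · rintro (⟨_, hω⟩ | ⟨_, hω⟩) <;> exact hω
      have hdisj : Disjoint (X ⁻¹' (Set.Iic x) ∩ E) (X ⁻¹' (Set.Ioi x) ∩ E) := by
        rw [Set.disjoint_left]
        rintro ω ⟨h1, _⟩ ⟨h2, _⟩
        rw [Set.mem_preimage, Set.mem_Iic] at h1
        rw [Set.mem_preimage, Set.mem_Ioi] at h2
        linarith
      have hm := measure_union (μ := P) hdisj ((hX measurableSet_Ioi).inter hEm)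
      rw [← hsp] at hm
      have := congrArg ENNReal.toReal hm
      rw [ENNReal.toReal_add (measure_ne_top P _) (measure_ne_top P _)] at this
      rw [hpdef]
      rw [this]
      ring_nf
      rfl
    have hH_lb : ∀ x, p - (1 - u x) ≤ H x := by
      intro x
      rw [hHsplit x]
      have h1 : (P (X ⁻¹' (Set.Iic x) ∩ E)).toReal ≤ (P (X ⁻¹' (Set.Iic x))).toReal :=
        ENNReal.toReal_mono (measure_ne_top P _) (measure_mono Set.inter_subset_left)
      have h2 : (P (X ⁻¹' (Set.Iic x))).toReal = 1 - u x := hPXle x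
      linarith
    have hH_ub : ∀ x, H x ≤ p := by
      intro x
      rw [hHsplit x]
      have := ENNReal.toReal_nonneg (a := P (X ⁻¹' (Set.Iic x) ∩ E))
      linarith
    have hH_bot : Tendsto H atBot (𝓝 p) := by
      have l1 : Tendsto (fun x => p - (1 - u x)) atBot (𝓝 (p - (1 - 1))) :=
        tendsto_const_nhds.sub (tendsto_const_nhds.sub hu_bot)
      have h11 : p - (1 - 1) = p := by ring
      rw [h11] at l1
      exact tendsto_of_tendsto_of_tendsto_of_le_of_le l1 tendsto_const_nhds hH_lb hH_ub
    have hpq : p = q := by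
      have hHfun : H = fun x => q * (u x * v x) := funext hserve
      rw [hHfun] at hH_bot
      have l2 : Tendsto (fun x => q * (u x * v x)) atBot (𝓝 (q * (1 * 1))) :=
        tendsto_const_nhds.mul (hu_bot.mul hv_bot)
      have := tendsto_nhds_unique hH_bot l2
      rw [this]
      ring
    intro x
    rw [hminE x, hminG x]
    calc (P (X ⁻¹' (Set.Ioi x) ∩ E)).toReal = H x := rfl
      _ = q * (u x * v x) := hserve x
      _ = u x * v x * p := by rw [hpq]; ring
end

section
/- If (X,Y) is exchangeable with P(X = Y) = 0, then min(X,Y) is independent of the event {Y > X}, and this can hold even when the common marginal distribution is not continuous: e.g., if P(X=1, Y=0) = P(X=0, Y=1) = 1/2, then min(X,Y) is independent of {Y > X} while the marginal of X is Bernoulli(1/2). -/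
open MeasureTheory ProbabilityTheory

/-- General part: exchangeable with P(X=Y)=0 implies independence of min and {X<Y}. -/
lemma stmt12_general {Ω : Type*} [MeasurableSpace Ω] (μ : Measure Ω) [IsProbabilityMeasure μ]
    (X' Y' : Ω → ℝ) (hX' : Measurable X') (hY' : Measurable Y')
    (hexch : Measure.map (fun ω => (X' ω, Y' ω)) μ = Measure.map (fun ω => (Y' ω, X' ω)) μ)
    (hne : μ {ω | X' ω = Y' ω} = 0)
    (B : Set ℝ) (hB : MeasurableSet B) :
    (μ ({ω | min (X' ω) (Y' ω) ∈ B} ∩ {ω | X' ω < Y' ω})).toReal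
      = (μ {ω | min (X' ω) (Y' ω) ∈ B}).toReal * (μ {ω | X' ω < Y' ω}).toReal := by
  have hlt : MeasurableSet {ω | X' ω < Y' ω} := measurableSet_lt hX' hY'
  have hgt : MeasurableSet {ω | Y' ω < X' ω} := measurableSet_lt hY' hX'
  -- symmetry
  have key : ∀ C : Set ℝ, MeasurableSet C →
      μ ({ω | min (X' ω) (Y' ω) ∈ C} ∩ {ω | X' ω < Y' ω})
        = μ ({ω | min (X' ω) (Y' ω) ∈ C} ∩ {ω | Y' ω < X' ω}) := by
    intro C hC
    have hS : MeasurableSet {p : ℝ × ℝ | min p.1 p.2 ∈ C ∧ p.1 < p.2} :=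
      ((measurable_fst.min measurable_snd) hC).inter
        (measurableSet_lt measurable_fst measurable_snd)
    have h1 : μ ({ω | min (X' ω) (Y' ω) ∈ C} ∩ {ω | X' ω < Y' ω})
        = Measure.map (fun ω => (X' ω, Y' ω)) μ {p : ℝ × ℝ | min p.1 p.2 ∈ C ∧ p.1 < p.2} := by
      rw [Measure.map_apply (hX'.prodMk hY') hS]
      rfl
    have h2 : Measure.map (fun ω => (Y' ω, X' ω)) μ {p : ℝ × ℝ | min p.1 p.2 ∈ C ∧ p.1 < p.2}
        = μ ({ω | min (X' ω) (Y' ω) ∈ C} ∩ {ω | Y' ω < X' ω}) := by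
      rw [Measure.map_apply (hY'.prodMk hX') hS]
      congr 1
      ext ω
      simp [Set.mem_setOf_eq, min_comm, and_comm]
    rw [h1, hexch, h2]
  -- decomposition
  have split : ∀ C : Set ℝ, MeasurableSet C →
      μ {ω | min (X' ω) (Y' ω) ∈ C}
        = 2 * μ ({ω | min (X' ω) (Y' ω) ∈ C} ∩ {ω | X' ω < Y' ω}) := by
    intro C hC
    set s := {ω | min (X' ω) (Y' ω) ∈ C} with hs
    set T := {ω | X' ω < Y' ω} ∪ {ω | Y' ω < X' ω} with hT
    have hTm : MeasurableSet T := hlt.union hgt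
    have hdiff : μ (s \ T) = 0 := by
      refine measure_mono_null ?_ hne
      intro ω hω
      simp only [hT, Set.mem_diff, Set.mem_union, Set.mem_setOf_eq, not_or, not_lt] at hω
      exact le_antisymm hω.2.2 hω.2.1
    have h3 : μ (s ∩ T) + μ (s \ T) = μ s := measure_inter_add_diff s hTm
    have h4 : μ (s ∩ T) = μ (s ∩ {ω | X' ω < Y' ω}) + μ (s ∩ {ω | Y' ω < X' ω}) := by
      rw [hT, Set.inter_union_distrib_left]
      refine measure_union ?_ (MeasurableSet.inter ?_ hgt)
      · refine Set.disjoint_left.mpr ?_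
        rintro ω ⟨-, h1⟩ ⟨-, h2⟩
        simp only [Set.mem_setOf_eq] at h1 h2
        exact lt_asymm h1 h2
      · exact (hX'.min hY') hC
    have h5 := key C hC
    rw [hdiff, add_zero] at h3
    rw [← h3, h4, ← h5, two_mul]
  -- μ {X'<Y'} computation
  have huniv : μ {ω | X' ω < Y' ω} = 1/2 := by
    have h6 := split Set.univ MeasurableSet.univ
    simp only [Set.mem_univ, Set.setOf_true, Set.univ_inter] at h6
    have h7 : μ (Set.univ : Set Ω) = 1 := measure_univ
    rw [h7] at h6
    have hfin : μ {ω | X' ω < Y' ω} ≠ ⊤ := measure_ne_top μ _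
    rw [h6]
    rw [ENNReal.eq_div_iff (by norm_num) (by norm_num)]
  have hc := split B hB
  have hfin : μ ({ω | min (X' ω) (Y' ω) ∈ B} ∩ {ω | X' ω < Y' ω}) ≠ ⊤ := measure_ne_top μ _
  rw [hc, huniv, ENNReal.toReal_mul, ENNReal.toReal_div]
  simp only [ENNReal.toReal_ofNat, ENNReal.toReal_one]
  ring

/-- If (X,Y) is exchangeable with P(X=Y)=0 then min(X,Y) is independent of {Y > X};
moreover this can hold with a non-continuous marginal: if
P(X=1,Y=0) = P(X=0,Y=1) = 1/2 then min(X,Y) is independent of {Y > X} and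
the marginal of X is Bernoulli(1/2). -/
theorem stmt12 {Ω : Type*} [MeasurableSpace Ω] (μ : Measure Ω) [IsProbabilityMeasure μ]
    (X Y : Ω → ℝ) (hX : Measurable X) (hY : Measurable Y)
    (h10 : μ {ω | X ω = 1 ∧ Y ω = 0} = 1 / 2)
    (h01 : μ {ω | X ω = 0 ∧ Y ω = 1} = 1 / 2) :
    (∀ (X' Y' : Ω → ℝ), Measurable X' → Measurable Y' →
      Measure.map (fun ω => (X' ω, Y' ω)) μ = Measure.map (fun ω => (Y' ω, X' ω)) μ →
      μ {ω | X' ω = Y' ω} = 0 →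
      ∀ B : Set ℝ, MeasurableSet B →
        (μ ({ω | min (X' ω) (Y' ω) ∈ B} ∩ {ω | X' ω < Y' ω})).toReal
          = (μ {ω | min (X' ω) (Y' ω) ∈ B}).toReal * (μ {ω | X' ω < Y' ω}).toReal)
    ∧ (∀ B : Set ℝ, MeasurableSet B →
        (μ ({ω | min (X ω) (Y ω) ∈ B} ∩ {ω | X ω < Y ω})).toReal
          = (μ {ω | min (X ω) (Y ω) ∈ B}).toReal * (μ {ω | X ω < Y ω}).toReal)
    ∧ μ {ω | X ω = 1} = 1 / 2 ∧ μ {ω | X ω = 0} = 1 / 2 := by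
  classical
  set A := {ω | X ω = 1 ∧ Y ω = 0} with hA
  set Bs := {ω | X ω = 0 ∧ Y ω = 1} with hBs
  have hAm : MeasurableSet A := (hX (measurableSet_singleton 1)).inter (hY (measurableSet_singleton 0))
  have hBm : MeasurableSet Bs := (hX (measurableSet_singleton 0)).inter (hY (measurableSet_singleton 1))
  have hdisj : Disjoint A Bs := by
    refine Set.disjoint_left.mpr ?_
    rintro ω ⟨h1, -⟩ ⟨h2, -⟩
    norm_num [h1] at h2
  have hABfull : μ (A ∪ Bs) = 1 := by
    rw [measure_union hdisj hBm, h10, h01, ENNReal.div_add_div_same]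
    norm_num
    exact ENNReal.div_self (by norm_num) (by norm_num)
  -- if S contains A and is disjoint from Bs, μ S = 1/2 ; and vice versa
  have halfA : ∀ S : Set Ω, A ⊆ S → Disjoint S Bs → μ S = 1/2 := by
    intro S hsub hd
    refine le_antisymm ?_ (h10 ▸ measure_mono hsub)
    have : S ⊆ Bsᶜ := Set.disjoint_left.mp hd
    calc μ S ≤ μ Bsᶜ := measure_mono this
      _ = 1 - μ Bs := prob_compl_eq_one_sub hBm
      _ = 1/2 := by rw [h01]; norm_num
  have halfB : ∀ S : Set Ω, Bs ⊆ S → Disjoint S A → μ S = 1/2 := by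
    intro S hsub hd
    refine le_antisymm ?_ (h01 ▸ measure_mono hsub)
    have : S ⊆ Aᶜ := Set.disjoint_left.mp hd
    calc μ S ≤ μ Aᶜ := measure_mono this
      _ = 1 - μ A := prob_compl_eq_one_sub hAm
      _ = 1/2 := by rw [h10]; norm_num
  have hzero : ∀ S : Set Ω, Disjoint S A → Disjoint S Bs → μ S = 0 := by
    intro S hdA hdB
    have hsub : S ⊆ (A ∪ Bs)ᶜ := by
      intro ω hω
      simp only [Set.mem_compl_iff, Set.mem_union, not_or]
      exact ⟨fun h => Set.disjoint_left.mp hdA hω h, fun h => Set.disjoint_left.mp hdB hω h⟩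
    have : μ ((A ∪ Bs)ᶜ) = 0 := by
      rw [prob_compl_eq_one_sub (hAm.union hBm), hABfull]
      simp
    exact le_antisymm (this ▸ measure_mono hsub) zero_le
  refine ⟨fun X' Y' hX' hY' hexch hne B hB => stmt12_general μ X' Y' hX' hY' hexch hne B hB,
    ?_, ?_, ?_⟩
  · intro B hB
    by_cases h0 : (0:ℝ) ∈ B
    · have hMB : μ {ω | min (X ω) (Y ω) ∈ B} = 1 := by
        refine le_antisymm prob_le_one ?_
        refine hABfull ▸ measure_mono ?_
        rintro ω (⟨hx, hy⟩ | ⟨hx, hy⟩) <;> simp [Set.mem_setOf_eq, hx, hy, h0]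
      have hInt : μ ({ω | min (X ω) (Y ω) ∈ B} ∩ {ω | X ω < Y ω}) = 1/2 := by
        refine halfB _ ?_ ?_
        · rintro ω ⟨hx, hy⟩
          constructor
          · simp [Set.mem_setOf_eq, hx, hy, h0]
          · simp [Set.mem_setOf_eq, hx, hy]
        · refine Set.disjoint_left.mpr ?_
          rintro ω ⟨-, h1⟩ ⟨hx, hy⟩
          simp only [Set.mem_setOf_eq, hx, hy] at h1
          norm_num at h1
      have hlt : μ {ω | X ω < Y ω} = 1/2 := by
        refine halfB _ ?_ ?_
        · rintro ω ⟨hx, hy⟩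
          simp [Set.mem_setOf_eq, hx, hy]
        · refine Set.disjoint_left.mpr ?_
          rintro ω h1 ⟨hx, hy⟩
          simp only [Set.mem_setOf_eq, hx, hy] at h1
          norm_num at h1
      rw [hMB, hInt, hlt]
      norm_num [ENNReal.toReal_div]
    · have hMB : μ {ω | min (X ω) (Y ω) ∈ B} = 0 := by
        refine hzero _ ?_ ?_
        · refine Set.disjoint_left.mpr ?_
          rintro ω h1 ⟨hx, hy⟩
          simp only [Set.mem_setOf_eq, hx, hy] at h1
          norm_num at h1
          exact h0 h1
        · refine Set.disjoint_left.mpr ?_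
          rintro ω h1 ⟨hx, hy⟩
          simp only [Set.mem_setOf_eq, hx, hy] at h1
          norm_num at h1
          exact h0 h1
      have hInt : μ ({ω | min (X ω) (Y ω) ∈ B} ∩ {ω | X ω < Y ω}) = 0 :=
        le_antisymm (hMB ▸ measure_mono Set.inter_subset_left) zero_le
      rw [hMB, hInt]
      simp
  · refine halfA _ ?_ ?_
    · rintro ω ⟨hx, -⟩; exact hx
    · refine Set.disjoint_left.mpr ?_
      rintro ω h1 ⟨hx, -⟩
      simp only [Set.mem_setOf_eq] at h1
      norm_num [hx] at h1
  · refine halfB _ ?_ ?_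
    · rintro ω ⟨hx, -⟩; exact hx
    · refine Set.disjoint_left.mpr ?_
      rintro ω h1 ⟨hx, -⟩
      simp only [Set.mem_setOf_eq] at h1
      norm_num [hx] at h1
end

section
/- Let X, Y be independent real-valued random variables where F_X is continuous, F_Y is arbitrary, and P(Y > X) ∈ (0,1). Then min(X,Y) is independent of {Y > X} if and only if 1 − F_Y(x) = (1 − F_X(x))^c for some c > 0 and all real x. -/
open MeasureTheory ProbabilityTheory Set Filter
set_option linter.unusedSectionVars false
open scoped Topology ENNReal

noncomputable def surv (ν : Measure ℝ) (x : ℝ) : ℝ := (ν (Ioi x)).toReal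

section Aux
variable (ν : Measure ℝ) [IsProbabilityMeasure ν]

lemma surv_nonneg (x : ℝ) : 0 ≤ surv ν x := ENNReal.toReal_nonneg

lemma surv_le_one_s14 (x : ℝ) : surv ν x ≤ 1 := by
  rw [surv, ← ENNReal.toReal_one]
  exact ENNReal.toReal_mono ENNReal.one_ne_top (prob_le_one)

lemma antitone_surv : Antitone (surv ν) := by
  intro a b hab
  exact ENNReal.toReal_mono (measure_ne_top _ _) (measure_mono (Ioi_subset_Ioi hab))

lemma ofReal_surv (x : ℝ) : ν (Ioi x) = ENNReal.ofReal (surv ν x) :=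
  (ENNReal.ofReal_toReal (measure_ne_top _ _)).symm

lemma surv_eq_one_sub (x : ℝ) : surv ν x = 1 - (ν (Iic x)).toReal := by
  have h : ν (Iic x) + ν (Ioi x) = 1 := by
    rw [← measure_union (by simp [Set.disjoint_left]) measurableSet_Ioi, Iic_union_Ioi,
      measure_univ]
  have h1 : (ν (Iic x)).toReal + (ν (Ioi x)).toReal = 1 := by
    rw [← ENNReal.toReal_add (measure_ne_top _ _) (measure_ne_top _ _), h, ENNReal.toReal_one]
  rw [surv]; linarith

lemma measurable_surv : Measurable (surv ν) := (antitone_surv ν).measurable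

lemma tendsto_surv_atBot : Tendsto (surv ν) atBot (𝓝 1) := by
  have : surv ν = fun x => 1 - cdf ν x := by
    ext x; rw [surv_eq_one_sub, cdf_eq_real, measureReal_def]
  rw [this]
  simpa using (tendsto_const_nhds (x := (1:ℝ))).sub (tendsto_cdf_atBot ν)

lemma tendsto_surv_atTop : Tendsto (surv ν) atTop (𝓝 0) := by
  have : surv ν = fun x => 1 - cdf ν x := by
    ext x; rw [surv_eq_one_sub, cdf_eq_real, measureReal_def]
  rw [this]
  simpa using (tendsto_const_nhds (x := (1:ℝ))).sub (tendsto_cdf_atTop ν)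

variable (hcont : Continuous (surv ν))
include hcont

lemma singleton_zero (t : ℝ) : ν {t} = 0 := by
  have key : ∀ δ : ℝ, 0 < δ → (ν {t}).toReal ≤ surv ν (t - δ) - surv ν t := by
    intro δ hδ
    have h1 : ν {t} ≤ ν (Ioc (t - δ) t) := by
      apply measure_mono; intro a ha
      simp only [Set.mem_singleton_iff] at ha
      subst ha; constructor <;> linarith
    have h2 : ν (Ioc (t - δ) t) = ν (Ioi (t - δ)) - ν (Ioi t) := by
      rw [← Ioi_diff_Ioi (a := t - δ) (b := t)]
      rw [measure_diff (Ioi_subset_Ioi (by linarith)) measurableSet_Ioi.nullMeasurableSet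
        (measure_ne_top _ _)]
    have h3 : (ν (Ioc (t - δ) t)).toReal = surv ν (t - δ) - surv ν t := by
      rw [h2, ENNReal.toReal_sub_of_le (measure_mono (Ioi_subset_Ioi (by linarith)))
        (measure_ne_top _ _)]
      rfl
    calc (ν {t}).toReal ≤ (ν (Ioc (t - δ) t)).toReal :=
          ENNReal.toReal_mono (measure_ne_top _ _) h1
      _ = _ := h3
  have hlim : Tendsto (fun δ : ℝ => surv ν (t - δ) - surv ν t) (𝓝[>] 0) (𝓝 0) := by
    have : Tendsto (fun δ : ℝ => surv ν (t - δ) - surv ν t) (𝓝 0) (𝓝 (surv ν (t - 0) - surv ν t)) := by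
      exact ((hcont.comp (continuous_const.sub continuous_id)).sub continuous_const).continuousAt
    simp only [sub_zero, sub_self] at this
    exact this.mono_left nhdsWithin_le_nhds
  have hle : (ν {t}).toReal ≤ 0 := by
    refine ge_of_tendsto hlim ?_
    filter_upwards [self_mem_nhdsWithin] with δ hδ
    exact key δ hδ
  have : (ν {t}).toReal = 0 := le_antisymm hle ENNReal.toReal_nonneg
  rwa [ENNReal.toReal_eq_zero_iff, or_iff_left (measure_ne_top _ _)] at this

lemma map_surv : Measure.map (surv ν) ν = volume.restrict (Ioc (0:ℝ) 1) := by
  refine Measure.ext_of_Iic _ _ (fun u => ?_)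
  rw [Measure.map_apply (measurable_surv ν) measurableSet_Iic,
    Measure.restrict_apply measurableSet_Iic]
  rcases lt_or_ge u 0 with hu | hu
  · have h1 : surv ν ⁻¹' Iic u = ∅ := by
      ext a; simp only [Set.mem_preimage, Set.mem_Iic, Set.mem_empty_iff_false, iff_false, not_le]
      exact lt_of_lt_of_le hu (surv_nonneg ν a)
    have h2 : Iic u ∩ Ioc (0:ℝ) 1 = ∅ := by
      ext a; simp only [Set.mem_inter_iff, Set.mem_Iic, Set.mem_Ioc, Set.mem_empty_iff_false,
        iff_false]
      rintro ⟨h1, h2, h3⟩; linarith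
    simp [h1, h2]
  rcases lt_or_ge u 1 with hu1 | hu1
  · -- 0 ≤ u < 1
    have h2 : Iic u ∩ Ioc (0:ℝ) 1 = Ioc 0 u := by
      ext a; simp only [Set.mem_inter_iff, Set.mem_Iic, Set.mem_Ioc]
      constructor
      · rintro ⟨h1, h2, h3⟩; exact ⟨h2, h1⟩
      · rintro ⟨h1, h2⟩; exact ⟨h2, h1, by linarith⟩
    rw [h2, Real.volume_Ioc, sub_zero]
    by_cases hA : (surv ν ⁻¹' Iic u).Nonempty
    · obtain ⟨a0, ha0⟩ := hA
      have hbdd : BddBelow (surv ν ⁻¹' Iic u) := by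
        obtain ⟨M, hM⟩ := (eventually_atBot).mp ((tendsto_surv_atBot ν).eventually_const_lt hu1)
        exact ⟨M, fun a ha => le_of_not_gt fun h => absurd ha (not_le.mpr (hM a h.le))⟩
      set A := surv ν ⁻¹' Iic u with hAdef
      have hAclosed : IsClosed A := IsClosed.preimage hcont isClosed_Iic
      set t := sInf A with htdef
      have htmem : t ∈ A := hAclosed.csInf_mem ⟨a0, ha0⟩ hbdd
      have hAeq : A = Ici t := by
        apply Set.Subset.antisymm
        · exact fun a ha => csInf_le hbdd ha
        · intro a ha
          exact le_trans (antitone_surv ν ha) htmem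
      have hsurvt : surv ν t = u := by
        refine le_antisymm htmem ?_
        have h1 : Tendsto (surv ν) (𝓝[<] t) (𝓝 (surv ν t)) :=
          (hcont.continuousAt).continuousWithinAt.tendsto
        refine ge_of_tendsto h1 ?_
        filter_upwards [self_mem_nhdsWithin] with a ha
        have : a ∉ A := fun hh => absurd (csInf_le hbdd hh) (not_le.mpr ha)
        rw [hAdef, Set.mem_preimage, Set.mem_Iic, not_le] at this
        exact this.le
      have hIci : ν (Ici t) = ENNReal.ofReal u := by
        have h1 : ν (Ici t) ≤ ν {t} + ν (Ioi t) := by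
          have : Ici t = {t} ∪ Ioi t := by
            ext a; simp only [Set.mem_Ici, Set.mem_union, Set.mem_singleton_iff, Set.mem_Ioi]
            exact ⟨fun h => (eq_or_lt_of_le h).imp Eq.symm id, fun h => h.elim (fun h => h.ge) le_of_lt⟩
          rw [this]
          exact measure_union_le _ _
        rw [singleton_zero ν hcont t, zero_add] at h1
        have h2 : ν (Ioi t) ≤ ν (Ici t) := measure_mono Ioi_subset_Ici_self
        have h3 : ν (Ici t) = ν (Ioi t) := le_antisymm h1 h2
        rw [h3, ofReal_surv, hsurvt]
      rw [hAeq, hIci]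
    · -- empty preimage : u must be 0
      have hu0 : u = 0 := by
        by_contra h
        have hupos : 0 < u := lt_of_le_of_ne hu (Ne.symm h)
        obtain ⟨a, ha⟩ := ((tendsto_surv_atTop ν).eventually_lt_const hupos).exists
        exact hA ⟨a, le_of_lt ha⟩
      rw [Set.not_nonempty_iff_eq_empty] at hA
      subst hu0
      simp [hA]
  · -- u ≥ 1
    have h1 : surv ν ⁻¹' Iic u = univ := by
      ext a; simp only [Set.mem_preimage, Set.mem_Iic, Set.mem_univ, iff_true]
      exact le_trans (surv_le_one_s14 ν a) hu1
    have h2 : Iic u ∩ Ioc (0:ℝ) 1 = Ioc 0 1 := by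
      ext a; simp only [Set.mem_inter_iff, Set.mem_Iic, Set.mem_Ioc]
      exact ⟨fun h => h.2, fun h => ⟨le_trans h.2 hu1, h⟩⟩
    simp [h1, h2]

lemma surv_preimage (B : Set ℝ) (hB : MeasurableSet B) :
    ν (surv ν ⁻¹' B) = volume (B ∩ Ioc (0:ℝ) 1) := by
  rw [← Measure.map_apply (measurable_surv ν) hB, map_surv ν hcont,
    Measure.restrict_apply hB]

lemma ae_eq_Ioi (x : ℝ) : (Ioi x : Set ℝ) =ᵐ[ν] {a | surv ν a < surv ν x} := by
  have hsub : {a | surv ν a < surv ν x} ⊆ Ioi x := by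
    intro a ha
    simp only [Set.mem_setOf_eq] at ha
    by_contra h
    rw [Set.mem_Ioi, not_lt] at h
    exact absurd (antitone_surv ν h) (not_le.mpr ha)
  have hmeas : ν {a | surv ν a < surv ν x} = ENNReal.ofReal (surv ν x) := by
    have : {a | surv ν a < surv ν x} = surv ν ⁻¹' (Iio (surv ν x)) := rfl
    rw [this, surv_preimage ν hcont _ measurableSet_Iio]
    have : Iio (surv ν x) ∩ Ioc (0:ℝ) 1 = Ioo 0 (surv ν x) := by
      ext a; simp only [Set.mem_inter_iff, Set.mem_Iio, Set.mem_Ioc, Set.mem_Ioo]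
      constructor
      · rintro ⟨h1, h2, h3⟩; exact ⟨h2, h1⟩
      · rintro ⟨h1, h2⟩; exact ⟨h2, h1, le_trans h2.le (surv_le_one_s14 ν x)⟩
    rw [this, Real.volume_Ioo, sub_zero]
  have hge : ν (Ioi x) ≤ ν {a | surv ν a < surv ν x} := by
    rw [hmeas, ofReal_surv]
  exact (ae_eq_of_subset_of_measure_ge hsub hge
    ((measurable_surv ν measurableSet_Iio : MeasurableSet _)).nullMeasurableSet
    (measure_ne_top _ _)).symm

lemma cov (f : ℝ → ℝ≥0∞) (hf : Measurable f) (x : ℝ) :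
    ∫⁻ a in Ioi x, f (surv ν a) ∂ν = ∫⁻ u in Ioo 0 (surv ν x), f u := by
  rw [setLIntegral_congr (ae_eq_Ioi ν hcont x)]
  have : {a | surv ν a < surv ν x} = surv ν ⁻¹' (Iio (surv ν x)) := rfl
  rw [this, ← setLIntegral_map measurableSet_Iio hf (measurable_surv ν),
    map_surv ν hcont, Measure.restrict_restrict measurableSet_Iio]
  have hset : Iio (surv ν x) ∩ Ioc (0:ℝ) 1 = Ioo 0 (surv ν x) := by
    ext a; simp only [Set.mem_inter_iff, Set.mem_Iio, Set.mem_Ioc, Set.mem_Ioo]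
    constructor
    · rintro ⟨h1, h2, h3⟩; exact ⟨h2, h1⟩
    · rintro ⟨h1, h2⟩; exact ⟨h2, h1, le_trans h2.le (surv_le_one_s14 ν x)⟩
  rw [hset]

lemma cov_univ (f : ℝ → ℝ≥0∞) (hf : Measurable f) :
    ∫⁻ a, f (surv ν a) ∂ν = ∫⁻ u in Ioc (0:ℝ) 1, f u := by
  rw [← lintegral_map hf (measurable_surv ν), map_surv ν hcont]

end Aux

section Core
variable (ν₁ ν₂ : Measure ℝ) [IsProbabilityMeasure ν₁] [IsProbabilityMeasure ν₂]
variable (hcont : Continuous (surv ν₁))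

include hcont in
lemma phi_eq (h : ℝ → ℝ) (hmeas : Measurable h) (hpos : ∀ u, 0 ≤ h u)
    (hae : ∀ᵐ a ∂ν₁, surv ν₂ a = h (surv ν₁ a)) (x : ℝ) :
    (∫⁻ a in Ioi x, ν₂ (Ioi a) ∂ν₁).toReal = ∫ u in (0:ℝ)..(surv ν₁ x), h u := by
  have h1 : ∫⁻ a in Ioi x, ν₂ (Ioi a) ∂ν₁
      = ∫⁻ a in Ioi x, ENNReal.ofReal (h (surv ν₁ a)) ∂ν₁ := by
    apply lintegral_congr_ae
    filter_upwards [ae_restrict_of_ae hae] with a ha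
    rw [ofReal_surv, ha]
  rw [h1, cov ν₁ hcont (fun u => ENNReal.ofReal (h u)) (ENNReal.measurable_ofReal.comp hmeas),
    intervalIntegral.integral_of_le (surv_nonneg ν₁ x), integral_Ioc_eq_integral_Ioo,
    MeasureTheory.integral_eq_lintegral_of_nonneg_ae
      (Filter.Eventually.of_forall (fun u => hpos u)) hmeas.aestronglyMeasurable]

include hcont in
lemma p_eq (h : ℝ → ℝ) (hmeas : Measurable h) (hpos : ∀ u, 0 ≤ h u)
    (hae : ∀ᵐ a ∂ν₁, surv ν₂ a = h (surv ν₁ a)) :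
    (∫⁻ a, ν₂ (Ioi a) ∂ν₁).toReal = ∫ u in (0:ℝ)..(1:ℝ), h u := by
  have h1 : ∫⁻ a, ν₂ (Ioi a) ∂ν₁
      = ∫⁻ a, ENNReal.ofReal (h (surv ν₁ a)) ∂ν₁ := by
    apply lintegral_congr_ae
    filter_upwards [hae] with a ha
    rw [ofReal_surv, ha]
  rw [h1, cov_univ ν₁ hcont (fun u => ENNReal.ofReal (h u)) (ENNReal.measurable_ofReal.comp hmeas),
    intervalIntegral.integral_of_le (zero_le_one),
    MeasureTheory.integral_eq_lintegral_of_nonneg_ae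
      (Filter.Eventually.of_forall (fun u => hpos u)) hmeas.aestronglyMeasurable]


include hcont in
lemma core_backward (c : ℝ) (hc : 0 < c) (hT : ∀ x, surv ν₂ x = surv ν₁ x ^ c) (x : ℝ) :
    (∫⁻ a in Ioi x, ν₂ (Ioi a) ∂ν₁).toReal
      = (surv ν₁ x * surv ν₂ x) * (∫⁻ a, ν₂ (Ioi a) ∂ν₁).toReal := by
  set h : ℝ → ℝ := fun u => if u ≤ 0 then 0 else u ^ c with hh
  have hmeas : Measurable h := by
    apply Measurable.ite (measurableSet_le measurable_id measurable_const) measurable_const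
    exact (Real.continuous_rpow_const hc.le).measurable
  have hpos : ∀ u, 0 ≤ h u := by
    intro u
    by_cases hu : u ≤ 0
    · simp [hh, hu]
    · simp only [hh, hu, if_false]
      exact Real.rpow_nonneg (not_le.mp hu).le _
  have hae : ∀ a, surv ν₂ a = h (surv ν₁ a) := by
    intro a
    by_cases hS : surv ν₁ a ≤ 0
    · have h0 : surv ν₁ a = 0 := le_antisymm hS (surv_nonneg _ _)
      rw [hT, h0, Real.zero_rpow hc.ne', hh]; simp
    · rw [hT, hh]; simp [hS]
  have key : ∀ s : ℝ, 0 ≤ s → ∫ u in (0:ℝ)..s, h u = s ^ (c+1) / (c+1) := by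
    intro s hs
    have heq : ∫ u in (0:ℝ)..s, h u = ∫ u in (0:ℝ)..s, u ^ c := by
      apply intervalIntegral.integral_congr
      intro u hu
      rw [Set.uIcc_of_le hs] at hu
      by_cases hu0 : u ≤ 0
      · have hu00 : u = 0 := le_antisymm hu0 hu.1
        simp [hh, hu00, Real.zero_rpow hc.ne']
      · simp [hh, hu0]
    rw [heq, integral_rpow (Or.inl (by linarith)), Real.zero_rpow (by positivity), sub_zero]
  rw [phi_eq ν₁ ν₂ hcont h hmeas hpos (Filter.Eventually.of_forall hae) x,
    p_eq ν₁ ν₂ hcont h hmeas hpos (Filter.Eventually.of_forall hae),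
    key _ (surv_nonneg ν₁ x), key 1 zero_le_one, hT, Real.one_rpow]
  have hSS : surv ν₁ x * surv ν₁ x ^ c = surv ν₁ x ^ (c+1) := by
    rcases eq_or_lt_of_le (surv_nonneg ν₁ x) with h0 | h0
    · rw [← h0, Real.zero_rpow hc.ne', Real.zero_rpow (by positivity), mul_zero]
    · rw [Real.rpow_add h0, Real.rpow_one]; ring
  rw [← hSS]; ring


include hcont in
lemma core_forward
    (hp0 : 0 < (∫⁻ a, ν₂ (Ioi a) ∂ν₁).toReal) (hp1 : (∫⁻ a, ν₂ (Ioi a) ∂ν₁).toReal < 1)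
    (Hyp : ∀ x, (∫⁻ a in Ioi x, ν₂ (Ioi a) ∂ν₁).toReal
      = (surv ν₁ x * surv ν₂ x) * (∫⁻ a, ν₂ (Ioi a) ∂ν₁).toReal) :
    ∃ c > (0:ℝ), ∀ x, surv ν₂ x = surv ν₁ x ^ c := by
  set p : ℝ := (∫⁻ a, ν₂ (Ioi a) ∂ν₁).toReal with hpdef
  -- Step 1 : Φ only depends on S
  have hΦeq : ∀ x x', x ≤ x' → surv ν₁ x = surv ν₁ x' →
      (∫⁻ a in Ioi x, ν₂ (Ioi a) ∂ν₁) = ∫⁻ a in Ioi x', ν₂ (Ioi a) ∂ν₁ := by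
    intro x x' hle hS
    have hnull : ν₁ (Ioc x x') = 0 := by
      rw [← Ioi_diff_Ioi, measure_diff (Ioi_subset_Ioi hle)
        measurableSet_Ioi.nullMeasurableSet (measure_ne_top _ _),
        ofReal_surv, ofReal_surv ν₁ x', hS, tsub_self]
    have hsplit : (Ioi x : Set ℝ) = Ioc x x' ∪ Ioi x' := (Set.Ioc_union_Ioi_eq_Ioi hle).symm
    rw [hsplit, lintegral_union measurableSet_Ioi (Set.Ioc_disjoint_Ioi le_rfl),
      setLIntegral_measure_zero _ _ hnull, zero_add]
  have hwd : ∀ x x', surv ν₁ x = surv ν₁ x' → 0 < surv ν₁ x → surv ν₂ x = surv ν₂ x' := by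
    have main : ∀ x x', x ≤ x' → surv ν₁ x = surv ν₁ x' → 0 < surv ν₁ x →
        surv ν₂ x = surv ν₂ x' := by
      intro x x' hle hS hSpos
      have e1 : (surv ν₁ x * surv ν₂ x) * p = (surv ν₁ x' * surv ν₂ x') * p := by
        rw [← Hyp x, ← Hyp x', hΦeq x x' hle hS]
      have e2 : surv ν₁ x * surv ν₂ x = surv ν₁ x' * surv ν₂ x' :=
        mul_right_cancel₀ hp0.ne' e1
      rw [← hS] at e2
      exact mul_left_cancel₀ hSpos.ne' e2
    intro x x' hS hSpos
    rcases le_total x x' with hle | hle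
    · exact main x x' hle hS hSpos
    · exact (main x' x hle hS.symm (hS ▸ hSpos)).symm
  -- Step 2 : the bad set is null
  have hnullset : ν₁ {a | surv ν₁ a = 0 ∨ surv ν₁ a = 1} = 0 := by
    have hBmeas : MeasurableSet ({0, 1} : Set ℝ) :=
      (measurableSet_singleton (1:ℝ)).insert 0
    have : {a | surv ν₁ a = 0 ∨ surv ν₁ a = 1} = surv ν₁ ⁻¹' ({0, 1} : Set ℝ) := by
      ext a; simp [Set.mem_preimage]
    rw [this, surv_preimage ν₁ hcont _ hBmeas]
    have hsub : ({0, 1} : Set ℝ) ∩ Ioc 0 1 ⊆ {1} := by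
      rintro a ⟨ha1, ha2⟩
      rcases ha1 with h | h
      · exact absurd ha2.1 (by rw [h]; exact lt_irrefl 0)
      · exact h
    exact le_antisymm (le_trans (measure_mono hsub) (by simp)) zero_le
  -- Step 3 : section of S
  have hexist' : ∀ u : ℝ, ∃ x : ℝ, u ∈ Ioo (0:ℝ) 1 → surv ν₁ x = u := by
    intro u
    by_cases hu : u ∈ Ioo (0:ℝ) 1
    · obtain ⟨a, ha⟩ := ((tendsto_surv_atBot ν₁).eventually_const_lt hu.2).exists
      obtain ⟨b, hb⟩ := ((tendsto_surv_atTop ν₁).eventually_lt_const hu.1).exists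
      have hivt := intermediate_value_uIcc (a := a) (b := b) hcont.continuousOn
      have hmem : u ∈ uIcc (surv ν₁ a) (surv ν₁ b) := by
        rw [Set.mem_uIcc]
        exact Or.inr ⟨hb.le, ha.le⟩
      obtain ⟨x, _, hx⟩ := hivt hmem
      exact ⟨x, fun _ => hx⟩
    · exact ⟨0, fun h => absurd h hu⟩
  set τ : ℝ → ℝ := fun u => Classical.choose (hexist' u) with hτdef
  have hτ : ∀ u ∈ Ioo (0:ℝ) 1, surv ν₁ (τ u) = u := fun u hu =>
    Classical.choose_spec (hexist' u) hu
  -- Step 4 : the function h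
  set h : ℝ → ℝ := fun u => if u ≤ 0 then 0 else if 1 ≤ u then 1 else surv ν₂ (τ u) with hhdef
  have hval : ∀ u ∈ Ioo (0:ℝ) 1, h u = surv ν₂ (τ u) := by
    intro u hu
    simp only [hhdef, if_neg (not_le.mpr hu.1), if_neg (not_le.mpr hu.2)]
  have hpos : ∀ u, 0 ≤ h u := by
    intro u
    simp only [hhdef]
    split_ifs
    · exact le_rfl
    · exact zero_le_one
    · exact surv_nonneg _ _
  have hle1 : ∀ u, h u ≤ 1 := by
    intro u
    simp only [hhdef]
    split_ifs
    · exact zero_le_one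
    · exact le_rfl
    · exact surv_le_one_s14 _ _
  have hmono : Monotone h := by
    intro u v huv
    rcases eq_or_lt_of_le huv with rfl | hlt
    · exact le_rfl
    by_cases hu0 : u ≤ 0
    · simp only [hhdef, if_pos hu0]
      exact hpos v
    by_cases hv1 : 1 ≤ v
    · have hv0 : ¬ v ≤ 0 := fun hcon => hu0 (le_trans hlt.le hcon)
      have : h v = 1 := by
        show (if v ≤ 0 then 0 else if 1 ≤ v then 1 else surv ν₂ (τ v)) = 1
        rw [if_neg hv0, if_pos hv1]
      rw [this]; exact hle1 u
    -- both in (0,1)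
    have hu : u ∈ Ioo (0:ℝ) 1 := ⟨not_le.mp hu0, by
      push_neg at hv1; linarith⟩
    have hv : v ∈ Ioo (0:ℝ) 1 := ⟨by linarith [hu.1], not_le.mp hv1⟩
    rw [hval u hu, hval v hv]
    have hτlt : τ v < τ u := by
      by_contra hcon
      push_neg at hcon
      have := antitone_surv ν₁ hcon
      rw [hτ u hu, hτ v hv] at this
      linarith
    exact antitone_surv ν₂ hτlt.le
  have hmeas : Measurable h := hmono.measurable
  -- Step 5 : T = h ∘ S a.e.
  have hae : ∀ᵐ a ∂ν₁, surv ν₂ a = h (surv ν₁ a) := by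
    rw [ae_iff]
    refine measure_mono_null ?_ hnullset
    intro a ha
    simp only [Set.mem_setOf_eq] at ha ⊢
    by_contra hcon
    push_neg at hcon
    have hSa : surv ν₁ a ∈ Ioo (0:ℝ) 1 := by
      constructor
      · exact lt_of_le_of_ne (surv_nonneg _ _) (Ne.symm hcon.1)
      · exact lt_of_le_of_ne (surv_le_one_s14 _ _) hcon.2
    apply ha
    rw [hval _ hSa]
    exact hwd a (τ (surv ν₁ a)) (hτ _ hSa).symm hSa.1
  -- Step 6 : ψ
  set ψ : ℝ → ℝ := fun s => ∫ u in (0:ℝ)..s, h u with hψdef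
  have hΦψ : ∀ x, (∫⁻ a in Ioi x, ν₂ (Ioi a) ∂ν₁).toReal = ψ (surv ν₁ x) :=
    fun x => phi_eq ν₁ ν₂ hcont h hmeas hpos hae x
  have hpψ : p = ψ 1 := p_eq ν₁ ν₂ hcont h hmeas hpos hae
  have hs_eq : ∀ s ∈ Ioo (0:ℝ) 1, ψ s = (s * h s) * p := by
    intro s hs
    have hx := Hyp (τ s)
    rw [hΦψ (τ s), hτ s hs] at hx
    rw [hx, hval s hs]
  -- Step 7 : regularity
  have hint : ∀ a b : ℝ, IntervalIntegrable h volume a b := fun a b =>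
    hmono.intervalIntegrable
  have hψcont : Continuous ψ := intervalIntegral.continuous_primitive hint 0
  have hhcont : ∀ s ∈ Ioo (0:ℝ) 1, ContinuousAt h s := by
    intro s hs
    have heq : ∀ᶠ r in 𝓝 s, ψ r / (r * p) = h r := by
      filter_upwards [isOpen_Ioo.mem_nhds hs] with r hr
      rw [hs_eq r hr]
      have hrr : r * h r * p = h r * (r * p) := by ring
      rw [hrr, mul_div_assoc, div_self (mul_ne_zero hr.1.ne' hp0.ne'), mul_one]
    have hc2 : ContinuousAt (fun r => ψ r / (r * p)) s := by
      apply ContinuousAt.div hψcont.continuousAt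
      · exact (continuous_id.mul continuous_const).continuousAt
      · exact mul_ne_zero hs.1.ne' hp0.ne'
    exact hc2.congr heq
  have hψderiv : ∀ s ∈ Ioo (0:ℝ) 1, HasDerivAt ψ (h s) s := by
    intro s hs
    exact intervalIntegral.integral_hasDerivAt_right (hint 0 s)
      (hmeas.stronglyMeasurable.stronglyMeasurableAtFilter) (hhcont s hs)
  -- Step 8 : φ has zero derivative
  set q : ℝ := -(1/p) with hqdef
  have hpq : p * q = -1 := by
    rw [hqdef]; field_simp
  set φ : ℝ → ℝ := fun s => ψ s * s ^ q with hφdef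
  have hφderiv : ∀ s ∈ Ioo (0:ℝ) 1, HasDerivAt φ 0 s := by
    intro s hs
    have h1 : HasDerivAt (fun r : ℝ => r ^ q) (q * s ^ (q - 1)) s :=
      Real.hasDerivAt_rpow_const (Or.inl hs.1.ne')
    have h2 := (hψderiv s hs).mul h1
    have hss : s * s ^ (q - 1) = s ^ q := by
      rw [Real.rpow_sub hs.1, Real.rpow_one, mul_comm, div_mul_cancel₀ _ hs.1.ne']
    have h0 : h s * s ^ q + ψ s * (q * s ^ (q - 1)) = 0 := by
      rw [hs_eq s hs]
      have expand : (s * h s * p) * (q * s ^ (q - 1))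
          = h s * (p * q) * (s * s ^ (q - 1)) := by ring
      rw [expand, hpq, hss]
      ring
    have h3 : HasDerivAt φ (h s * s ^ q + ψ s * (q * s ^ (q - 1))) s := h2
    rw [h0] at h3
    exact h3
  -- Step 9 : φ is constant equal to p
  have hconst2 : ∀ s ∈ Ioo (0:ℝ) 1, ∀ s' ∈ Ioo (0:ℝ) 1, s ≤ s' → φ s' = φ s := by
    intro s hs s' hs' hle
    have hsub : Icc s s' ⊆ Ioo (0:ℝ) 1 := fun r hr =>
      ⟨lt_of_lt_of_le hs.1 hr.1, lt_of_le_of_lt hr.2 hs'.2⟩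
    exact constant_of_has_deriv_right_zero
      (fun r hr => ((hφderiv r (hsub hr)).continuousAt).continuousWithinAt)
      (fun r hr => ((hφderiv r (hsub (Set.Ico_subset_Icc_self hr))).hasDerivWithinAt))
      s' (Set.right_mem_Icc.mpr hle)
  have htend : Tendsto φ (𝓝[<] (1:ℝ)) (𝓝 p) := by
    have hc1 : ContinuousAt φ 1 := by
      apply hψcont.continuousAt.mul
      exact (Real.continuousAt_rpow_const 1 q (Or.inl one_ne_zero))
    have : φ 1 = p := by
      simp only [hφdef, Real.one_rpow, mul_one]
      exact hpψ.symm
    rw [← this]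
    exact hc1.continuousWithinAt.tendsto
  have hφconst : ∀ s ∈ Ioo (0:ℝ) 1, φ s = p := by
    intro s hs
    have hev : ∀ᶠ r in 𝓝[<] (1:ℝ), φ r = φ s := by
      have hIoo : Ioo s 1 ∈ 𝓝[<] (1:ℝ) := Ioo_mem_nhdsLT_of_mem ⟨hs.2, le_rfl⟩
      filter_upwards [hIoo] with r hr
      exact hconst2 s hs r ⟨lt_trans hs.1 hr.1, hr.2⟩ hr.1.le
    have : Tendsto (fun _ : ℝ => φ s) (𝓝[<] (1:ℝ)) (𝓝 p) := htend.congr' (by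
      filter_upwards [hev] with r hr; exact hr)
    exact tendsto_nhds_unique tendsto_const_nhds this
  -- Step 10 : formula for ψ
  have hψval : ∀ s ∈ Ioo (0:ℝ) 1, ψ s = p * s ^ (1/p : ℝ) := by
    intro s hs
    have h1 := hφconst s hs
    simp only [hφdef] at h1
    have hq : s ^ q ≠ 0 := (Real.rpow_pos_of_pos hs.1 q).ne'
    have h2 : ψ s = p / s ^ q := by
      field_simp at h1 ⊢
      linarith [h1]
    rw [h2, hqdef, Real.rpow_neg hs.1.le, div_eq_mul_inv, inv_inv]
  -- Step 11 : the exponent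
  set c : ℝ := 1/p - 1 with hcdef
  have h1p : 1 < 1/p := (one_lt_div hp0).mpr hp1
  have hc : 0 < c := by rw [hcdef]; linarith
  -- Step 12 : middle case
  have hmid : ∀ y, 0 < surv ν₁ y → surv ν₁ y < 1 → surv ν₂ y = surv ν₁ y ^ c := by
    intro y hy0 hy1
    have hx := Hyp y
    rw [hΦψ y, hψval _ ⟨hy0, hy1⟩] at hx
    have e1 : surv ν₁ y * surv ν₂ y = surv ν₁ y ^ (1/p : ℝ) :=
      mul_right_cancel₀ hp0.ne' (by rw [← hx]; ring)
    have e2 : surv ν₂ y = surv ν₁ y ^ (1/p : ℝ) / surv ν₁ y := by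
      rw [← e1]
      field_simp
    rw [e2, hcdef, Real.rpow_sub hy0, Real.rpow_one]
  -- Step 13 : final case analysis
  refine ⟨c, hc, fun x => ?_⟩
  rcases eq_or_lt_of_le (surv_nonneg ν₁ x) with h0 | h0
  · -- S x = 0 : show T x = 0
    rw [← h0, Real.zero_rpow hc.ne']
    set A : Set ℝ := surv ν₁ ⁻¹' (Iic 0) with hAdef
    have hxA : x ∈ A := by
      simp only [hAdef, Set.mem_preimage, Set.mem_Iic]
      exact h0.ge
    have hAclosed : IsClosed A := IsClosed.preimage hcont isClosed_Iic
    have hbdd : BddBelow A := by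
      obtain ⟨M, hM⟩ := (eventually_atBot).mp
        ((tendsto_surv_atBot ν₁).eventually_const_lt (by norm_num : (0:ℝ) < 1))
      exact ⟨M, fun a ha => le_of_not_gt fun hcon =>
        absurd ha (by
          simp only [hAdef, Set.mem_preimage, Set.mem_Iic, not_le]
          exact hM a hcon.le)⟩
    set t : ℝ := sInf A with htdef
    have htA : t ∈ A := hAclosed.csInf_mem ⟨x, hxA⟩ hbdd
    have hSt : surv ν₁ t = 0 := le_antisymm htA (surv_nonneg _ _)
    have htx : t ≤ x := csInf_le hbdd hxA
    have hlt : ∀ a, a < t → 0 < surv ν₁ a := by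
      intro a ha
      by_contra hcon
      push_neg at hcon
      exact absurd (csInf_le hbdd (by
        simp only [hAdef, Set.mem_preimage, Set.mem_Iic]; exact hcon)) (not_le.mpr ha)
    have hkey : ∀ δ : ℝ, 0 < δ → surv ν₂ x ≤ δ := by
      intro δ hδ
      set ε : ℝ := min (δ ^ (1/c : ℝ)) (1/2) with hεdef
      have hε : 0 < ε := lt_min (Real.rpow_pos_of_pos hδ _) (by norm_num)
      have htendt : Tendsto (surv ν₁) (𝓝[<] t) (𝓝 0) := by
        rw [← hSt]
        exact (hcont.continuousAt).continuousWithinAt.tendsto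
      have hev : ∀ᶠ a in 𝓝[<] t, surv ν₁ a < ε := htendt.eventually_lt_const hε
      obtain ⟨a, haε, hat⟩ := (hev.and self_mem_nhdsWithin).exists
      have haS : 0 < surv ν₁ a := hlt a hat
      have haS1 : surv ν₁ a < 1 := lt_of_lt_of_le haε (le_trans (min_le_right _ _) (by norm_num))
      have hTa : surv ν₂ a = surv ν₁ a ^ c := hmid a haS haS1
      have h1 : surv ν₂ x ≤ surv ν₂ a := antitone_surv ν₂ (le_trans hat.le htx)
      have h2 : surv ν₁ a ^ c ≤ δ := by
        have hle : surv ν₁ a ≤ δ ^ (1/c : ℝ) := le_trans haε.le (min_le_left _ _)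
        calc surv ν₁ a ^ c ≤ (δ ^ (1/c : ℝ)) ^ c :=
              Real.rpow_le_rpow (surv_nonneg _ _) hle hc.le
          _ = δ := by
              rw [← Real.rpow_mul hδ.le]
              rw [show (1/c) * c = 1 by field_simp, Real.rpow_one]
      linarith [h1, hTa ▸ h1]
    have : surv ν₂ x ≤ 0 := le_of_forall_pos_le_add (by
      intro ε hε
      simpa using hkey ε hε)
    exact le_antisymm this (surv_nonneg _ _)
  rcases lt_trichotomy (surv ν₁ x) 1 with h1 | h1 | h1
  · exact hmid x h0 h1
  · rw [h1, Real.one_rpow]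
    have hx := Hyp x
    rw [hΦψ x, h1, ← hpψ, one_mul] at hx
    have := mul_right_cancel₀ hp0.ne'
      (show surv ν₂ x * p = 1 * p by rw [one_mul]; exact hx.symm)
    linarith [this]
  · exact absurd h1 (not_lt.mpr (surv_le_one_s14 _ _))

end Core

/-- If F_X is continuous (F_Y arbitrary) and P(Y > X) ∈ (0,1), then min(X,Y) is
independent of {Y > X} iff 1 − F_Y = (1 − F_X)^c for some c > 0. -/
theorem stmt14 {Ω : Type*} [MeasurableSpace Ω] (μ : Measure Ω) [IsProbabilityMeasure μ]
    (X Y : Ω → ℝ) (hX : Measurable X) (hY : Measurable Y)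
    (hind : IndepFun X Y μ)
    (hFXcont : Continuous fun t : ℝ => (μ {ω | X ω ≤ t}).toReal)
    (hp0 : 0 < (μ {ω | X ω < Y ω}).toReal) (hp1 : (μ {ω | X ω < Y ω}).toReal < 1) :
    (∀ x : ℝ, (μ ({ω | x < min (X ω) (Y ω)} ∩ {ω | X ω < Y ω})).toReal
        = (μ {ω | x < min (X ω) (Y ω)}).toReal * (μ {ω | X ω < Y ω}).toReal)
    ↔ ∃ c > (0:ℝ), ∀ x : ℝ,
        1 - (μ {ω | Y ω ≤ x}).toReal = (1 - (μ {ω | X ω ≤ x}).toReal) ^ c := by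
  set ν₁ : Measure ℝ := μ.map X with hν₁
  set ν₂ : Measure ℝ := μ.map Y with hν₂
  have hprob₁ : IsProbabilityMeasure ν₁ := Measure.isProbabilityMeasure_map hX.aemeasurable
  have hprob₂ : IsProbabilityMeasure ν₂ := Measure.isProbabilityMeasure_map hY.aemeasurable
  have hpair : Measurable (fun ω => (X ω, Y ω)) := hX.prodMk hY
  have hjoint : μ.map (fun ω => (X ω, Y ω)) = ν₁.prod ν₂ :=
    (indepFun_iff_map_prod_eq_prod_map_map hX.aemeasurable hY.aemeasurable).mp hind
  have hmlt : MeasurableSet {p : ℝ × ℝ | p.1 < p.2} :=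
    measurableSet_lt measurable_fst measurable_snd
  -- P(X < Y)
  have hXY : μ {ω | X ω < Y ω} = ∫⁻ a, ν₂ (Ioi a) ∂ν₁ := by
    have hset : {ω | X ω < Y ω} = (fun ω => (X ω, Y ω)) ⁻¹' {p : ℝ × ℝ | p.1 < p.2} := rfl
    rw [hset, ← Measure.map_apply hpair hmlt, hjoint,
      Measure.prod_apply hmlt]
    congr 1
  -- P(min > x)
  have hMin : ∀ x : ℝ, μ {ω | x < min (X ω) (Y ω)} = ν₁ (Ioi x) * ν₂ (Ioi x) := by
    intro x
    have hset : {ω | x < min (X ω) (Y ω)} = X ⁻¹' (Ioi x) ∩ Y ⁻¹' (Ioi x) := by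
      ext ω; simp [Set.mem_preimage, lt_min_iff]
    rw [hset, hind.measure_inter_preimage_eq_mul _ _ measurableSet_Ioi measurableSet_Ioi,
      ← Measure.map_apply hX measurableSet_Ioi, ← Measure.map_apply hY measurableSet_Ioi]
  -- P(min > x, X < Y)
  have hInter : ∀ x : ℝ, μ ({ω | x < min (X ω) (Y ω)} ∩ {ω | X ω < Y ω})
      = ∫⁻ a in Ioi x, ν₂ (Ioi a) ∂ν₁ := by
    intro x
    have hm2 : MeasurableSet {p : ℝ × ℝ | x < p.1 ∧ p.1 < p.2} :=
      (measurableSet_lt measurable_const measurable_fst).inter hmlt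
    have hset : {ω | x < min (X ω) (Y ω)} ∩ {ω | X ω < Y ω}
        = (fun ω => (X ω, Y ω)) ⁻¹' {p : ℝ × ℝ | x < p.1 ∧ p.1 < p.2} := by
      ext ω
      simp only [Set.mem_inter_iff, Set.mem_setOf_eq, Set.mem_preimage, lt_min_iff]
      constructor
      · rintro ⟨⟨h1, h2⟩, h3⟩; exact ⟨h1, h3⟩
      · rintro ⟨h1, h3⟩; exact ⟨⟨h1, lt_trans h1 h3⟩, h3⟩
    rw [hset, ← Measure.map_apply hpair hm2, hjoint, Measure.prod_apply hm2]
    have key : ∀ a : ℝ, ν₂ (Prod.mk a ⁻¹' {p : ℝ × ℝ | x < p.1 ∧ p.1 < p.2})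
        = (Ioi x).indicator (fun a => ν₂ (Ioi a)) a := by
      intro a
      rw [Set.indicator_apply]
      by_cases h : a ∈ Ioi x
      · rw [if_pos h]
        congr 1; ext b; simp only [Set.mem_preimage, Set.mem_setOf_eq, Set.mem_Ioi]
        exact ⟨fun hb => hb.2, fun hb => ⟨h, hb⟩⟩
      · rw [if_neg h]
        have : (Prod.mk a ⁻¹' {p : ℝ × ℝ | x < p.1 ∧ p.1 < p.2}) = ∅ := by
          ext b; simp only [Set.mem_preimage, Set.mem_setOf_eq, Set.mem_empty_iff_false,
            iff_false]
          intro hb; exact h hb.1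
        simp [this]
    simp_rw [key]
    exact lintegral_indicator measurableSet_Ioi _
  -- survival translations
  have hSX : ∀ t : ℝ, surv ν₁ t = 1 - (μ {ω | X ω ≤ t}).toReal := by
    intro t
    rw [surv_eq_one_sub]
    congr 2
    rw [hν₁, Measure.map_apply hX measurableSet_Iic]
    rfl
  have hSY : ∀ t : ℝ, surv ν₂ t = 1 - (μ {ω | Y ω ≤ t}).toReal := by
    intro t
    rw [surv_eq_one_sub]
    congr 2
    rw [hν₂, Measure.map_apply hY measurableSet_Iic]
    rfl
  have hcont' : Continuous (surv ν₁) := by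
    have : surv ν₁ = fun t => 1 - (μ {ω | X ω ≤ t}).toReal := funext hSX
    rw [this]
    exact continuous_const.sub hFXcont
  have hp0' : 0 < (∫⁻ a, ν₂ (Ioi a) ∂ν₁).toReal := by rwa [← hXY]
  have hp1' : (∫⁻ a, ν₂ (Ioi a) ∂ν₁).toReal < 1 := by rwa [← hXY]
  constructor
  · intro H
    obtain ⟨c, hc, hT⟩ := core_forward ν₁ ν₂ hcont' hp0' hp1' (fun x => by
      rw [← hXY, ← hInter x, H x, hMin x, ENNReal.toReal_mul, ofReal_surv ν₁,
        ofReal_surv ν₂, ENNReal.toReal_ofReal (surv_nonneg _ _),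
        ENNReal.toReal_ofReal (surv_nonneg _ _)])
    refine ⟨c, hc, fun x => ?_⟩
    rw [← hSY, ← hSX]
    exact hT x
  · rintro ⟨c, hc, hT⟩
    have hT' : ∀ x, surv ν₂ x = surv ν₁ x ^ c := by
      intro x
      rw [hSY, hSX]
      exact hT x
    intro x
    rw [hInter x, hMin x, hXY, core_backward ν₁ ν₂ hcont' c hc hT' x,
      ENNReal.toReal_mul, ofReal_surv ν₁, ofReal_surv ν₂,
      ENNReal.toReal_ofReal (surv_nonneg _ _), ENNReal.toReal_ofReal (surv_nonneg _ _)]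
end
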